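/- arXiv:2504.11161 — 9 statements merged into one kernel-verified Lean document; each statement's English description precedes it below -/
import Mathlib

section
/- Let X and Y be real normed spaces and T : X → Y a bounded linear operator. Suppose T preserves Birkhoff-James orthogonality at a point x ∈ X, i.e., for all v ∈ X, if ‖x + λv‖ ≥ ‖x‖ for all real λ, then ‖Tx + λTv‖ ≥ ‖Tx‖ for all real λ. If Tx is a smooth point of Y (the set of norm-one supporting functionals at Tx is a singleton), then x is a smooth point of X. -/
open Metric Filter Set

/-- Birkhoff-James orthogonality. -/
def BJOrth {X : Type*} [NormedAddCommGroup X] [NormedSpace ℝ X] (u v : X) : Prop :=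
  ∀ lam : ℝ, ‖u‖ ≤ ‖u + lam • v‖

/-- Set of norm-one supporting functionals at a point. -/
def SuppFunc {X : Type*} [NormedAddCommGroup X] [NormedSpace ℝ X] (x : X) :
    Set (StrongDual ℝ X) := {f | ‖f‖ = 1 ∧ f x = ‖x‖}

/-- A nonzero point is smooth if it has a unique norm-one supporting functional. -/
def SmoothPt {X : Type*} [NormedAddCommGroup X] [NormedSpace ℝ X] (x : X) : Prop :=
  x ≠ 0 ∧ ∃! f : StrongDual ℝ X, f ∈ SuppFunc x

/-- `T` preserves Birkhoff-James orthogonality at `x`. -/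
def PreservesBJAt {X Y : Type*} [NormedAddCommGroup X] [NormedSpace ℝ X]
    [NormedAddCommGroup Y] [NormedSpace ℝ Y] (T : X →L[ℝ] Y) (x : X) : Prop :=
  ∀ v : X, BJOrth x v → BJOrth (T x) (T v)

/-- James characterization (one direction): if `u ⊥_B v` and `u ≠ 0`, there is a norm-one
supporting functional at `u` vanishing at `v`. -/
lemma exists_suppFunc_of_bjorth {X : Type*} [NormedAddCommGroup X] [NormedSpace ℝ X]
    {u v : X} (hu : u ≠ 0) (hbj : BJOrth u v) :
    ∃ g : StrongDual ℝ X, g ∈ SuppFunc u ∧ g v = 0 := by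
  set t : Set X := Set.range (fun lam : ℝ => u + lam • v) with ht_def
  have ht : Convex ℝ t := by
    rintro a ⟨la, rfl⟩ b ⟨lb, rfl⟩ p q hp hq hpq
    refine ⟨p * la + q * lb, ?_⟩
    simp only
    have h1 : u + (p * la + q * lb) • v = (p + q) • u + (p * la + q * lb) • v := by
      rw [hpq, one_smul]
    rw [h1]; module
  have hdisj : Disjoint (Metric.ball (0 : X) ‖u‖) t := by
    rw [Set.disjoint_left]
    rintro b hb ⟨lam, rfl⟩
    rw [Metric.mem_ball, dist_zero_right] at hb
    exact absurd (hbj lam) (not_le.mpr hb)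
  obtain ⟨h, c, h1, h2⟩ :=
    geometric_hahn_banach_open (convex_ball (0 : X) ‖u‖) Metric.isOpen_ball ht hdisj
  have hu0 : (0 : ℝ) < ‖u‖ := norm_pos_iff.mpr hu
  have hc0 : (0 : ℝ) < c := by
    have := h1 0 (Metric.mem_ball_self hu0)
    simpa using this
  have hcu : c ≤ h u := h2 u ⟨0, by simp⟩
  have hball : ∀ b : X, ‖b‖ < ‖u‖ → |h b| < c := by
    intro b hb
    have h1b := h1 b (by rwa [Metric.mem_ball, dist_zero_right])
    have h1b' := h1 (-b) (by rwa [Metric.mem_ball, dist_zero_right, norm_neg])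
    rw [map_neg] at h1b'
    exact abs_lt.mpr ⟨by linarith, h1b⟩
  have hv : h v = 0 := by
    by_contra hv0
    have := h2 (u + ((c - h u - 1) / h v) • v) ⟨(c - h u - 1) / h v, rfl⟩
    rw [map_add, map_smul, smul_eq_mul, div_mul_cancel₀ _ hv0] at this
    linarith
  have hnorm : ‖h‖ * ‖u‖ ≤ c := by
    have hbound : ∀ z : X, ‖h z‖ ≤ (c / ‖u‖) * ‖z‖ := by
      intro z
      rcases eq_or_ne (h z) 0 with hz | hz
      · rw [Real.norm_eq_abs, hz, abs_zero]
        positivity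
      · by_contra hcon
        push_neg at hcon
        have hz0 : z ≠ 0 := by rintro rfl; simp at hz
        have hznorm : (0:ℝ) < ‖z‖ := norm_pos_iff.mpr hz0
        have habs : (0:ℝ) < |h z| := abs_pos.mpr hz
        rw [Real.norm_eq_abs] at hcon
        set r : ℝ := c * ‖z‖ / |h z| with hr_def
        have hr0 : 0 ≤ r := by positivity
        have hru : r < ‖u‖ := by
          rw [hr_def, div_lt_iff₀ habs]
          rw [div_mul_eq_mul_div, div_lt_iff₀ hu0] at hcon
          linarith [hcon, mul_comm ‖u‖ |h z|]
        set b : X := (r / ‖z‖) • z with hb_def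
        have hbn : ‖b‖ = r := by
          rw [hb_def, norm_smul, Real.norm_eq_abs, abs_of_nonneg (by positivity),
            div_mul_cancel₀ _ (ne_of_gt hznorm)]
        have hlt := hball b (by rw [hbn]; exact hru)
        have : h b = c * (h z / |h z|) := by
          rw [hb_def, map_smul, smul_eq_mul, hr_def]
          field_simp
        rw [this, abs_mul, abs_of_pos hc0, abs_div, abs_abs,
          div_self (ne_of_gt habs), mul_one] at hlt
        exact lt_irrefl c hlt
    have := ContinuousLinearMap.opNorm_le_bound h (by positivity) hbound
    calc ‖h‖ * ‖u‖ ≤ (c / ‖u‖) * ‖u‖ := mul_le_mul_of_nonneg_right this (le_of_lt hu0)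
      _ = c := div_mul_cancel₀ _ (ne_of_gt hu0)
  have hhu_le : h u ≤ ‖h‖ * ‖u‖ := by
    calc h u ≤ |h u| := le_abs_self _
      _ = ‖h u‖ := (Real.norm_eq_abs _).symm
      _ ≤ ‖h‖ * ‖u‖ := h.le_opNorm u
  have hhu : h u = ‖h‖ * ‖u‖ := le_antisymm hhu_le (le_trans hnorm hcu)
  have hh0 : (0:ℝ) < ‖h‖ := by
    rcases lt_or_eq_of_le (norm_nonneg h) with h' | h'
    · exact h'
    · exfalso
      have : h u = 0 := by rw [hhu, ← h', mul_comm]; ring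
      linarith [hcu, hc0, this]
  refine ⟨‖h‖⁻¹ • h, ⟨?_, ?_⟩, ?_⟩
  · rw [norm_smul, Real.norm_eq_abs, abs_of_pos (inv_pos.mpr hh0),
      inv_mul_cancel₀ (ne_of_gt hh0)]
  · simp only [ContinuousLinearMap.smul_apply, smul_eq_mul]
    rw [hhu, ← mul_assoc, inv_mul_cancel₀ (ne_of_gt hh0), one_mul]
  · simp only [ContinuousLinearMap.smul_apply, smul_eq_mul, hv, mul_zero]

theorem stmt_0 {X Y : Type*} [NormedAddCommGroup X] [NormedSpace ℝ X]
    [NormedAddCommGroup Y] [NormedSpace ℝ Y] (T : X →L[ℝ] Y) (x : X)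
    (hpres : PreservesBJAt T x) (hTx : SmoothPt (T x)) : SmoothPt x := by
  obtain ⟨hTx0, g0, hg0, hg0u⟩ := hTx
  have hx0 : x ≠ 0 := by
    rintro rfl
    exact hTx0 (map_zero T)
  have hxn : (0:ℝ) < ‖x‖ := norm_pos_iff.mpr hx0
  have hTxn : (0:ℝ) < ‖T x‖ := norm_pos_iff.mpr hTx0
  -- key claim: every supporting functional at x is determined by g0
  have claim : ∀ f : StrongDual ℝ X, f ∈ SuppFunc x →
      ∀ v : X, f v * ‖T x‖ = ‖x‖ * g0 (T v) := by
    rintro f ⟨hf1, hf2⟩ v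
    set w : X := v - (f v / ‖x‖) • x with hw_def
    have hfw : f w = 0 := by
      rw [hw_def, map_sub, map_smul, smul_eq_mul, hf2,
        div_mul_cancel₀ _ (ne_of_gt hxn), sub_self]
    have hbj : BJOrth x w := by
      intro lam
      have : ‖x‖ = f (x + lam • w) := by
        rw [map_add, map_smul, smul_eq_mul, hfw, mul_zero, add_zero, hf2]
      calc ‖x‖ = f (x + lam • w) := this
        _ ≤ |f (x + lam • w)| := le_abs_self _
        _ = ‖f (x + lam • w)‖ := (Real.norm_eq_abs _).symm
        _ ≤ ‖f‖ * ‖x + lam • w‖ := f.le_opNorm _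
        _ = ‖x + lam • w‖ := by rw [hf1, one_mul]
    obtain ⟨h, hh, hhw⟩ := exists_suppFunc_of_bjorth hTx0 (hpres w hbj)
    have hhg0 : h = g0 := hg0u h hh
    rw [hhg0] at hhw
    have hTw : T w = T v - (f v / ‖x‖) • T x := by
      rw [hw_def, map_sub, map_smul]
    rw [hTw, map_sub, map_smul, smul_eq_mul, hg0.2, sub_eq_zero] at hhw
    rw [hhw]
    field_simp
  obtain ⟨f0, hf0n, hf0x⟩ := exists_dual_vector ℝ x (norm_ne_zero_iff.mpr hx0)
  have hf0mem : f0 ∈ SuppFunc x := ⟨hf0n, by exact_mod_cast hf0x⟩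
  refine ⟨hx0, f0, hf0mem, ?_⟩
  intro f hf
  ext v
  have h1 := claim f hf v
  have h2 := claim f0 hf0mem v
  have : f v * ‖T x‖ = f0 v * ‖T x‖ := by rw [h1, h2]
  exact mul_right_cancel₀ (ne_of_gt hTxn) this
end

section
/- Let X and Y be real Banach spaces, A ⊆ X, and T : X → Y a bounded linear operator that preserves Birkhoff-James orthogonality at each point of A. Then T preserves Birkhoff-James orthogonality at each smooth point of X lying in the closure of A. -/
open Metric Filter Set Topology

lemma bj_key {X : Type*} [NormedAddCommGroup X] [NormedSpace ℝ X]
    (x v : X) (hx : x ≠ 0) (a b : ℝ) (ha : a = ‖x‖)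
    (hab : ∀ α β : ℝ, |α * a + β * b| ≤ ‖α • x + β • v‖) :
    ∃ F : StrongDual ℝ X, F ∈ SuppFunc x ∧ F v = b := by
  by_cases hcv : ∃ c : ℝ, v = c • x
  · obtain ⟨c, rfl⟩ := hcv
    have h := hab (-c) 1
    simp only [neg_smul, one_smul, neg_add_cancel, norm_zero] at h
    have hb : b = c * a := by
      have := abs_nonpos_iff.mp h
      linarith [this]
    obtain ⟨F, hF1, hF2⟩ := exists_dual_vector ℝ x (norm_ne_zero_iff.mpr hx)
    refine ⟨F, ⟨hF1, hF2⟩, ?_⟩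
    rw [map_smul, smul_eq_mul, hF2, hb, ha]
    norm_num
  · push_neg at hcv
    set m : ℝ × ℝ →ₗ[ℝ] X :=
      (LinearMap.toSpanSingleton ℝ X x).coprod (LinearMap.toSpanSingleton ℝ X v) with hm
    have hmapp : ∀ p : ℝ × ℝ, m p = p.1 • x + p.2 • v := fun p => rfl
    have hinj : Function.Injective m := by
      rw [← LinearMap.ker_eq_bot, LinearMap.ker_eq_bot']
      rintro ⟨α, β⟩ hp
      rw [hmapp] at hp
      simp only at hp
      rcases eq_or_ne β 0 with hβ | hβ
      · subst hβ
        simp only [zero_smul, add_zero, smul_eq_zero] at hp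
        rcases hp with h | h
        · simp [h]
        · exact absurd h hx
      · exfalso
        apply hcv (-α / β)
        have : β • v = -(α • x) := by linear_combination (norm := module) hp
        have h2 : v = β⁻¹ • (β • v) := by rw [smul_smul, inv_mul_cancel₀ hβ, one_smul]
        rw [this] at h2
        rw [h2, smul_neg, smul_smul, ← neg_smul]
        congr 1
        field_simp
    set e := LinearEquiv.ofInjective m hinj with he
    set φ₀ : ℝ × ℝ →ₗ[ℝ] ℝ := a • LinearMap.fst ℝ ℝ ℝ + b • LinearMap.snd ℝ ℝ ℝ with hφ₀
    set φ : LinearMap.range m →ₗ[ℝ] ℝ := φ₀.comp (e.symm : LinearMap.range m →ₗ[ℝ] ℝ × ℝ) with hφ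
    have hcoe : ∀ y : LinearMap.range m, (y : X) = (e.symm y).1 • x + (e.symm y).2 • v := by
      intro y
      have : (e (e.symm y) : X) = m (e.symm y) := rfl
      rw [e.apply_symm_apply] at this
      rw [this, hmapp]
    have hbound : ∀ y : LinearMap.range m, ‖φ y‖ ≤ 1 * ‖(y : X)‖ := by
      intro y
      rw [one_mul, hcoe y]
      have : φ y = (e.symm y).1 * a + (e.symm y).2 * b := by
        simp [hφ, hφ₀, mul_comm]
      rw [this]
      exact hab _ _
    set φc : LinearMap.range m →L[ℝ] ℝ := φ.mkContinuous 1 hbound with hφc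
    obtain ⟨g, hgext, hgnorm⟩ := exists_extension_norm_eq (LinearMap.range m) φc
    have hxmem : x ∈ LinearMap.range m := ⟨(1, 0), by rw [hmapp]; simp⟩
    have hvmem : v ∈ LinearMap.range m := ⟨(0, 1), by rw [hmapp]; simp⟩
    have hesymm : ∀ (p : ℝ × ℝ) (y : LinearMap.range m), (y : X) = m p → e.symm y = p := by
      intro p y hy
      apply e.injective
      rw [e.apply_symm_apply]
      exact Subtype.ext hy
    have hgx : g x = a := by
      have h1 : g x = φc ⟨x, hxmem⟩ := hgext ⟨x, hxmem⟩
      rw [h1]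
      have h2 : φc ⟨x, hxmem⟩ = φ₀ (e.symm ⟨x, hxmem⟩) := rfl
      rw [h2, hesymm (1, 0) ⟨x, hxmem⟩ (by rw [hmapp]; simp)]
      simp [hφ₀]
    have hgv : g v = b := by
      have h1 : g v = φc ⟨v, hvmem⟩ := hgext ⟨v, hvmem⟩
      rw [h1]
      have h2 : φc ⟨v, hvmem⟩ = φ₀ (e.symm ⟨v, hvmem⟩) := rfl
      rw [h2, hesymm (0, 1) ⟨v, hvmem⟩ (by rw [hmapp]; simp)]
      simp [hφ₀]
    have hle : ‖g‖ ≤ 1 := by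
      rw [hgnorm]
      exact φ.mkContinuous_norm_le zero_le_one hbound
    clear_value φc φ φ₀ e m
    clear hφc hφ hφ₀ he hm hbound hcoe hesymm hinj hmapp hgext hgnorm
    have hgnorm1 : ‖g‖ = 1 := by
      have hge : 1 ≤ ‖g‖ := by
        have hx' : (0 : ℝ) < ‖x‖ := norm_pos_iff.mpr hx
        have h1 : ‖g x‖ ≤ ‖g‖ * ‖x‖ := g.le_opNorm x
        have h2 : ‖g x‖ = ‖x‖ := by
          rw [hgx, ha, Real.norm_eq_abs, abs_of_nonneg (norm_nonneg x)]
        rw [h2] at h1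
        nlinarith
      linarith
    exact ⟨g, ⟨hgnorm1, by rw [hgx, ha]⟩, hgv⟩

theorem stmt_1 {X Y : Type*} [NormedAddCommGroup X] [NormedSpace ℝ X] [CompleteSpace X]
    [NormedAddCommGroup Y] [NormedSpace ℝ Y] [CompleteSpace Y]
    (A : Set X) (T : X →L[ℝ] Y) (hpres : ∀ x ∈ A, PreservesBJAt T x) :
    ∀ x ∈ closure A, SmoothPt x → PreservesBJAt T x := by
  intro x hxcl hsm v hv
  obtain ⟨hx0, f, hf, huniq⟩ := hsm
  have hxnorm : (0:ℝ) < ‖x‖ := norm_pos_iff.mpr hx0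
  -- The unique support functional vanishes on v
  have horthb : ∀ α β : ℝ, |α * ‖x‖ + β * 0| ≤ ‖α • x + β • v‖ := by
    intro α β
    rcases eq_or_ne α 0 with h0 | h0
    · simp [h0]
    · have heq : α • x + β • v = α • (x + (β/α) • v) := by
        rw [smul_add, smul_smul, mul_div_cancel₀ _ h0]
      rw [heq, norm_smul, Real.norm_eq_abs, mul_zero, add_zero, abs_mul,
        abs_of_nonneg (norm_nonneg x)]
      exact mul_le_mul_of_nonneg_left (hv (β/α)) (abs_nonneg α)
  have hfv : f v = 0 := by
    obtain ⟨F, hF, hFv⟩ := bj_key x v hx0 ‖x‖ 0 rfl horthb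
    rw [huniq F hF] at hFv
    exact hFv
  -- approximating sequence
  obtain ⟨u, huA, hulim⟩ := mem_closure_iff_seq_limit.mp hxcl
  have hunorm : Tendsto (fun n => ‖u n‖) atTop (𝓝 ‖x‖) := hulim.norm
  have hne : ∀ᶠ n in atTop, u n ≠ 0 := hulim.eventually_ne hx0
  -- choose support functionals
  have hgex : ∀ n, ∃ g : StrongDual ℝ X, ‖g‖ ≤ 1 ∧
      (u n ≠ 0 → (‖g‖ = 1 ∧ g (u n) = ‖u n‖)) := by
    intro n
    by_cases h : u n = 0
    · exact ⟨0, by simp, fun h' => absurd h h'⟩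
    · obtain ⟨g, hg1, hg2⟩ := exists_dual_vector ℝ (u n) (norm_ne_zero_iff.mpr h)
      exact ⟨g, le_of_eq hg1, fun _ => ⟨hg1, by exact_mod_cast hg2⟩⟩
  choose g hgle hgsupp using hgex
  -- g n x → ‖x‖
  have hgx : Tendsto (fun n => g n x) atTop (𝓝 ‖x‖) := by
    have hdiff : Tendsto (fun n => g n x - ‖u n‖) atTop (𝓝 0) := by
      refine squeeze_zero_norm' (a := fun n => ‖x - u n‖) ?_ ?_
      · filter_upwards [hne] with n hn
        have : g n x - ‖u n‖ = g n (x - u n) := by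
          rw [map_sub, (hgsupp n hn).2]
        rw [this]
        calc ‖g n (x - u n)‖ ≤ ‖g n‖ * ‖x - u n‖ := (g n).le_opNorm _
          _ ≤ 1 * ‖x - u n‖ := by
              exact mul_le_mul_of_nonneg_right (hgle n) (norm_nonneg _)
          _ = ‖x - u n‖ := one_mul _
      · have : Tendsto (fun n => x - u n) atTop (𝓝 (x - x)) :=
          tendsto_const_nhds.sub hulim
        rw [sub_self] at this
        simpa using this.norm
    have := hdiff.add hunorm
    simpa using this
  set s : ℕ → ℝ := fun n => g n v with hs
  -- s → 0 via compactness in ℝ²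
  have hstend : Tendsto s atTop (𝓝 (0:ℝ)) := by
    apply tendsto_of_subseq_tendsto
    intro ns hns
    set P : ℕ → ℝ × ℝ := fun k => (g (ns k) x, g (ns k) v) with hP
    have hPmem : ∀ k, P k ∈ (closedBall (0:ℝ) ‖x‖ ×ˢ closedBall (0:ℝ) ‖v‖) := by
      intro k
      constructor
      · rw [mem_closedBall_zero_iff]
        calc ‖g (ns k) x‖ ≤ ‖g (ns k)‖ * ‖x‖ := (g (ns k)).le_opNorm _
          _ ≤ 1 * ‖x‖ := mul_le_mul_of_nonneg_right (hgle _) (norm_nonneg _)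
          _ = ‖x‖ := one_mul _
      · rw [mem_closedBall_zero_iff]
        calc ‖g (ns k) v‖ ≤ ‖g (ns k)‖ * ‖v‖ := (g (ns k)).le_opNorm _
          _ ≤ 1 * ‖v‖ := mul_le_mul_of_nonneg_right (hgle _) (norm_nonneg _)
          _ = ‖v‖ := one_mul _
    have hcomp : IsCompact (closedBall (0:ℝ) ‖x‖ ×ˢ closedBall (0:ℝ) ‖v‖) :=
      (isCompact_closedBall _ _).prod (isCompact_closedBall _ _)
    obtain ⟨⟨a, b⟩, _, ms, hms, hmslim⟩ := hcomp.tendsto_subseq hPmem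
    have hnsms : Tendsto (fun k => ns (ms k)) atTop atTop :=
      hns.comp hms.tendsto_atTop
    have hlima : Tendsto (fun k => g (ns (ms k)) x) atTop (𝓝 a) :=
      (continuous_fst.tendsto _).comp hmslim
    have hlimb : Tendsto (fun k => g (ns (ms k)) v) atTop (𝓝 b) :=
      (continuous_snd.tendsto _).comp hmslim
    have ha : a = ‖x‖ := tendsto_nhds_unique hlima (hgx.comp hnsms)
    have hbound : ∀ α β : ℝ, |α * a + β * b| ≤ ‖α • x + β • v‖ := by
      intro α β
      have hq : Tendsto (fun k => α * g (ns (ms k)) x + β * g (ns (ms k)) v)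
          atTop (𝓝 (α * a + β * b)) :=
        ((tendsto_const_nhds.mul hlima).add (tendsto_const_nhds.mul hlimb))
      have hqa : Tendsto (fun k => |α * g (ns (ms k)) x + β * g (ns (ms k)) v|)
          atTop (𝓝 |α * a + β * b|) := hq.abs
      apply le_of_tendsto hqa
      filter_upwards with k
      have heq : α * g (ns (ms k)) x + β * g (ns (ms k)) v
          = g (ns (ms k)) (α • x + β • v) := by
        rw [map_add, map_smul, map_smul]; simp
      rw [heq, ← Real.norm_eq_abs]
      calc ‖g (ns (ms k)) (α • x + β • v)‖ ≤ ‖g (ns (ms k))‖ * ‖α • x + β • v‖ :=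
            (g (ns (ms k))).le_opNorm _
        _ ≤ 1 * ‖α • x + β • v‖ := mul_le_mul_of_nonneg_right (hgle _) (norm_nonneg _)
        _ = ‖α • x + β • v‖ := one_mul _
    have hb : b = 0 := by
      have hbound' : ∀ α β : ℝ, |α * ‖x‖ + β * b| ≤ ‖α • x + β • v‖ := by
        intro α β; rw [← ha]; exact hbound α β
      obtain ⟨F, hF, hFv⟩ := bj_key x v hx0 ‖x‖ b rfl hbound'
      rw [huniq F hF] at hFv
      rw [← hFv, hfv]
    refine ⟨ms, ?_⟩
    rw [← hb]
    exact hlimb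
  set t : ℕ → ℝ := fun n => s n / ‖u n‖ with ht
  set w : ℕ → X := fun n => v - t n • u n with hw
  have httend : Tendsto t atTop (𝓝 (0:ℝ)) := by
    have := hstend.div hunorm (ne_of_gt hxnorm)
    rw [zero_div] at this
    exact this
  have hwtend : Tendsto w atTop (𝓝 v) := by
    have h : Tendsto (fun n => v - t n • u n) atTop (𝓝 (v - (0:ℝ) • x)) :=
      tendsto_const_nhds.sub (httend.smul hulim)
    simpa using h
  have horthn : ∀ n, u n ≠ 0 → BJOrth (u n) (w n) := by
    intro n hn lam'
    obtain ⟨hg1, hg2⟩ := hgsupp n hn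
    have hun : ‖u n‖ ≠ 0 := norm_ne_zero_iff.mpr hn
    have hwn : g n (w n) = 0 := by
      have : g n (w n) = s n - t n * ‖u n‖ := by
        rw [hw]
        simp only [map_sub, map_smul, smul_eq_mul, hg2]
        rfl
      rw [this]
      have h2 : t n = s n / ‖u n‖ := rfl
      rw [h2, div_mul_cancel₀ _ hun, sub_self]
    have hval : g n (u n + lam' • w n) = ‖u n‖ := by
      rw [map_add, map_smul, smul_eq_mul, hg2, hwn, mul_zero, add_zero]
    calc ‖u n‖ = g n (u n + lam' • w n) := hval.symm
      _ ≤ ‖g n (u n + lam' • w n)‖ := by rw [Real.norm_eq_abs]; exact le_abs_self _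
      _ ≤ ‖g n‖ * ‖u n + lam' • w n‖ := (g n).le_opNorm _
      _ ≤ 1 * ‖u n + lam' • w n‖ := mul_le_mul_of_nonneg_right (hgle n) (norm_nonneg _)
      _ = ‖u n + lam' • w n‖ := one_mul _
  intro lam
  have hineq : ∀ᶠ n in atTop, ‖T (u n)‖ ≤ ‖T (u n) + lam • T (w n)‖ := by
    filter_upwards [hne] with n hn
    exact hpres (u n) (huA n) (w n) (horthn n hn) lam
  have l1 : Tendsto (fun n => ‖T (u n)‖) atTop (𝓝 ‖T x‖) :=
    ((T.continuous.tendsto x).comp hulim).norm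
  have l2 : Tendsto (fun n => ‖T (u n) + lam • T (w n)‖) atTop (𝓝 ‖T x + lam • T v‖) := by
    have h1 : Tendsto (fun n => T (u n)) atTop (𝓝 (T x)) := (T.continuous.tendsto x).comp hulim
    have h2 : Tendsto (fun n => T (w n)) atTop (𝓝 (T v)) := (T.continuous.tendsto v).comp hwtend
    exact (h1.add (tendsto_const_nhds.smul h2)).norm
  exact le_of_tendsto_of_tendsto l1 l2 hineq
end

section
/- Let X, Y be real Banach spaces and T : X → Y a bounded linear operator. Let P_B = {x ∈ X : ∀ y, x ⊥_B y → Tx ⊥_B Ty} be the set of points at which T preserves Birkhoff-James orthogonality. Then P_B ∩ Sm(X) is closed in the subspace topology of Sm(X), where Sm(X) denotes the set of smooth points of X. -/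
open Metric Filter Set

section Aux
variable {X : Type*} [NormedAddCommGroup X] [NormedSpace ℝ X]

/-- Difference quotient of the norm at `x` in direction `y`. -/
noncomputable def sl (x y : X) (t : ℝ) : ℝ := (‖x + t • y‖ - ‖x‖) / t

lemma sl_le_norm (x y : X) {t : ℝ} (ht : 0 < t) : sl x y t ≤ ‖y‖ := by
  rw [sl, div_le_iff₀ ht]
  have h : ‖x + t • y‖ ≤ ‖x‖ + t * ‖y‖ := by
    calc ‖x + t • y‖ ≤ ‖x‖ + ‖t • y‖ := norm_add_le _ _
    _ = ‖x‖ + t * ‖y‖ := by rw [norm_smul, Real.norm_eq_abs, abs_of_pos ht]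
  linarith

lemma neg_norm_le_sl (x y : X) {t : ℝ} (ht : 0 < t) : -‖y‖ ≤ sl x y t := by
  rw [sl, le_div_iff₀ ht]
  have h : ‖x‖ ≤ ‖x + t • y‖ + t * ‖y‖ := by
    calc ‖x‖ = ‖(x + t • y) - t • y‖ := by rw [add_sub_cancel_right]
    _ ≤ ‖x + t • y‖ + ‖t • y‖ := norm_sub_le _ _
    _ = ‖x + t • y‖ + t * ‖y‖ := by
        rw [norm_smul, Real.norm_eq_abs, abs_of_pos ht]
  linarith

lemma sl_mono (x y : X) {s t : ℝ} (hs : 0 < s) (hst : s ≤ t) :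
    sl x y s ≤ sl x y t := by
  have ht : 0 < t := hs.trans_le hst
  have ha : 0 < s / t := div_pos hs ht
  have ha1 : s / t ≤ 1 := (div_le_one ht).2 hst
  have key : x + s • y = (s / t) • (x + t • y) + (1 - s / t) • x := by
    rw [smul_add, smul_smul, div_mul_cancel₀ _ ht.ne', sub_smul, one_smul]
    abel
  have h2 : ‖x + s • y‖ ≤ (s / t) * ‖x + t • y‖ + (1 - s / t) * ‖x‖ := by
    rw [key]
    calc ‖(s / t) • (x + t • y) + (1 - s / t) • x‖
        ≤ ‖(s / t) • (x + t • y)‖ + ‖(1 - s / t) • x‖ := norm_add_le _ _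
    _ = (s / t) * ‖x + t • y‖ + (1 - s / t) * ‖x‖ := by
        rw [norm_smul, norm_smul, Real.norm_eq_abs, Real.norm_eq_abs,
          abs_of_pos ha, abs_of_nonneg (by linarith)]
  rw [sl, sl, div_le_div_iff₀ hs ht]
  have h3 : (‖x + s • y‖ - ‖x‖) * t ≤ (s / t * (‖x + t • y‖ - ‖x‖)) * t := by
    nlinarith
  calc (‖x + s • y‖ - ‖x‖) * t ≤ (s / t * (‖x + t • y‖ - ‖x‖)) * t := h3
  _ = (‖x + t • y‖ - ‖x‖) * s := by field_simp

/-- Right derivative of the norm at `x` in direction `y`, as an infimum of slopes. -/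
noncomputable def rd (x y : X) : ℝ := ⨅ t : (Ioi (0:ℝ)), sl x y t

lemma rd_bdd (x y : X) : BddBelow (range fun t : Ioi (0:ℝ) => sl x y t) :=
  ⟨-‖y‖, by rintro _ ⟨t, rfl⟩; exact neg_norm_le_sl x y t.2⟩

lemma rd_le_sl (x y : X) {t : ℝ} (ht : 0 < t) : rd x y ≤ sl x y t :=
  ciInf_le (rd_bdd x y) ⟨t, ht⟩

lemma le_rd (x y : X) {c : ℝ} (h : ∀ t : ℝ, 0 < t → c ≤ sl x y t) : c ≤ rd x y :=
  le_ciInf fun t => h t t.2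

lemma exists_sl_lt (x y : X) {c : ℝ} (h : rd x y < c) : ∃ t : ℝ, 0 < t ∧ sl x y t < c := by
  obtain ⟨t, ht⟩ := exists_lt_of_ciInf_lt h
  exact ⟨t, t.2, ht⟩

lemma rd_le_norm (x y : X) : rd x y ≤ ‖y‖ :=
  (rd_le_sl x y one_pos).trans (sl_le_norm x y one_pos)

lemma neg_norm_le_rd (x y : X) : -‖y‖ ≤ rd x y :=
  le_rd x y fun t ht => neg_norm_le_sl x y ht

lemma rd_zero (x : X) : rd x (0:X) = 0 := by
  have h : ∀ t : ℝ, 0 < t → sl x (0:X) t = 0 := by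
    intro t ht; simp [sl]
  refine le_antisymm ((rd_le_sl x 0 one_pos).trans_eq (h 1 one_pos)) ?_
  exact le_rd x 0 fun t ht => (h t ht).ge

lemma rd_self (x : X) : rd x x = ‖x‖ := by
  have h : ∀ t : ℝ, 0 < t → sl x x t = ‖x‖ := by
    intro t ht
    have : x + t • x = (1 + t) • x := by rw [add_smul, one_smul]
    rw [sl, this, norm_smul, Real.norm_eq_abs, abs_of_pos (by linarith)]
    field_simp; ring
  refine le_antisymm ((rd_le_sl x x one_pos).trans_eq (h 1 one_pos)) ?_
  exact le_rd x x fun t ht => (h t ht).ge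

lemma rd_neg_self (x : X) : rd x (-x) = -‖x‖ := by
  refine le_antisymm ?_ (by simpa using neg_norm_le_rd x (-x))
  have h : sl x (-x) (1/2 : ℝ) = -‖x‖ := by
    have hkey : x + (1/2 : ℝ) • (-x) = (1/2 : ℝ) • x := by module
    rw [sl, hkey, norm_smul, Real.norm_eq_abs, show |(1:ℝ)/2| = 1/2 by norm_num]
    ring
  exact (rd_le_sl x (-x) (by norm_num)).trans_eq h

lemma sl_add (x u v : X) {t : ℝ} (ht : 0 < t) :
    sl x (u + v) (t/2) ≤ sl x u t + sl x v t := by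
  have key : x + (t/2) • (u + v) = (1/2 : ℝ) • (x + t • u) + (1/2 : ℝ) • (x + t • v) := by
    module
  have h2 : ‖x + (t/2) • (u + v)‖ ≤ (1/2) * ‖x + t • u‖ + (1/2) * ‖x + t • v‖ := by
    rw [key]
    calc ‖(1/2 : ℝ) • (x + t • u) + (1/2 : ℝ) • (x + t • v)‖
        ≤ ‖(1/2 : ℝ) • (x + t • u)‖ + ‖(1/2 : ℝ) • (x + t • v)‖ := norm_add_le _ _
    _ = (1/2) * ‖x + t • u‖ + (1/2) * ‖x + t • v‖ := by
        rw [norm_smul, norm_smul, Real.norm_eq_abs, show |(1:ℝ)/2| = 1/2 by norm_num]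
  rw [sl, sl, sl]
  rw [← add_div, div_le_div_iff₀ (by linarith) ht]
  nlinarith

lemma rd_add (x u v : X) : rd x (u + v) ≤ rd x u + rd x v := by
  refine le_of_forall_pos_le_add fun ε hε => ?_
  obtain ⟨t₁, ht₁, hs₁⟩ := exists_sl_lt x u (lt_add_of_pos_right _ (half_pos hε))
  obtain ⟨t₂, ht₂, hs₂⟩ := exists_sl_lt x v (lt_add_of_pos_right _ (half_pos hε))
  set t := min t₁ t₂ with htdef
  have ht : 0 < t := lt_min ht₁ ht₂
  have h1 : sl x u t ≤ sl x u t₁ := sl_mono x u ht (min_le_left _ _)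
  have h2 : sl x v t ≤ sl x v t₂ := sl_mono x v ht (min_le_right _ _)
  calc rd x (u + v) ≤ sl x (u + v) (t/2) := rd_le_sl x (u+v) (by linarith)
  _ ≤ sl x u t + sl x v t := sl_add x u v ht
  _ ≤ (rd x u + ε/2) + (rd x v + ε/2) := by linarith
  _ = rd x u + rd x v + ε := by ring

lemma rd_smul_le (x y : X) {c : ℝ} (hc : 0 < c) : c * rd x y ≤ rd x (c • y) := by
  refine le_rd x (c • y) fun t ht => ?_
  have key : sl x (c • y) t = c * sl x y (t * c) := by
    rw [sl, sl, smul_smul]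
    field_simp
  rw [key]
  exact mul_le_mul_of_nonneg_left (rd_le_sl x y (mul_pos ht hc)) hc.le

lemma rd_smul (x y : X) {c : ℝ} (hc : 0 < c) : rd x (c • y) = c * rd x y := by
  refine le_antisymm ?_ (rd_smul_le x y hc)
  have h := rd_smul_le x (c • y) (inv_pos.2 hc)
  rw [smul_smul, inv_mul_cancel₀ hc.ne', one_smul] at h
  calc rd x (c • y) = c * (c⁻¹ * rd x (c • y)) := by field_simp
  _ ≤ c * rd x y := mul_le_mul_of_nonneg_left h hc.le

end Aux

section Smooth
variable {X : Type*} [NormedAddCommGroup X] [NormedSpace ℝ X]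

lemma supp_le_sl {x : X} {f : StrongDual ℝ X} (hf : f ∈ SuppFunc x)
    (y : X) {t : ℝ} (ht : 0 < t) : f y ≤ sl x y t := by
  obtain ⟨hfn, hfx⟩ := hf
  have h1 : f (x + t • y) ≤ ‖x + t • y‖ := by
    calc f (x + t • y) ≤ ‖f (x + t • y)‖ := le_abs_self _
    _ ≤ ‖f‖ * ‖x + t • y‖ := f.le_opNorm _
    _ = ‖x + t • y‖ := by rw [hfn, one_mul]
  have h2 : f (x + t • y) = ‖x‖ + t * f y := by
    rw [map_add, map_smul, hfx]; rfl
  rw [sl, le_div_iff₀ ht]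
  linarith

lemma supp_le_rd {x : X} {f : StrongDual ℝ X} (hf : f ∈ SuppFunc x)
    (y : X) : f y ≤ rd x y :=
  le_rd x y fun t ht => supp_le_sl hf y ht

/-- For a smooth point, the supporting functional equals the right norm derivative. -/
lemma smooth_rd {x : X} (hx0 : x ≠ 0)
    (huniq : ∃! f : StrongDual ℝ X, f ∈ SuppFunc x)
    {f : StrongDual ℝ X} (hf : f ∈ SuppFunc x) (y : X) : f y = rd x y := by
  by_cases hy : y = 0
  · subst hy; simp [rd_zero]
  -- Build a supporting functional attaining `rd x y` at `y` via Hahn-Banach.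
  have H : ∀ c : ℝ, c • y = 0 → (RingHom.id ℝ) c • (rd x y) = 0 := fun c hc => by
    rcases smul_eq_zero.1 hc with h | h
    · simp [h]
    · exact absurd h hy
  have hdom : ∀ v : (LinearPMap.mkSpanSingleton' y (rd x y) H).domain,
      (LinearPMap.mkSpanSingleton' y (rd x y) H) v ≤ rd x (v : X) := by
    rintro ⟨v, hv⟩
    have hv' : v ∈ Submodule.span ℝ {y} := by
      rwa [LinearPMap.domain_mkSpanSingleton] at hv
    rw [Submodule.mem_span_singleton] at hv'
    obtain ⟨c, hc⟩ := hv'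
    subst hc
    rw [LinearPMap.mkSpanSingleton'_apply]
    simp only [smul_eq_mul, RingHom.id_apply]
    rcases lt_trichotomy c 0 with hc | hc | hc
    · have h1 : rd x (c • y) = (-c) * rd x (-y) := by
        rw [show c • y = (-c) • (-y) by rw [smul_neg, neg_smul, neg_neg]]
        exact rd_smul x (-y) (by linarith)
      have h2 : 0 ≤ rd x y + rd x (-y) := by
        have := rd_add x y (-y)
        rw [add_neg_cancel, rd_zero] at this
        linarith
      rw [h1]; nlinarith
    · simp [hc, (rd_zero x).ge]
    · exact (rd_smul x y hc).ge
  obtain ⟨g, hgeq, hgle⟩ := exists_extension_of_le_sublinear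
    (LinearPMap.mkSpanSingleton' y (rd x y) H) (rd x)
    (fun c hc v => rd_smul x v hc) (rd_add x) hdom
  have hb : ∀ v, ‖g v‖ ≤ 1 * ‖v‖ := by
    intro v
    rw [one_mul, Real.norm_eq_abs, abs_le]
    constructor
    · have := (hgle (-v)).trans (rd_le_norm x (-v))
      rw [map_neg, norm_neg] at this
      linarith
    · exact (hgle v).trans (rd_le_norm x v)
  set G : StrongDual ℝ X := g.mkContinuous 1 hb with hG
  have hGapp : ∀ v, G v = g v := fun v => rfl
  have hGx : G x = ‖x‖ := by
    rw [hGapp]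
    refine le_antisymm ((hgle x).trans_eq (rd_self x)) ?_
    have := (hgle (-x)).trans_eq (rd_neg_self x)
    rw [map_neg] at this
    linarith
  have hGnorm : ‖G‖ = 1 := by
    refine le_antisymm (g.mkContinuous_norm_le one_pos.le hb) ?_
    have h1 : ‖x‖ ≤ ‖G‖ * ‖x‖ := by
      calc ‖x‖ = ‖G x‖ := by rw [hGx, Real.norm_eq_abs, abs_of_nonneg (norm_nonneg x)]
      _ ≤ ‖G‖ * ‖x‖ := G.le_opNorm x
    have h2 : 0 < ‖x‖ := norm_pos_iff.2 hx0
    nlinarith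
  have hGsupp : G ∈ SuppFunc x := ⟨hGnorm, hGx⟩
  obtain ⟨f₀, _, huni⟩ := huniq
  have hfG : f = G := (huni f hf).trans (huni G hGsupp).symm
  have hGy : G y = rd x y := by
    rw [hGapp]
    have hymem : y ∈ (LinearPMap.mkSpanSingleton' y (rd x y) H).domain := by
      rw [LinearPMap.domain_mkSpanSingleton]
      exact Submodule.mem_span_singleton_self y
    rw [hgeq ⟨y, hymem⟩, LinearPMap.mkSpanSingleton'_apply_self]
  rw [hfG, hGy]

lemma smooth_bj_iff {x : X} (hx0 : x ≠ 0)
    (huniq : ∃! f : StrongDual ℝ X, f ∈ SuppFunc x)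
    {f : StrongDual ℝ X} (hf : f ∈ SuppFunc x) (y : X) :
    BJOrth x y ↔ f y = 0 := by
  constructor
  · intro h
    have h1 : 0 ≤ rd x y := le_rd x y fun t ht => by
      rw [sl, le_div_iff₀ ht, zero_mul, sub_nonneg]
      exact h t
    have h2 : 0 ≤ rd x (-y) := le_rd x (-y) fun t ht => by
      rw [sl, le_div_iff₀ ht, zero_mul, sub_nonneg]
      have := h (-t)
      rwa [neg_smul, ← smul_neg] at this
    have e1 := smooth_rd hx0 huniq hf y
    have e2 := smooth_rd hx0 huniq hf (-y)
    rw [map_neg] at e2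
    linarith
  · intro h lam
    obtain ⟨hfn, hfx⟩ := hf
    have : f (x + lam • y) = ‖x‖ := by
      rw [map_add, map_smul, hfx, smul_eq_mul, h]; ring
    calc ‖x‖ = f (x + lam • y) := this.symm
    _ ≤ ‖f (x + lam • y)‖ := le_abs_self _
    _ ≤ ‖f‖ * ‖x + lam • y‖ := f.le_opNorm _
    _ = ‖x + lam • y‖ := by rw [hfn, one_mul]

end Smooth


theorem stmt_2 {X Y : Type*} [NormedAddCommGroup X] [NormedSpace ℝ X] [CompleteSpace X]
    [NormedAddCommGroup Y] [NormedSpace ℝ Y] [CompleteSpace Y] (T : X →L[ℝ] Y) :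
    IsClosed (Subtype.val ⁻¹' {x : X | PreservesBJAt T x} :
      Set {x : X // SmoothPt x}) := by
  have hseq : IsSeqClosed (Subtype.val ⁻¹' {x : X | PreservesBJAt T x} :
      Set {x : X // SmoothPt x}) := by
    intro u p hu hup
    obtain ⟨hp0, hpuniq⟩ := p.2
    obtain ⟨f, hf, -⟩ := hpuniq
    have hpuniq : ∃! f : StrongDual ℝ X, f ∈ SuppFunc (p : X) := p.2.2
    simp only [mem_preimage, mem_setOf_eq] at hu ⊢
    intro y hy
    have hfy : f y = 0 := (smooth_bj_iff hp0 hpuniq hf y).1 hy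
    have hfny : f (-y) = 0 := by rw [map_neg, hfy, neg_zero]
    choose F hF using fun n => ((u n).2.2).exists
    have huX : Tendsto (fun n => ((u n) : X)) atTop (nhds (p : X)) :=
      (continuous_subtype_val.tendsto p).comp hup
    -- the values of the supporting functionals at y tend to 0
    have ha : Tendsto (fun n => F n y) atTop (nhds 0) := by
      rw [NormedAddCommGroup.tendsto_nhds_zero]
      intro ε hε
      have hrd1 : rd (p : X) y < ε := by
        rw [← smooth_rd hp0 hpuniq hf y, hfy]; exact hε
      have hrd2 : rd (p : X) (-y) < ε := by
        rw [← smooth_rd hp0 hpuniq hf (-y), hfny]; exact hε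
      obtain ⟨t₁, ht₁, hs₁⟩ := exists_sl_lt (p : X) y hrd1
      obtain ⟨t₂, ht₂, hs₂⟩ := exists_sl_lt (p : X) (-y) hrd2
      have hc : ∀ (w : X) (t : ℝ), t ≠ 0 → Continuous fun x : X => sl x w t := by
        intro w t ht
        unfold sl
        exact ((continuous_norm.comp (continuous_id.add continuous_const)).sub
          continuous_norm).div_const t
      have hev1 : ∀ᶠ n in atTop, sl ((u n : X)) y t₁ < ε :=
        (((hc y t₁ ht₁.ne').tendsto _).comp huX).eventually_lt_const hs₁
      have hev2 : ∀ᶠ n in atTop, sl ((u n : X)) (-y) t₂ < ε :=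
        (((hc (-y) t₂ ht₂.ne').tendsto _).comp huX).eventually_lt_const hs₂
      filter_upwards [hev1, hev2] with n h1 h2
      rw [Real.norm_eq_abs, abs_lt]
      constructor
      · have hle : F n (-y) ≤ sl ((u n : X)) (-y) t₂ := supp_le_sl (hF n) (-y) ht₂
        rw [map_neg] at hle
        linarith
      · exact lt_of_le_of_lt (supp_le_sl (hF n) y ht₁) h1
    -- perturbed directions in the kernels of the supporting functionals
    set z : ℕ → X := fun n => y - ((F n y) / ‖((u n) : X)‖) • ((u n) : X) with hzdef
    have hz : ∀ n, BJOrth ((u n) : X) (z n) := by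
      intro n
      refine (smooth_bj_iff (u n).2.1 (u n).2.2 (hF n) (z n)).2 ?_
      have hn0 : ‖((u n) : X)‖ ≠ 0 := norm_ne_zero_iff.2 (u n).2.1
      have : F n ((u n) : X) = ‖((u n) : X)‖ := (hF n).2
      rw [hzdef]
      simp only [map_sub, map_smul, smul_eq_mul, this]
      field_simp
      simp
    have hT : ∀ n, ∀ lam : ℝ, ‖T ((u n) : X)‖ ≤ ‖T ((u n) : X) + lam • T (z n)‖ :=
      fun n => hu n (z n) (hz n)
    have hnorm : Tendsto (fun n => ‖((u n) : X)‖) atTop (nhds ‖(p : X)‖) := huX.norm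
    have hzlim : Tendsto z atTop (nhds y) := by
      have hp0' : ‖(p : X)‖ ≠ 0 := norm_ne_zero_iff.2 hp0
      have hdiv : Tendsto (fun n => (F n y) / ‖((u n) : X)‖) atTop (nhds 0) := by
        have := ha.div hnorm hp0'
        rw [zero_div] at this
        exact this
      have hsmul : Tendsto (fun n => ((F n y) / ‖((u n) : X)‖) • ((u n) : X))
          atTop (nhds 0) := by
        have := hdiv.smul huX
        simpa using this
      have := (tendsto_const_nhds (α := ℕ) (x := y)).sub hsmul
      simpa using this
    intro lam
    have h1 : Tendsto (fun n => ‖T ((u n) : X)‖) atTop (nhds ‖T (p : X)‖) :=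
      ((T.continuous.tendsto _).comp huX).norm
    have h2 : Tendsto (fun n => ‖T ((u n) : X) + lam • T (z n)‖) atTop
        (nhds ‖T (p : X) + lam • T y‖) :=
      (((T.continuous.tendsto _).comp huX).add
        (((T.continuous.tendsto _).comp hzlim).const_smul lam)).norm
    exact le_of_tendsto_of_tendsto' h1 h2 fun n => hT n lam
  exact hseq.isClosed
end

section
/- Let X be a real Banach space in which the set Sm(X) of smooth points is dense, and let Y be a real normed space. If a nonzero bounded linear operator T : X → Y preserves Birkhoff-James orthogonality at each smooth point of X, then T is injective. -/
open Metric Filter Set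

theorem stmt_5 {X Y : Type*} [NormedAddCommGroup X] [NormedSpace ℝ X] [CompleteSpace X]
    [NormedAddCommGroup Y] [NormedSpace ℝ Y]
    (T : X →L[ℝ] Y) (hT : T ≠ 0) (hdense : Dense {x : X | SmoothPt x})
    (hpres : ∀ x : X, SmoothPt x → PreservesBJAt T x) :
    Function.Injective T := by
  have key : ∀ z : X, T z = 0 → z = 0 := by
    intro z hz
    by_contra hzne
    have hznorm : (0:ℝ) < ‖z‖ := norm_pos_iff.mpr hzne
    -- every smooth point in the ball around z is killed by T
    have hker : ∀ x : X, SmoothPt x → ‖x - z‖ < ‖z‖ / 2 → T x = 0 := by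
      intro x hx hxz
      obtain ⟨hx0, f, ⟨hf1, hfx⟩, -⟩ := id hx
      have hxn : (0:ℝ) < ‖x‖ := norm_pos_iff.mpr hx0
      -- f z > 0
      have hfz : 0 < f z := by
        have h1 : f (x - z) ≤ ‖x - z‖ := by
          calc f (x - z) ≤ ‖f (x - z)‖ := (Real.norm_eq_abs _).symm ▸ le_abs_self _
            _ ≤ ‖f‖ * ‖x - z‖ := f.le_opNorm _
            _ = ‖x - z‖ := by rw [hf1, one_mul]
        have h2 : ‖z‖ - ‖x‖ ≤ ‖z - x‖ := norm_sub_norm_le z x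
        have h3 : ‖z - x‖ = ‖x - z‖ := norm_sub_rev z x
        have h4 : f z = f x - f (x - z) := by
          have : f (x - z) = f x - f z := by rw [map_sub]
          linarith
        rw [h4, hfx]
        linarith
      set c : ℝ := f z / ‖x‖ with hc_def
      have hc : 0 < c := div_pos hfz hxn
      set v : X := z - c • x with hv_def
      have hfv : f v = 0 := by
        rw [hv_def, map_sub, map_smul, smul_eq_mul, hfx, hc_def]
        field_simp
        simp
      -- x ⊥_B v
      have hbj : BJOrth x v := by
        intro lam
        have hfeq : f (x + lam • v) = ‖x‖ := by
          rw [map_add, map_smul, smul_eq_mul, hfv, mul_zero, add_zero, hfx]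
        calc ‖x‖ = f (x + lam • v) := hfeq.symm
          _ ≤ ‖f (x + lam • v)‖ := (Real.norm_eq_abs _).symm ▸ le_abs_self _
          _ ≤ ‖f‖ * ‖x + lam • v‖ := f.le_opNorm _
          _ = ‖x + lam • v‖ := by rw [hf1, one_mul]
      have hTbj : BJOrth (T x) (T v) := hpres x hx v hbj
      have hTv : T v = -(c • T x) := by
        rw [hv_def, map_sub, map_smul, hz, zero_sub]
      have h5 := hTbj c⁻¹
      rw [hTv, smul_neg, smul_smul, inv_mul_cancel₀ hc.ne', one_smul,
        add_neg_cancel, norm_zero] at h5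
      exact norm_le_zero_iff.mp h5
    -- the ball around z is contained in ker T
    have hclosed : IsClosed {x : X | T x = 0} := isClosed_eq T.continuous continuous_const
    have hball : Metric.ball z (‖z‖ / 2) ⊆ {x : X | T x = 0} := by
      have h1 : Metric.ball z (‖z‖ / 2) ⊆
          closure (Metric.ball z (‖z‖ / 2) ∩ {x : X | SmoothPt x}) :=
        hdense.open_subset_closure_inter Metric.isOpen_ball
      have h2 : Metric.ball z (‖z‖ / 2) ∩ {x : X | SmoothPt x} ⊆ {x : X | T x = 0} := by
        rintro x ⟨hx1, hx2⟩
        exact hker x hx2 (by rwa [Metric.mem_ball, dist_eq_norm] at hx1)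
      calc Metric.ball z (‖z‖ / 2)
          ⊆ closure (Metric.ball z (‖z‖ / 2) ∩ {x : X | SmoothPt x}) := h1
        _ ⊆ closure {x : X | T x = 0} := closure_mono h2
        _ = {x : X | T x = 0} := hclosed.closure_eq
    -- hence T = 0
    have hT0 : ∀ w : X, T w = 0 := by
      intro w
      set t : ℝ := ‖z‖ / (4 * (‖w‖ + 1)) with ht_def
      have hwpos : (0:ℝ) < ‖w‖ + 1 := by positivity
      have htpos : 0 < t := by positivity
      have hmem : z + t • w ∈ Metric.ball z (‖z‖ / 2) := by
        rw [Metric.mem_ball, dist_eq_norm, add_sub_cancel_left, norm_smul,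
          Real.norm_eq_abs, abs_of_pos htpos]
        have h1 : t * ‖w‖ < t * (‖w‖ + 1) := by
          exact (mul_lt_mul_iff_right₀ htpos).mpr (by linarith)
        have h2 : t * (‖w‖ + 1) = ‖z‖ / 4 := by
          rw [ht_def]; field_simp
        linarith
      have h3 : T (z + t • w) = 0 := hball hmem
      rw [map_add, map_smul, hz, zero_add] at h3
      have := smul_eq_zero.mp h3
      rcases this with h | h
      · exact absurd h htpos.ne'
      · exact h
    exact hT (ContinuousLinearMap.ext fun w => by rw [hT0 w]; rfl)
  intro a b hab
  have : T (a - b) = 0 := by rw [map_sub, hab, sub_self]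
  have := key _ this
  exact sub_eq_zero.mp this
end

section
/- Let X, Y be real Banach spaces such that Sm(X) and Sm(Y) are dense G_δ subsets of X and Y respectively. If a bijective bounded linear operator T : X → Y preserves Birkhoff-James orthogonality at each point of Sm(X) ∩ T⁻¹(Sm(Y)), then there exists λ ≥ 0 such that ‖Tx‖ = λ‖x‖ for all x ∈ X, i.e., T is a scalar multiple of an isometry. -/
open Metric Filter Set
open Topology

section helpers
variable {X : Type*} [NormedAddCommGroup X] [NormedSpace ℝ X]

lemma supp_le {x w : X} {f : StrongDual ℝ X} (hf : f ∈ SuppFunc x) : f w ≤ ‖w‖ := by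
  calc f w ≤ ‖f w‖ := le_abs_self _
  _ ≤ ‖f‖ * ‖w‖ := f.le_opNorm w
  _ = ‖w‖ := by rw [hf.1, one_mul]

lemma dom_ineq {x v : X} {m : ℝ}
    (hm : ∀ t : ℝ, ‖x‖ + t * m ≤ ‖x + t • v‖) (a b : ℝ) :
    a * ‖x‖ + b * m ≤ ‖a • x + b • v‖ := by
  have habs : |m| ≤ ‖v‖ := by
    have h1 := hm 1
    have h2 := hm (-1)
    have e1 : ‖x + (1:ℝ) • v‖ ≤ ‖x‖ + ‖v‖ := by simpa using norm_add_le x v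
    have e2 : ‖x + (-1:ℝ) • v‖ ≤ ‖x‖ + ‖v‖ := by
      have := norm_add_le x (-v); simpa using this
    rw [abs_le]; constructor <;> nlinarith
  rcases lt_trichotomy a 0 with ha | ha | ha
  · have hba : a * (b/a) = b := mul_div_cancel₀ b ha.ne
    have hsmul : a • x + b • v = a • (x + (b/a) • v) := by
      rw [smul_add, smul_smul, hba]
    have hnorm : ‖a • x + b • v‖ = -a * ‖x + (b/a) • v‖ := by
      rw [hsmul, norm_smul, Real.norm_eq_abs, abs_of_neg ha]
    have key : -‖x‖ - (b/a) * m ≤ ‖x + (b/a) • v‖ := by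
      have ht : ‖(b/a) • v‖ ≤ ‖x + (b/a) • v‖ + ‖x‖ := by
        have h := norm_sub_le (x + (b/a) • v) x
        have e : x + (b/a) • v - x = (b/a) • v := by abel
        rwa [e] at h
      have t2 : -((b/a) * m) ≤ ‖(b/a) • v‖ := by
        rw [norm_smul, Real.norm_eq_abs]
        calc -((b/a) * m) ≤ |(b/a) * m| := neg_le_abs _
          _ = |b/a| * |m| := abs_mul _ _
          _ ≤ |b/a| * ‖v‖ := mul_le_mul_of_nonneg_left habs (abs_nonneg _)
      linarith
    rw [hnorm]
    have h3 := mul_le_mul_of_nonneg_left key (by linarith : (0:ℝ) ≤ -a)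
    have h4 : (-a) * (-‖x‖ - (b/a) * m) = a * ‖x‖ + (a * (b/a)) * m := by ring
    rw [h4, hba] at h3
    linarith
  · subst ha
    simp only [zero_mul, zero_add, zero_smul, zero_add]
    calc b * m ≤ |b * m| := le_abs_self _
      _ = |b| * |m| := abs_mul _ _
      _ ≤ |b| * ‖v‖ := mul_le_mul_of_nonneg_left habs (abs_nonneg _)
      _ = ‖b • v‖ := by rw [norm_smul, Real.norm_eq_abs]
  · have hba : a * (b/a) = b := mul_div_cancel₀ b ha.ne'
    have hsmul : a • x + b • v = a • (x + (b/a) • v) := by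
      rw [smul_add, smul_smul, hba]
    have hnorm : ‖a • x + b • v‖ = a * ‖x + (b/a) • v‖ := by
      rw [hsmul, norm_smul, Real.norm_eq_abs, abs_of_pos ha]
    have key := hm (b/a)
    rw [hnorm]
    have h3 := mul_le_mul_of_nonneg_left key ha.le
    have h4 : a * (‖x‖ + (b/a) * m) = a * ‖x‖ + (a * (b/a)) * m := by ring
    rw [h4, hba] at h3
    linarith

lemma smooth_subgrad {x : X} (hx : SmoothPt x) {F : StrongDual ℝ X} (hF : F ∈ SuppFunc x)
    {v : X} {m : ℝ} (hm : ∀ t : ℝ, ‖x‖ + t * m ≤ ‖x + t • v‖) : F v = m := by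
  have hx0 : x ≠ 0 := hx.1
  have hxpos : (0:ℝ) < ‖x‖ := norm_pos_iff.2 hx0
  by_cases hdep : v ∈ Submodule.span ℝ {x}
  · obtain ⟨a, rfl⟩ := Submodule.mem_span_singleton.1 hdep
    have hFv : F (a • x) = a * ‖x‖ := by
      rw [map_smul, hF.2, smul_eq_mul]
    set δ : ℝ := min 1 (1/(|a|+1)) with hδdef
    have hδpos : 0 < δ := lt_min one_pos (by positivity)
    have hδa : |δ * a| ≤ 1 := by
      rw [abs_mul, abs_of_pos hδpos]
      calc δ * |a| ≤ (1/(|a|+1)) * |a| :=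
            mul_le_mul_of_nonneg_right (min_le_right _ _) (abs_nonneg a)
        _ ≤ 1 := by
            rw [div_mul_eq_mul_div, one_mul]
            apply div_le_one_of_le₀ (by linarith [abs_nonneg a]) (by positivity)
    have key : ∀ t : ℝ, ‖x + t • a • x‖ = |1 + t*a| * ‖x‖ := by
      intro t
      have e : x + t • a • x = (1 + t*a) • x := by
        rw [add_smul, one_smul, smul_smul]
      rw [e, norm_smul, Real.norm_eq_abs]
    have h1 := hm δ
    have h2 := hm (-δ)
    rw [key δ] at h1
    rw [key (-δ)] at h2
    obtain ⟨hδa1, hδa2⟩ := abs_le.1 hδa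
    have e1 : |1 + δ*a| = 1 + δ*a := abs_of_nonneg (by linarith)
    have e2 : |1 + (-δ)*a| = 1 + (-δ)*a := abs_of_nonneg (by nlinarith)
    rw [e1] at h1
    rw [e2] at h2
    rw [hFv]
    nlinarith
  · have hv' : v ∉ (LinearPMap.mkSpanSingleton (K := ℝ) (σ := RingHom.id ℝ) x ‖x‖ hx0).domain := hdep
    set f1 := (LinearPMap.mkSpanSingleton (K := ℝ) (σ := RingHom.id ℝ) x ‖x‖ hx0).supSpanSingleton v m hv' with hf1
    have happly : ∀ (a b : ℝ) (h : a • x + b • v ∈ f1.domain),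
        f1 ⟨a • x + b • v, h⟩ = a * ‖x‖ + b * m := by
      intro a b h
      have hz : a • x ∈ (LinearPMap.mkSpanSingleton (K := ℝ) (σ := RingHom.id ℝ) x ‖x‖ hx0).domain :=
        Submodule.mem_span_singleton.2 ⟨a, rfl⟩
      have := LinearPMap.supSpanSingleton_apply_mk
        (LinearPMap.mkSpanSingleton (K := ℝ) (σ := RingHom.id ℝ) x ‖x‖ hx0) v m hv' (a • x) hz b
      rw [show (⟨a • x + b • v, h⟩ : f1.domain) =
        ⟨a • x + b • v, Submodule.mem_sup.2 ⟨a • x, hz, b • v,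
          Submodule.mem_span_singleton.2 ⟨b, rfl⟩, rfl⟩⟩ from rfl]
      rw [this]
      rw [LinearPMap.mkSpanSingleton'_apply]
      simp [smul_eq_mul]
    have hdom : ∀ w : f1.domain, f1 w ≤ ‖(w : X)‖ := by
      rintro ⟨w, hw⟩
      have hw' : w ∈ (LinearPMap.mkSpanSingleton (K := ℝ) (σ := RingHom.id ℝ) x ‖x‖ hx0).domain ⊔
          (Submodule.span ℝ {v}) := hw
      obtain ⟨z, hz, w2, hw2, rfl⟩ := Submodule.mem_sup.1 hw'
      obtain ⟨a, rfl⟩ := Submodule.mem_span_singleton.1 hz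
      obtain ⟨b, rfl⟩ := Submodule.mem_span_singleton.1 hw2
      rw [happly a b hw]
      exact dom_ineq hm a b
    obtain ⟨g, hg_eq, hg_le⟩ := exists_extension_of_le_sublinear f1 (fun w => ‖w‖)
      (fun c hc w => by show ‖c • w‖ = c * ‖w‖; rw [norm_smul, Real.norm_eq_abs, abs_of_pos hc])
      (fun w₁ w₂ => norm_add_le w₁ w₂) hdom
    have habs : ∀ w : X, |g w| ≤ ‖w‖ := by
      intro w
      rw [abs_le]
      constructor
      · have := hg_le (-w)
        rw [map_neg, norm_neg] at this
        linarith
      · exact hg_le w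
    set G : StrongDual ℝ X := LinearMap.mkContinuous g 1
      (fun w => by rw [one_mul]; exact habs w) with hG
    have hmemx : x ∈ f1.domain := by
      apply Submodule.mem_sup_left
      exact Submodule.mem_span_singleton_self x
    have hGx : G x = ‖x‖ := by
      have e : x = (1:ℝ) • x + (0:ℝ) • v := by simp
      have h' : (1:ℝ) • x + (0:ℝ) • v ∈ f1.domain := by rw [← e]; exact hmemx
      have := happly 1 0 h'
      have e2 : G x = f1 ⟨(1:ℝ) • x + (0:ℝ) • v, h'⟩ := by
        have := hg_eq ⟨(1:ℝ) • x + (0:ℝ) • v, h'⟩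
        simp only [hG, LinearMap.mkContinuous_apply]
        rw [← this]
        exact congrArg g e
      rw [e2, this]
      ring
    have hGv : G v = m := by
      have e : v = (0:ℝ) • x + (1:ℝ) • v := by simp
      have h' : (0:ℝ) • x + (1:ℝ) • v ∈ f1.domain := by
        rw [← e]
        exact (Submodule.mem_sup_right (Submodule.mem_span_singleton_self v) :
          v ∈ (LinearPMap.mkSpanSingleton (K := ℝ) (σ := RingHom.id ℝ) x ‖x‖ hx0).domain ⊔ Submodule.span ℝ {v})
      have := happly 0 1 h'
      have e2 : G v = f1 ⟨(0:ℝ) • x + (1:ℝ) • v, h'⟩ := by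
        have := hg_eq ⟨(0:ℝ) • x + (1:ℝ) • v, h'⟩
        simp only [hG, LinearMap.mkContinuous_apply]
        rw [← this]
        exact congrArg g e
      rw [e2, this]
      ring
    have hGnorm : ‖G‖ = 1 := by
      apply le_antisymm
      · exact LinearMap.mkContinuous_norm_le g zero_le_one _
      · have h2 : ‖x‖ ≤ ‖G‖ * ‖x‖ := by
          calc ‖x‖ = G x := hGx.symm
            _ ≤ ‖G x‖ := le_abs_self _
            _ ≤ ‖G‖ * ‖x‖ := G.le_opNorm x
        nlinarith
    have hGsupp : G ∈ SuppFunc x := ⟨hGnorm, hGx⟩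
    obtain ⟨f', _, huniq⟩ := hx.2
    rw [show F = G from (huniq F hF).trans (huniq G hGsupp).symm]
    exact hGv

end helpers
section convexline

noncomputable def rder (h : ℝ → ℝ) (t : ℝ) : ℝ :=
  sInf ((fun z => (h z - h t) / (z - t)) '' Ioi t)

lemma convex_slope_mono {h : ℝ → ℝ} (hc : ConvexOn ℝ univ h) (t : ℝ) :
    MonotoneOn (fun z => (h z - h t) / (z - t)) (Ioi t) := by
  rintro z (hz : t < z) z' (hz' : t < z') hzz'
  rcases eq_or_lt_of_le hzz' with rfl | hlt
  · exact le_refl _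
  · have A := hc.slope_mono_adjacent (mem_univ t) (mem_univ z') hz hlt
    have hp : (0:ℝ) < z - t := by linarith
    have hq : (0:ℝ) < z' - z := by linarith
    have hpq : (0:ℝ) < z' - t := by linarith
    rw [div_le_div_iff₀ hp hq] at A
    rw [div_le_div_iff₀ hp hpq]
    nlinarith
  
lemma convex_slope_lb {h : ℝ → ℝ} (hc : ConvexOn ℝ univ h) (t : ℝ) {z : ℝ} (hz : t < z) :
    (h t - h (t-1)) / (t - (t-1)) ≤ (h z - h t) / (z - t) :=
  hc.slope_mono_adjacent (mem_univ (t-1)) (mem_univ z) (by linarith) hz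

lemma convex_slope_bddBelow {h : ℝ → ℝ} (hc : ConvexOn ℝ univ h) (t : ℝ) :
    BddBelow ((fun z => (h z - h t) / (z - t)) '' Ioi t) := by
  refine ⟨(h t - h (t-1)) / (t - (t-1)), ?_⟩
  rintro y ⟨z, hz, rfl⟩
  exact convex_slope_lb hc t hz

lemma rder_tendsto {h : ℝ → ℝ} (hc : ConvexOn ℝ univ h) (t : ℝ) :
    Tendsto (fun z => (h z - h t) / (z - t)) (𝓝[>] t) (𝓝 (rder h t)) :=
  MonotoneOn.tendsto_nhdsGT (convex_slope_mono hc t) (convex_slope_bddBelow hc t)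

lemma rder_le_slope {h : ℝ → ℝ} (hc : ConvexOn ℝ univ h) {t z : ℝ} (hz : t < z) :
    rder h t ≤ (h z - h t) / (z - t) :=
  csInf_le (convex_slope_bddBelow hc t) (mem_image_of_mem _ hz)

lemma convex_hasDerivWithinAt {h : ℝ → ℝ} (hc : ConvexOn ℝ univ h) (t : ℝ) :
    HasDerivWithinAt h (rder h t) (Ici t) t := by
  rw [hasDerivWithinAt_iff_tendsto_slope]
  have e : Ici t \ {t} = Ioi t := Ici_sdiff_left
  rw [e]
  apply Tendsto.congr' _ (rder_tendsto hc t)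
  filter_upwards [self_mem_nhdsWithin] with z hz
  rw [slope_def_field]

end convexline
section seqlim

lemma seq_slope_lim {h : ℝ → ℝ} (hc : ConvexOn ℝ univ h) (hcont : Continuous h)
    {t : ℝ} {s : ℕ → ℝ} (hgt : ∀ n, t < s n) (hst : Tendsto s atTop (𝓝 t))
    {μ : ℕ → ℝ} (hsub : ∀ n, ∀ z : ℝ, h (s n) + (z - s n) * μ n ≤ h z) :
    Tendsto μ atTop (𝓝 (rder h t)) := by
  have hstW : Tendsto s atTop (𝓝[>] t) := by
    rw [tendsto_nhdsWithin_iff]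
    exact ⟨hst, Eventually.of_forall fun n => hgt n⟩
  have hlow : ∀ n, (h (s n) - h t) / (s n - t) ≤ μ n := by
    intro n
    have := hsub n t
    have hd : (0:ℝ) < s n - t := by have := hgt n; linarith
    rw [div_le_iff₀ hd]
    nlinarith
  have hlowlim : Tendsto (fun n => (h (s n) - h t) / (s n - t)) atTop (𝓝 (rder h t)) := by
    have := (rder_tendsto hc t).comp hstW
    exact this
  rw [tendsto_order]
  constructor
  · intro c hc'
    have := hlowlim.eventually (eventually_gt_nhds hc')
    filter_upwards [this] with n hn
    exact lt_of_lt_of_le hn (hlow n)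
  · intro c hc'
    obtain ⟨y, hy, hylt⟩ : ∃ y ∈ (fun z => (h z - h t) / (z - t)) '' Ioi t, y < (rder h t + c)/2 :=
      exists_lt_of_csInf_lt (by
        refine ⟨(h (t+1) - h t)/(t+1-t), mem_image_of_mem _ (by simp : t < t+1)⟩) (by
          simp only [rder] at hc' ⊢; linarith)
    obtain ⟨w, hw, rfl⟩ := hy
    have hwt : t < w := hw
    have hmub : ∀ n, s n < w → μ n ≤ (h w - h (s n)) / (w - s n) := by
      intro n hnw
      have := hsub n w
      have hd : (0:ℝ) < w - s n := by linarith
      rw [le_div_iff₀ hd]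
      nlinarith
    have hslim : Tendsto (fun n => (h w - h (s n)) / (w - s n)) atTop
        (𝓝 ((h w - h t) / (w - t))) := by
      apply Tendsto.div
      · exact (tendsto_const_nhds).sub (hcont.continuousAt.tendsto.comp hst)
      · exact (tendsto_const_nhds).sub hst
      · intro hzero
        have : w = t := by linarith [sub_eq_zero.1 hzero]
        exact (ne_of_gt hwt) this
    have hev1 : ∀ᶠ n in atTop, s n < w :=
      hst.eventually (eventually_lt_nhds hwt)
    have hev2 : ∀ᶠ n in atTop, (h w - h (s n)) / (w - s n) < c := by
      apply hslim.eventually (eventually_lt_nhds ?_)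
      linarith
    filter_upwards [hev1, hev2] with n h1 h2
    exact lt_of_le_of_lt (hmub n h1) h2

lemma line_rigid {h₁ h₂ : ℝ → ℝ} (hc1 : ConvexOn ℝ univ h₁) (hc2 : ConvexOn ℝ univ h₂)
    (hcont1 : Continuous h₁) (hcont2 : Continuous h₂)
    (hpos1 : ∀ t, 0 < h₁ t) (hpos2 : ∀ t, 0 < h₂ t)
    {S : Set ℝ} (hS : Dense S)
    (hsupp : ∀ s ∈ S, ∃ m : ℝ, (∀ z, h₂ s + (z - s) * m ≤ h₂ z) ∧
        (∀ z, h₁ s + (z - s) * (h₁ s / h₂ s * m) ≤ h₁ z)) :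
    ∀ a b : ℝ, h₁ a * h₂ b = h₁ b * h₂ a := by
  have key : ∀ t : ℝ, rder h₁ t = h₁ t / h₂ t * rder h₂ t := by
    intro t
    have hseq : ∀ n : ℕ, ∃ z, z ∈ S ∩ Ioo t (t + 1/(n+1)) := by
      intro n
      have hne : (Ioo t (t + 1/(n+1))).Nonempty := by
        refine nonempty_Ioo.2 ?_
        have : (0:ℝ) < 1/(n+1) := by positivity
        linarith
      obtain ⟨z, hz1, hz2⟩ := hS.exists_mem_open isOpen_Ioo hne
      exact ⟨z, hz1, hz2⟩
    choose s hsmem using hseq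
    have hsS : ∀ n, s n ∈ S := fun n => (hsmem n).1
    have hgt : ∀ n, t < s n := fun n => (hsmem n).2.1
    have hlt : ∀ n, s n < t + 1/(n+1) := fun n => (hsmem n).2.2
    have hst : Tendsto s atTop (𝓝 t) := by
      rw [Metric.tendsto_atTop]
      intro ε hε
      obtain ⟨N, hN⟩ := exists_nat_gt (1/ε)
      refine ⟨N, fun n hn => ?_⟩
      rw [Real.dist_eq, abs_lt]
      have h1 := hgt n
      have h2 := hlt n
      have hNn : (1:ℝ)/(n+1) < ε := by
        rw [div_lt_iff₀ (by positivity)]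
        rw [div_lt_iff₀ hε] at hN
        have : (N:ℝ) ≤ n := Nat.cast_le.2 hn
        nlinarith
      constructor <;> linarith
    choose m hm1 hm2 using fun n => hsupp (s n) (hsS n)
    have l2 : Tendsto m atTop (𝓝 (rder h₂ t)) :=
      seq_slope_lim hc2 hcont2 hgt hst hm1
    have l1 : Tendsto (fun n => h₁ (s n) / h₂ (s n) * m n) atTop (𝓝 (rder h₁ t)) :=
      seq_slope_lim hc1 hcont1 hgt hst hm2
    have l1' : Tendsto (fun n => h₁ (s n) / h₂ (s n) * m n) atTop
        (𝓝 (h₁ t / h₂ t * rder h₂ t)) := by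
      apply Tendsto.mul _ l2
      apply Tendsto.div
      · exact hcont1.continuousAt.tendsto.comp hst
      · exact hcont2.continuousAt.tendsto.comp hst
      · exact (hpos2 t).ne'
    exact tendsto_nhds_unique l1 l1'
  have hphi : ∀ t : ℝ, HasDerivWithinAt (fun u => Real.log (h₁ u) - Real.log (h₂ u))
      0 (Ici t) t := by
    intro t
    have d1 : HasDerivWithinAt h₁ (rder h₁ t) (Ici t) t := convex_hasDerivWithinAt hc1 t
    have d2 : HasDerivWithinAt h₂ (rder h₂ t) (Ici t) t := convex_hasDerivWithinAt hc2 t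
    have l1 : HasDerivWithinAt (fun u => Real.log (h₁ u)) ((h₁ t)⁻¹ * rder h₁ t) (Ici t) t :=
      (Real.hasDerivAt_log (hpos1 t).ne').comp_hasDerivWithinAt t d1
    have l2 : HasDerivWithinAt (fun u => Real.log (h₂ u)) ((h₂ t)⁻¹ * rder h₂ t) (Ici t) t :=
      (Real.hasDerivAt_log (hpos2 t).ne').comp_hasDerivWithinAt t d2
    have := l1.sub l2
    refine this.congr_deriv ?_
    rw [key t]
    have e1 : h₁ t ≠ 0 := (hpos1 t).ne'
    have e2 : h₂ t ≠ 0 := (hpos2 t).ne'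
    field_simp
    ring
  have hconst : ∀ a b : ℝ, a ≤ b →
      Real.log (h₁ b) - Real.log (h₂ b) = Real.log (h₁ a) - Real.log (h₂ a) := by
    intro a b hab
    have hcont' : ContinuousOn (fun u => Real.log (h₁ u) - Real.log (h₂ u)) (Icc a b) := by
      apply ContinuousOn.sub
      · exact (Real.continuousOn_log.comp hcont1.continuousOn
          (fun u _ => (hpos1 u).ne'))
      · exact (Real.continuousOn_log.comp hcont2.continuousOn
          (fun u _ => (hpos2 u).ne'))
    exact constant_of_has_deriv_right_zero hcont' (fun x _ => hphi x) b (by simp [hab])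
  have hfrac : ∀ a b : ℝ, h₁ a / h₂ a = h₁ b / h₂ b := by
    have base : ∀ a b : ℝ, a ≤ b → h₁ a / h₂ a = h₁ b / h₂ b := by
      intro a b hab
      have := hconst a b hab
      have e1 : Real.log (h₁ a / h₂ a) = Real.log (h₁ b / h₂ b) := by
        rw [Real.log_div (hpos1 a).ne' (hpos2 a).ne',
          Real.log_div (hpos1 b).ne' (hpos2 b).ne']
        linarith
      have p1 : (0:ℝ) < h₁ a / h₂ a := div_pos (hpos1 a) (hpos2 a)
      have p2 : (0:ℝ) < h₁ b / h₂ b := div_pos (hpos1 b) (hpos2 b)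
      have := congrArg Real.exp e1
      rwa [Real.exp_log p1, Real.exp_log p2] at this
    intro a b
    rcases le_total a b with hab | hab
    · exact base a b hab
    · exact (base b a hab).symm
  intro a b
  have := hfrac a b
  rw [div_eq_div_iff (hpos2 a).ne' (hpos2 b).ne'] at this
  linarith

end seqlim
section baire
variable {X : Type*} [NormedAddCommGroup X] [NormedSpace ℝ X] [CompleteSpace X]

lemma dense_of_rat_intervals {s : Set ℝ}
    (h : ∀ p q : ℚ, (p:ℝ) < q → ∃ t : ℝ, (p:ℝ) < t ∧ t < (q:ℝ) ∧ t ∈ s) : Dense s := by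
  rw [dense_iff_inter_open]
  intro U hU ⟨x, hx⟩
  obtain ⟨ε, hε, hball⟩ := Metric.isOpen_iff.1 hU x hx
  obtain ⟨p, hp1, hp2⟩ := exists_rat_btwn (show x - ε < x by linarith)
  obtain ⟨q, hq1, hq2⟩ := exists_rat_btwn (show x < x + ε by linarith)
  obtain ⟨t, ht1, ht2, ht3⟩ := h p q (by linarith)
  refine ⟨t, hball ?_, ht3⟩
  rw [Metric.mem_ball, Real.dist_eq, abs_lt]
  constructor <;> linarith

lemma baire_line {D : Set X} (hD : Dense D) (hG : IsGδ D) (v : X) :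
    Dense {u : X | Dense {t : ℝ | u + t • v ∈ D}} := by
  obtain ⟨f, hfo, hfeq⟩ := isGδ_iff_eq_iInter_nat.1 hG
  have hfd : ∀ n, Dense (f n) := fun n => hD.mono (by rw [hfeq]; exact iInter_subset f n)
  set W : ℕ × ℚ × ℚ → Set X := fun i =>
    {u | (i.2.1 : ℝ) < (i.2.2 : ℝ) →
      ∃ t : ℝ, (i.2.1:ℝ) < t ∧ t < (i.2.2:ℝ) ∧ u + t • v ∈ f i.1} with hW
  have hWo : ∀ i, IsOpen (W i) := by
    rintro ⟨n, p, q⟩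
    by_cases hpq : (p:ℝ) < q
    · have e : W (n,p,q) = ⋃ t ∈ Ioo (p:ℝ) (q:ℝ), (fun u => u + t • v) ⁻¹' (f n) := by
        ext u
        simp only [hW, mem_setOf_eq, mem_iUnion, mem_preimage, mem_Ioo]
        constructor
        · intro h
          obtain ⟨t, h1, h2, h3⟩ := h hpq
          exact ⟨t, ⟨h1, h2⟩, h3⟩
        · rintro ⟨t, ⟨h1, h2⟩, h3⟩ _
          exact ⟨t, h1, h2, h3⟩
      rw [e]
      apply isOpen_biUnion
      intro t _
      exact (hfo n).preimage (by continuity)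
    · have e : W (n,p,q) = univ := by
        ext u
        simp only [hW, mem_setOf_eq, mem_univ, iff_true]
        intro h
        exact absurd h hpq
      rw [e]
      exact isOpen_univ
  have hWd : ∀ i, Dense (W i) := by
    rintro ⟨n, p, q⟩
    by_cases hpq : (p:ℝ) < q
    · rw [Metric.dense_iff]
      intro u₀ ε hε
      set t₀ : ℝ := ((p:ℝ) + q)/2
      have ht₀ : (p:ℝ) < t₀ ∧ t₀ < (q:ℝ) := by constructor <;> (simp only [t₀]; linarith)
      obtain ⟨z, hz1, hz2⟩ := Metric.dense_iff.1 (hfd n) (u₀ + t₀ • v) ε hε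
      refine ⟨z - t₀ • v, ?_, ?_⟩
      · rw [Metric.mem_ball] at hz1 ⊢
        have : dist (z - t₀ • v) u₀ = dist z (u₀ + t₀ • v) := by
          rw [dist_eq_norm, dist_eq_norm]
          congr 1
          abel
        rwa [this]
      · intro _
        refine ⟨t₀, ht₀.1, ht₀.2, ?_⟩
        have : z - t₀ • v + t₀ • v = z := by abel
        rwa [this]
    · intro u
      have : u ∈ W (n,p,q) := fun h => absurd h hpq
      exact subset_closure this
  have hint : Dense (⋂ i, W i) := dense_iInter_of_isOpen hWo hWd
  apply hint.mono
  intro u hu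
  simp only [mem_iInter] at hu
  show Dense {t : ℝ | u + t • v ∈ D}
  have e : {t : ℝ | u + t • v ∈ D} = ⋂ n, {t : ℝ | u + t • v ∈ f n} := by
    rw [hfeq]; ext t; simp
  rw [e]
  apply dense_iInter_of_isOpen
  · intro n
    exact (hfo n).preimage (by continuity)
  · intro n
    apply dense_of_rat_intervals
    intro p q hpq
    obtain ⟨t, h1, h2, h3⟩ := hu (n, p, q) hpq
    exact ⟨t, h1, h2, h3⟩

end baire
section smooth2
variable {X : Type*} [NormedAddCommGroup X] [NormedSpace ℝ X]

lemma supp_support_line {x : X} {F : StrongDual ℝ X} (hF : F ∈ SuppFunc x) (v : X)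
    (t : ℝ) : ‖x‖ + t * F v ≤ ‖x + t • v‖ := by
  have h1 : F (x + t • v) ≤ ‖x + t • v‖ := supp_le hF
  have e : F (x + t • v) = ‖x‖ + t * F v := by
    rw [map_add, map_smul, hF.2, smul_eq_mul]
  linarith

lemma smooth_orth_iff {x : X} (hx : SmoothPt x) {F : StrongDual ℝ X}
    (hF : F ∈ SuppFunc x) (v : X) : BJOrth x v ↔ F v = 0 := by
  constructor
  · intro h
    exact smooth_subgrad hx hF (v := v) (m := 0) (fun t => by
      have := h t
      simpa using this)
  · intro h0 t
    have := supp_support_line hF v t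
    rw [h0] at this
    linarith

lemma norm_line_convex (w z : X) : ConvexOn ℝ univ (fun t : ℝ => ‖w + t • z‖) := by
  refine ⟨convex_univ, ?_⟩
  intro a _ b _ p q hp hq hpq
  simp only [smul_eq_mul]
  have e : p • (w + a • z) + q • (w + b • z) = (p+q) • w + (p*a + q*b) • z := by
    simp only [smul_add, smul_smul, add_smul]
    abel
  rw [hpq, one_smul] at e
  calc ‖w + (p*a+q*b) • z‖ = ‖p • (w + a • z) + q • (w + b • z)‖ := by rw [e]
    _ ≤ ‖p • (w + a • z)‖ + ‖q • (w + b • z)‖ := norm_add_le _ _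
    _ = p * ‖w + a • z‖ + q * ‖w + b • z‖ := by
        rw [norm_smul, norm_smul, Real.norm_eq_abs, Real.norm_eq_abs,
          abs_of_nonneg hp, abs_of_nonneg hq]

end smooth2
theorem stmt_8 {X Y : Type*} [NormedAddCommGroup X] [NormedSpace ℝ X] [CompleteSpace X]
    [NormedAddCommGroup Y] [NormedSpace ℝ Y] [CompleteSpace Y]
    (T : X →L[ℝ] Y) (hbij : Function.Bijective T)
    (hdX : Dense {x : X | SmoothPt x}) (hgX : IsGδ {x : X | SmoothPt x})
    (hdY : Dense {y : Y | SmoothPt y}) (hgY : IsGδ {y : Y | SmoothPt y})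
    (hpres : ∀ x ∈ {x : X | SmoothPt x} ∩ T ⁻¹' {y : Y | SmoothPt y}, PreservesBJAt T x) :
    ∃ lam : ℝ, 0 ≤ lam ∧ ∀ x : X, ‖T x‖ = lam * ‖x‖ := by
  classical
  have hinj : Function.Injective T := hbij.1
  have hker : LinearMap.ker (T : X →ₗ[ℝ] Y) = ⊥ := LinearMap.ker_eq_bot (f := (T : X →ₗ[ℝ] Y)).2 hbij.1
  have hrange : LinearMap.range (T : X →ₗ[ℝ] Y) = ⊤ := LinearMap.range_eq_top (f := (T : X →ₗ[ℝ] Y)).2 hbij.2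
  set E := ContinuousLinearEquiv.ofBijective T hker hrange with hE
  have hTE : ∀ x : X, E x = T x := fun x => rfl
  set D := {x : X | SmoothPt x} ∩ T ⁻¹' {y : Y | SmoothPt y} with hDdef
  have hpred : Dense (T ⁻¹' {y : Y | SmoothPt y}) := by
    have : T ⁻¹' {y : Y | SmoothPt y} = E.toHomeomorph ⁻¹' {y : Y | SmoothPt y} := by
      ext w
      simp only [mem_preimage, ContinuousLinearEquiv.coe_toHomeomorph, hTE]
    rw [this]
    exact hdY.preimage E.toHomeomorph.isOpenMap
  have hpreG : IsGδ (T ⁻¹' {y : Y | SmoothPt y}) := by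
    obtain ⟨f, hfo, hfeq⟩ := isGδ_iff_eq_iInter_nat.1 hgY
    rw [hfeq, preimage_iInter]
    exact IsGδ.iInter_of_isOpen (fun n => (hfo n).preimage T.continuous)
  have hDd : Dense D := Dense.inter_of_Gδ hgX hpreG hdX hpred
  have hDG : IsGδ D := hgX.inter hpreG
  have hpair : ∀ p ∈ D, ∀ w : X, ∃ m : ℝ,
      (∀ z : ℝ, ‖p‖ + z * m ≤ ‖p + z • w‖) ∧
      (∀ z : ℝ, ‖T p‖ + z * (‖T p‖ / ‖p‖ * m) ≤ ‖T p + z • T w‖) := by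
    rintro p ⟨hps', hpt'⟩ w
    have hps : SmoothPt p := hps'
    have hpt : SmoothPt (T p) := hpt'
    obtain ⟨F, hF, _⟩ := hps.2
    obtain ⟨G, hG, _⟩ := hpt.2
    have hpn : ‖p‖ ≠ 0 := norm_ne_zero_iff.2 hps.1
    have hker0 : ∀ y : X, F y = 0 → G (T y) = 0 := by
      intro y hy
      have horth : BJOrth p y := (smooth_orth_iff hps hF y).2 hy
      have h2 := hpres p ⟨hps', hpt'⟩ y horth
      exact (smooth_orth_iff hpt hG (T y)).1 h2
    have hGT : G (T w) = ‖T p‖ / ‖p‖ * F w := by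
      have hFu : F (w - (F w / ‖p‖) • p) = 0 := by
        rw [map_sub, map_smul, hF.2, smul_eq_mul]
        field_simp
        ring
      have h0 := hker0 _ hFu
      rw [map_sub, map_smul, map_sub, map_smul, hG.2, smul_eq_mul] at h0
      have h1 : G (T w) = F w / ‖p‖ * ‖T p‖ := by linarith
      rw [h1]
      ring
    refine ⟨F w, fun z => supp_support_line hF w z, fun z => ?_⟩
    have h1 : G (T p + z • T w) ≤ ‖T p + z • T w‖ := supp_le hG
    have e : G (T p + z • T w) = ‖T p‖ + z * (‖T p‖ / ‖p‖ * F w) := by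
      rw [map_add, map_smul, hG.2, hGT, smul_eq_mul]
    linarith
  obtain ⟨x₀, hx₀⟩ := hDd.nonempty
  have hx₀0 : x₀ ≠ 0 := hx₀.1.1
  have hx₀n : (0:ℝ) < ‖x₀‖ := norm_pos_iff.2 hx₀0
  refine ⟨‖T x₀‖ / ‖x₀‖, div_nonneg (norm_nonneg _) (norm_nonneg _), ?_⟩
  have hconst : ∀ x ∈ D, ‖T x‖ * ‖x₀‖ = ‖T x₀‖ * ‖x‖ := by
    intro x hx
    by_cases hdep : ∃ μ : ℝ, x = μ • x₀
    · obtain ⟨μ, rfl⟩ := hdep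
      rw [map_smul, norm_smul, norm_smul, Real.norm_eq_abs]
      ring
    · set v := x - x₀ with hv
      have hx₀span : x₀ ∉ ((Submodule.span ℝ {v} : Submodule ℝ X) : Set X) := by
        intro hmem
        obtain ⟨a, ha⟩ := Submodule.mem_span_singleton.1 hmem
        apply hdep
        by_cases ha0 : a = 0
        · rw [ha0, zero_smul] at ha
          exact absurd ha.symm hx₀0
        · refine ⟨(1+a)/a, ?_⟩
          have h1 : a • (x - x₀) = x₀ := ha
          have h2 : a • x = (1+a) • x₀ := by
            rw [smul_sub] at h1
            have h3 := eq_add_of_sub_eq h1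
            rw [add_smul, one_smul]
            exact h3
          calc x = a⁻¹ • (a • x) := by rw [smul_smul, inv_mul_cancel₀ ha0, one_smul]
            _ = a⁻¹ • ((1+a) • x₀) := by rw [h2]
            _ = ((1+a)/a) • x₀ := by rw [smul_smul, div_eq_inv_mul]
      have hclosed : IsClosed ((Submodule.span ℝ {v} : Submodule ℝ X) : Set X) :=
        Submodule.closed_of_finiteDimensional _
      obtain ⟨δ, hδpos, hδball⟩ := Metric.isOpen_iff.1 hclosed.isOpen_compl x₀ hx₀span
      have hGd : Dense {u : X | Dense {t : ℝ | u + t • v ∈ D}} := baire_line hDd hDG v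
      have hchoice : ∀ n : ℕ, ∃ u : X, u ∈ ball x₀ (min δ (1/(n+1))) ∧
          Dense {t : ℝ | u + t • v ∈ D} := by
        intro n
        obtain ⟨u, hu⟩ := Metric.dense_iff.1 hGd x₀ (min δ (1/(n+1)))
          (lt_min hδpos (by positivity))
        exact ⟨u, hu.1, hu.2⟩
      choose u hu1 hu2 using hchoice
      have hun : Tendsto u atTop (𝓝 x₀) := by
        rw [Metric.tendsto_atTop]
        intro ε hε
        obtain ⟨N, hN⟩ := exists_nat_gt (1/ε)
        refine ⟨N, fun n hn => ?_⟩
        have h1 : dist (u n) x₀ < min δ (1/(n+1)) := mem_ball.1 (hu1 n)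
        have h2 : (1:ℝ)/(n+1) < ε := by
          rw [div_lt_iff₀ (by positivity)]
          rw [div_lt_iff₀ hε] at hN
          have : (N:ℝ) ≤ n := Nat.cast_le.2 hn
          nlinarith
        calc dist (u n) x₀ < min δ (1/(n+1)) := h1
          _ ≤ 1/(n+1) := min_le_right _ _
          _ < ε := h2
      have hline : ∀ n, ‖T (u n)‖ * ‖u n + v‖ = ‖T (u n + v)‖ * ‖u n‖ := by
        intro n
        have hnotspan : ∀ t : ℝ, u n + t • v ≠ 0 := by
          intro t h0
          have h1 : u n = -(t • v) := eq_neg_of_add_eq_zero_left h0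
          have hin : u n ∈ ((Submodule.span ℝ {v} : Submodule ℝ X) : Set X) := by
            rw [h1]
            exact Submodule.neg_mem _
              (Submodule.smul_mem _ _ (Submodule.mem_span_singleton_self v))
          have hb : u n ∈ ball x₀ δ :=
            mem_ball.2 (lt_of_lt_of_le (mem_ball.1 (hu1 n)) (min_le_left _ _))
          exact hδball hb hin
        have hTline : ∀ t : ℝ, T (u n + t • v) = T (u n) + t • T v := by
          intro t
          rw [map_add, map_smul]
        have hc2 := norm_line_convex (u n) v
        have hc1 := norm_line_convex (T (u n)) (T v)
        have hcont2 : Continuous (fun t : ℝ => ‖u n + t • v‖) :=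
          (continuous_const.add (continuous_id.smul continuous_const)).norm
        have hcont1 : Continuous (fun t : ℝ => ‖T (u n) + t • T v‖) :=
          (continuous_const.add (continuous_id.smul continuous_const)).norm
        have hpos2 : ∀ t : ℝ, 0 < ‖u n + t • v‖ := fun t => norm_pos_iff.2 (hnotspan t)
        have hpos1 : ∀ t : ℝ, 0 < ‖T (u n) + t • T v‖ := by
          intro t
          rw [← hTline t]
          refine norm_pos_iff.2 (fun hz => hnotspan t ?_)
          apply hinj
          rw [hz, map_zero]
        have hsupp : ∀ s ∈ {t : ℝ | u n + t • v ∈ D}, ∃ m : ℝ,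
            (∀ z, ‖u n + s • v‖ + (z - s) * m ≤ ‖u n + z • v‖) ∧
            (∀ z, ‖T (u n) + s • T v‖ + (z - s) *
              (‖T (u n) + s • T v‖ / ‖u n + s • v‖ * m) ≤ ‖T (u n) + z • T v‖) := by
          intro s hs
          obtain ⟨m, hm1, hm2⟩ := hpair _ hs v
          have eX : ∀ z : ℝ, (u n + s • v) + (z - s) • v = u n + z • v := by
            intro z
            rw [add_assoc, ← add_smul]
            congr 2
            ring
          have eY : ∀ z : ℝ, T (u n + s • v) + (z - s) • T v = T (u n) + z • T v := by
            intro z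
            rw [hTline s, add_assoc, ← add_smul]
            congr 2
            ring
          refine ⟨m, fun z => ?_, fun z => ?_⟩
          · have := hm1 (z - s)
            rwa [eX z] at this
          · have := hm2 (z - s)
            rw [eY z] at this
            rwa [hTline s] at this
        have hrig := line_rigid hc1 hc2 hcont1 hcont2 hpos1 hpos2 (hu2 n) hsupp 0 1
        rw [← hTline 1, ← hTline 0] at hrig
        simp only [zero_smul, add_zero, one_smul] at hrig
        linarith
      have c1 : Continuous (fun w : X => ‖T w‖ * ‖w + v‖) :=
        (T.continuous.norm).mul ((continuous_id.add continuous_const).norm)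
      have c2 : Continuous (fun w : X => ‖T (w + v)‖ * ‖w‖) :=
        ((T.continuous.comp (continuous_id.add continuous_const)).norm).mul continuous_norm
      have lhs_lim : Tendsto (fun n => ‖T (u n)‖ * ‖u n + v‖) atTop
          (𝓝 (‖T x₀‖ * ‖x₀ + v‖)) := (c1.continuousAt).tendsto.comp hun
      have rhs_lim : Tendsto (fun n => ‖T (u n + v)‖ * ‖u n‖) atTop
          (𝓝 (‖T (x₀ + v)‖ * ‖x₀‖)) := (c2.continuousAt).tendsto.comp hun
      have hkey : ‖T (x₀ + v)‖ * ‖x₀‖ = ‖T x₀‖ * ‖x₀ + v‖ :=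
        tendsto_nhds_unique (rhs_lim.congr (fun n => (hline n).symm)) lhs_lim
      have hx₀v : x₀ + v = x := by rw [hv]; abel
      rw [hx₀v] at hkey
      linarith
  have hfun : (fun x : X => ‖T x‖) = fun x : X => ‖T x₀‖ / ‖x₀‖ * ‖x‖ := by
    apply Continuous.ext_on hDd
    · exact T.continuous.norm
    · exact continuous_const.mul continuous_norm
    · intro x hx
      have h := hconst x hx
      show ‖T x‖ = ‖T x₀‖ / ‖x₀‖ * ‖x‖
      rw [div_mul_eq_mul_div, eq_div_iff hx₀n.ne']
      linarith
  intro x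
  exact congrFun hfun x
end

section
/- Let X be a real Banach space in which the set of smooth points Sm(X) is a dense G_δ subset. If a bounded linear operator T : X → X preserves Birkhoff-James orthogonality at each smooth point of X, then T is a scalar multiple of an isometry: there exists λ ≥ 0 with ‖Tx‖ = λ‖x‖ for all x. -/
set_option maxHeartbeats 1000000

open Metric Filter Set Topology

lemma exists_supp_vanishing {X : Type*} [NormedAddCommGroup X] [NormedSpace ℝ X]
    (u : X) (hu : u ≠ 0) (S : Submodule ℝ X)
    (h : ∀ w ∈ S, ‖u‖ ≤ ‖u + w‖) :
    ∃ g : StrongDual ℝ X, ‖g‖ = 1 ∧ g u = ‖u‖ ∧ ∀ w ∈ S, g w = 0 := by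
  set S' := S.topologicalClosure with hS'
  have hclosed : IsClosed (S' : Set X) := S.isClosed_topologicalClosure
  have h' : ∀ w ∈ S', ‖u‖ ≤ ‖u + w‖ := by
    intro w hw
    have hsub : (S : Set X) ⊆ {w : X | ‖u‖ ≤ ‖u + w‖} := fun w hw => h w hw
    have hcl : IsClosed {w : X | ‖u‖ ≤ ‖u + w‖} :=
      isClosed_le continuous_const (continuous_const.add continuous_id).norm
    have : closure (S : Set X) ⊆ {w : X | ‖u‖ ≤ ‖u + w‖} := hcl.closure_subset_iff.mpr hsub
    exact this hw
  haveI := hclosed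
  -- quotient map as a continuous linear map
  let π : X →L[ℝ] (X ⧸ S') :=
    LinearMap.mkContinuous S'.mkQ 1 (fun x => by
      simpa using Submodule.Quotient.norm_mk_le S' x)
  have hπle : ∀ x : X, ‖π x‖ ≤ ‖x‖ := fun x => by
    simpa [π] using Submodule.Quotient.norm_mk_le S' x
  have hπu : ‖π u‖ = ‖u‖ := by
    refine le_antisymm (hπle u) ?_
    by_contra hlt
    push_neg at hlt
    obtain ⟨m, hm, hmlt⟩ := Submodule.Quotient.norm_mk_lt (π u : X ⧸ S')
      (sub_pos.mpr hlt)
    have hmem : m - u ∈ S' := by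
      have : (Submodule.Quotient.mk m : X ⧸ S') = Submodule.Quotient.mk u := hm
      rw [Submodule.Quotient.eq'] at this
      have h2 := S'.neg_mem this
      simpa [neg_add, sub_eq_add_neg, add_comm] using h2
    have := h' (m - u) hmem
    rw [add_sub_cancel] at this
    linarith
  have hπu0 : π u ≠ 0 := by
    intro h0
    apply hu
    have := hπu
    rw [h0, norm_zero] at this
    exact norm_eq_zero.mp this.symm
  obtain ⟨G, hG1, hGu⟩ := exists_dual_vector ℝ (π u) (norm_ne_zero_iff.mpr hπu0)
  refine ⟨G.comp π, ?_, ?_, ?_⟩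
  · have hle : ‖G.comp π‖ ≤ 1 := by
      refine ContinuousLinearMap.opNorm_le_bound _ zero_le_one (fun x => ?_)
      calc ‖G (π x)‖ ≤ ‖G‖ * ‖π x‖ := G.le_opNorm _
        _ ≤ 1 * ‖x‖ := by rw [hG1, one_mul]; simpa using hπle x
    have hge : (1:ℝ) ≤ ‖G.comp π‖ := by
      have hval : (G.comp π) u = ‖u‖ := by
        simp only [ContinuousLinearMap.comp_apply]
        rw [hGu, hπu]
        simp
      have := (G.comp π).le_opNorm u
      rw [hval] at this
      have hun : 0 < ‖u‖ := norm_pos_iff.mpr hu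
      calc (1:ℝ) = ‖u‖/‖u‖ := by field_simp
        _ ≤ ‖G.comp π‖ := by
          rw [div_le_iff₀ hun]
          simpa [Real.norm_eq_abs, abs_of_nonneg (norm_nonneg u)] using this
    linarith
  · simp only [ContinuousLinearMap.comp_apply]
    rw [hGu, hπu]
    simp
  · intro w hw
    have : π w = 0 := by
      have : w ∈ S' := S.le_topologicalClosure hw
      simpa [π] using (Submodule.Quotient.mk_eq_zero S').mpr this
    simp [ContinuousLinearMap.comp_apply, this]

lemma master {X : Type*} [NormedAddCommGroup X] [NormedSpace ℝ X]
    (T : X →L[ℝ] X) (u : X) (hu : SmoothPt u) (hp : PreservesBJAt T u) :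
    ∃ f : StrongDual ℝ X, ‖f‖ = 1 ∧ f u = ‖u‖ ∧
      ∀ y : X, ‖T u‖ * |f y| ≤ ‖u‖ * ‖T y‖ := by
  obtain ⟨hu0, f, ⟨hf1, hfu⟩, -⟩ := hu
  have hun : (0:ℝ) < ‖u‖ := norm_pos_iff.mpr hu0
  refine ⟨f, hf1, hfu, ?_⟩
  by_cases hTu : T u = 0
  · intro y
    rw [hTu, norm_zero, zero_mul]
    positivity
  -- the image of ker f under T
  set S : Submodule ℝ X := Submodule.map (T : X →ₗ[ℝ] X) (LinearMap.ker (f : X →ₗ[ℝ] ℝ)) with hS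
  have hBJ : ∀ v : X, f v = 0 → BJOrth u v := by
    intro v hv lam
    have : f (u + lam • v) = ‖u‖ := by
      simp [map_add, map_smul, hv, hfu]
    calc ‖u‖ = f (u + lam • v) := this.symm
      _ ≤ |f (u + lam • v)| := le_abs_self _
      _ ≤ ‖f‖ * ‖u + lam • v‖ := f.le_opNorm _
      _ = ‖u + lam • v‖ := by rw [hf1, one_mul]
  have horth : ∀ w ∈ S, ‖T u‖ ≤ ‖T u + w‖ := by
    intro w hw
    obtain ⟨v, hv, rfl⟩ := Submodule.mem_map.mp hw
    have hbj := hp v (hBJ v (LinearMap.mem_ker.mp hv))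
    have := hbj 1
    simpa using this
  obtain ⟨g, hg1, hgTu, hgS⟩ := exists_supp_vanishing (T u) hTu S horth
  -- g ∘ T = (‖Tu‖/‖u‖) f
  have hker : ∀ v : X, f v = 0 → g (T v) = 0 := by
    intro v hv
    exact hgS (T v) (Submodule.mem_map.mpr ⟨v, LinearMap.mem_ker.mpr hv, rfl⟩)
  have hform : ∀ y : X, g (T y) * ‖u‖ = ‖T u‖ * f y := by
    intro y
    have hy : f (y - (f y / ‖u‖) • u) = 0 := by
      simp [map_sub, map_smul, hfu]
      field_simp
      ring
    have h0 := hker _ hy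
    rw [map_sub, map_smul] at h0
    have : g (T y) = (f y / ‖u‖) * g (T u) := by
      have : g (T y) - (f y / ‖u‖) * g (T u) = 0 := by
        simpa [smul_eq_mul] using h0
      linarith
    rw [this, hgTu]
    field_simp
  intro y
  have := hform y
  have hgle : |g (T y)| ≤ ‖T y‖ := by
    have := g.le_opNorm (T y)
    rwa [hg1, one_mul, Real.norm_eq_abs] at this
  calc ‖T u‖ * |f y| = |‖T u‖ * f y| := by
        rw [abs_mul, abs_of_nonneg (norm_nonneg _)]
    _ = |g (T y) * ‖u‖| := by rw [this]
    _ = |g (T y)| * ‖u‖ := by rw [abs_mul, abs_of_nonneg (norm_nonneg _)]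
    _ ≤ ‖T y‖ * ‖u‖ := by
        exact mul_le_mul_of_nonneg_right hgle (norm_nonneg _)
    _ = ‖u‖ * ‖T y‖ := mul_comm _ _

lemma key {X : Type*} [NormedAddCommGroup X] [NormedSpace ℝ X]
    (T : X →L[ℝ] X) (hd : Dense {x : X | SmoothPt x})
    (hpres : ∀ x : X, SmoothPt x → PreservesBJAt T x)
    (x v : X) (t : ℝ) (hz : x + t • v ≠ 0) :
    ∃ a : ℝ, |a| ≤ ‖v‖ ∧ ∀ s : ℝ,
      ‖x + t • v‖ + (s - t) * a ≤ ‖x + s • v‖ ∧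
      ‖T (x + t • v)‖ * (‖x + t • v‖ + (s - t) * a) ≤ ‖x + t • v‖ * ‖T (x + s • v)‖ := by
  set z := x + t • v with hzdef
  -- a sequence of smooth points converging to z
  obtain ⟨u, humem, hulim⟩ := mem_closure_iff_seq_limit.mp (hd z)
  choose f hf1 hfu hfle using fun n => master T (u n) (humem n) (hpres _ (humem n))
  -- the coefficients
  set a : ℕ → ℝ := fun n => f n v with ha
  have habd : ∀ n, a n ∈ Icc (-‖v‖) ‖v‖ := by
    intro n
    have := (f n).le_opNorm v
    rw [hf1, one_mul, Real.norm_eq_abs] at this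
    exact abs_le.mp this
  obtain ⟨A, hAmem, φ, hφ, hAlim⟩ := isCompact_Icc.tendsto_subseq habd
  have hAabs : |A| ≤ ‖v‖ := abs_le.mpr ⟨hAmem.1, hAmem.2⟩
  -- f n z → ‖z‖
  have hfz : Tendsto (fun n => f n z) atTop (𝓝 ‖z‖) := by
    have hdiff : Tendsto (fun n => f n z - ‖u n‖) atTop (𝓝 0) := by
      refine squeeze_zero_norm (a := fun n => ‖z - u n‖) (fun n => ?_) ?_
      · 
        have : f n z - ‖u n‖ = f n (z - u n) := by
          rw [map_sub, hfu n]
        rw [this, Real.norm_eq_abs]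
        have := (f n).le_opNorm (z - u n)
        rwa [hf1, one_mul, Real.norm_eq_abs] at this
      · have h2 : Tendsto (fun n => z - u n) atTop (𝓝 0) := by
          simpa using (tendsto_const_nhds (x := z)).sub hulim
        simpa using h2.norm
    have hnu : Tendsto (fun n => ‖u n‖) atTop (𝓝 ‖z‖) := hulim.norm
    have := hdiff.add hnu
    simpa using this
  have hTz : Tendsto (fun n => ‖T (u n)‖) atTop (𝓝 ‖T z‖) :=
    ((T.continuous.tendsto z).comp hulim).norm
  have hnu : Tendsto (fun n => ‖u n‖) atTop (𝓝 ‖z‖) := hulim.norm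
  -- pass to the subsequence
  have hfzφ : Tendsto (fun n => f (φ n) z) atTop (𝓝 ‖z‖) := hfz.comp hφ.tendsto_atTop
  have hTzφ : Tendsto (fun n => ‖T (u (φ n))‖) atTop (𝓝 ‖T z‖) := hTz.comp hφ.tendsto_atTop
  have hnuφ : Tendsto (fun n => ‖u (φ n)‖) atTop (𝓝 ‖z‖) := hnu.comp hφ.tendsto_atTop
  refine ⟨A, hAabs, fun s => ?_⟩
  have hxs : x + s • v = z + (s - t) • v := by
    rw [hzdef]
    rw [add_assoc, ← add_smul]
    ring_nf
  have hfval : ∀ n, f (φ n) (x + s • v) = f (φ n) z + (s - t) * a (φ n) := by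
    intro n
    rw [hxs, map_add, map_smul, smul_eq_mul]
  have hflim : Tendsto (fun n => f (φ n) (x + s • v)) atTop (𝓝 (‖z‖ + (s - t) * A)) := by
    simp only [hfval]
    exact hfzφ.add (tendsto_const_nhds.mul hAlim)
  constructor
  · -- first inequality
    refine le_of_tendsto hflim (Eventually.of_forall fun n => ?_)
    have := (f (φ n)).le_opNorm (x + s • v)
    rw [hf1, one_mul] at this
    calc f (φ n) (x + s • v) ≤ |f (φ n) (x + s • v)| := le_abs_self _
      _ ≤ ‖x + s • v‖ := by rwa [Real.norm_eq_abs] at this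
  · -- second inequality
    have hineq : ∀ n, ‖T (u (φ n))‖ * |f (φ n) (x + s • v)| ≤ ‖u (φ n)‖ * ‖T (x + s • v)‖ :=
      fun n => hfle (φ n) (x + s • v)
    have hlhs : Tendsto (fun n => ‖T (u (φ n))‖ * |f (φ n) (x + s • v)|) atTop
        (𝓝 (‖T z‖ * |‖z‖ + (s - t) * A|)) := hTzφ.mul hflim.abs
    have hrhs : Tendsto (fun n => ‖u (φ n)‖ * ‖T (x + s • v)‖) atTop
        (𝓝 (‖z‖ * ‖T (x + s • v)‖)) := hnuφ.mul tendsto_const_nhds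
    have hlim := le_of_tendsto_of_tendsto' hlhs hrhs hineq
    calc ‖T z‖ * (‖z‖ + (s - t) * A) ≤ ‖T z‖ * |‖z‖ + (s - t) * A| :=
          mul_le_mul_of_nonneg_left (le_abs_self _) (norm_nonneg _)
      _ ≤ ‖z‖ * ‖T (x + s • v)‖ := hlim

lemma ratio_eq (n G : ℝ → ℝ) (m K : ℝ) (hm : 0 < m)
    (hn : ∀ t ∈ Icc (0:ℝ) 1, m ≤ n t)
    (hG : ∀ t ∈ Icc (0:ℝ) 1, 0 ≤ G t)
    (hkey : ∀ t ∈ Icc (0:ℝ) 1, ∃ a : ℝ, |a| ≤ K ∧ ∀ s ∈ Icc (0:ℝ) 1,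
      n t + (s - t) * a ≤ n s ∧ G t * (n t + (s - t) * a) ≤ n t * G s) :
    G 0 * n 1 = G 1 * n 0 := by
  choose! A hA1 hA2 using hkey
  have h0m : (0:ℝ) ∈ Icc (0:ℝ) 1 := ⟨le_refl 0, zero_le_one⟩
  have h1m : (1:ℝ) ∈ Icc (0:ℝ) 1 := ⟨zero_le_one, le_refl 1⟩
  have hK0 : 0 ≤ K := le_trans (abs_nonneg _) (hA1 0 h0m)
  set R : ℝ := max (G 0) (G 1) / m with hR
  have hmaxnn : 0 ≤ max (G 0) (G 1) := le_trans (hG 0 h0m) (le_max_left _ _)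
  have hR0 : 0 ≤ R := div_nonneg hmaxnn hm.le
  -- G is bounded by max (G 0) (G 1)
  have hGbd : ∀ t ∈ Icc (0:ℝ) 1, G t ≤ max (G 0) (G 1) := by
    intro t ht
    have hnt : 0 < n t := lt_of_lt_of_le hm (hn t ht)
    rcases le_or_gt 0 (A t) with hA | hA
    · have h2 := (hA2 t ht 1 h1m).2
      have hnonneg : 0 ≤ (1 - t) * A t := mul_nonneg (by linarith [ht.2]) hA
      have : G t * n t ≤ n t * G 1 := by nlinarith [mul_nonneg (hG t ht) hnonneg]
      have : G t ≤ G 1 := by nlinarith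
      exact le_trans this (le_max_right _ _)
    · have h2 := (hA2 t ht 0 h0m).2
      have hnonneg : 0 ≤ (0 - t) * A t := by nlinarith [ht.1, hA.le]
      have : G t * n t ≤ n t * G 0 := by nlinarith [mul_nonneg (hG t ht) hnonneg]
      have : G t ≤ G 0 := by nlinarith
      exact le_trans this (le_max_left _ _)
  have hGR : ∀ t ∈ Icc (0:ℝ) 1, G t ≤ R * n t := by
    intro t ht
    have h1 : G t ≤ max (G 0) (G 1) := hGbd t ht
    have h2 : max (G 0) (G 1) = R * m := by rw [hR]; field_simp
    have h3 : R * m ≤ R * n t := mul_le_mul_of_nonneg_left (hn t ht) hR0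
    linarith
  -- the two-sided step estimate
  have step : ∀ t ∈ Icc (0:ℝ) 1, ∀ s ∈ Icc (0:ℝ) 1, t ≤ s →
      A t ≤ A s ∧
      G t / n t - R / m * ((s - t) * (A s - A t)) ≤ G s / n s ∧
      G s / n s - R / m * ((s - t) * (A s - A t)) ≤ G t / n t := by
    intro t ht s hs hts
    have hnt : 0 < n t := lt_of_lt_of_le hm (hn t ht)
    have hns : 0 < n s := lt_of_lt_of_le hm (hn s hs)
    obtain ⟨h1, h2⟩ := hA2 t ht s hs
    obtain ⟨h3, h4⟩ := hA2 s hs t ht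
    rcases eq_or_lt_of_le hts with rfl | hlt
    · refine ⟨le_refl _, by simp, by simp⟩
    have hab : A t ≤ A s := by nlinarith
    have hδ : 0 ≤ (s - t) * (A s - A t) := mul_nonneg (by linarith) (by linarith)
    refine ⟨hab, ?_, ?_⟩
    · -- up direction: key1 : G t * n s * m ≤ G s * n t * m + R*δ*(n t * n s)
      have h3' : n s ≤ n t + (s - t) * A s := by nlinarith [h3]
      have q1 : G t * n s ≤ G t * (n t + (s - t) * A t) + G t * ((s - t) * (A s - A t)) := by
        have := mul_le_mul_of_nonneg_left h3' (hG t ht)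
        linarith [this]
      have p3 : G t * ((s - t) * (A s - A t)) ≤ R * n t * ((s - t) * (A s - A t)) :=
        mul_le_mul_of_nonneg_right (hGR t ht) hδ
      have q2 : G t * n s ≤ n t * G s + R * n t * ((s - t) * (A s - A t)) := by linarith
      have q3 : R * n t * ((s - t) * (A s - A t)) * m ≤ R * ((s - t) * (A s - A t)) * (n t * n s) := by
        have hnn : 0 ≤ R * n t * ((s - t) * (A s - A t)) := mul_nonneg (mul_nonneg hR0 hnt.le) hδ
        have := mul_le_mul_of_nonneg_left (hn s hs) hnn
        linarith [this]
      have key1 : G t * n s * m ≤ G s * n t * m + R * ((s - t) * (A s - A t)) * (n t * n s) := by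
        have := mul_le_mul_of_nonneg_right q2 hm.le
        linarith [this, q3]
      rw [← sub_nonneg]
      have expand : G s / n s - (G t / n t - R / m * ((s - t) * (A s - A t)))
          = (G s * n t * m + R * ((s - t) * (A s - A t)) * (n t * n s) - G t * n s * m)
            / (n t * n s * m) := by
        field_simp
        ring
      rw [expand]
      exact div_nonneg (by linarith) (by positivity)
    · -- down direction
      have h1' : n t ≤ n s - (s - t) * A t := by nlinarith [h1]
      have q1 : G s * n t ≤ G s * (n s + (t - s) * A s) + G s * ((s - t) * (A s - A t)) := by
        have := mul_le_mul_of_nonneg_left h1' (hG s hs)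
        linarith [this]
      have p3 : G s * ((s - t) * (A s - A t)) ≤ R * n s * ((s - t) * (A s - A t)) :=
        mul_le_mul_of_nonneg_right (hGR s hs) hδ
      have q2 : G s * n t ≤ n s * G t + R * n s * ((s - t) * (A s - A t)) := by linarith
      have q3 : R * n s * ((s - t) * (A s - A t)) * m ≤ R * ((s - t) * (A s - A t)) * (n t * n s) := by
        have hnn : 0 ≤ R * n s * ((s - t) * (A s - A t)) := mul_nonneg (mul_nonneg hR0 hns.le) hδ
        have := mul_le_mul_of_nonneg_left (hn t ht) hnn
        linarith [this]
      have key2 : G s * n t * m ≤ G t * n s * m + R * ((s - t) * (A s - A t)) * (n t * n s) := by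
        have := mul_le_mul_of_nonneg_right q2 hm.le
        linarith [this, q3]
      rw [← sub_nonneg]
      have expand : G t / n t - (G s / n s - R / m * ((s - t) * (A s - A t)))
          = (G t * n s * m + R * ((s - t) * (A s - A t)) * (n t * n s) - G s * n t * m)
            / (n t * n s * m) := by
        field_simp
        ring
      rw [expand]
      exact div_nonneg (by linarith) (by positivity)
  -- telescoping over a uniform partition
  have main : ∀ N : ℕ, 0 < N →
      |G 1 / n 1 - G 0 / n 0| ≤ R / m * ((1 / (N:ℝ)) * (2 * K)) := by
    intro N hN
    set p : ℕ → ℝ := fun i => (i : ℝ) / N with hp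
    have hNpos : (0:ℝ) < N := by exact_mod_cast hN
    have hpmem : ∀ i : ℕ, i ≤ N → p i ∈ Icc (0:ℝ) 1 := by
      intro i hi
      constructor
      · positivity
      · rw [hp]; rw [div_le_one hNpos]; exact_mod_cast hi
    have hpsucc : ∀ i : ℕ, p (i+1) - p i = 1 / N := by
      intro i
      rw [hp]
      push_cast
      field_simp
      ring
    have hstep : ∀ i : ℕ, i + 1 ≤ N →
        G (p i) / n (p i) - R / m * ((1 / (N:ℝ)) * (A (p (i+1)) - A (p i))) ≤ G (p (i+1)) / n (p (i+1)) ∧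
        G (p (i+1)) / n (p (i+1)) - R / m * ((1 / (N:ℝ)) * (A (p (i+1)) - A (p i))) ≤ G (p i) / n (p i) := by
      intro i hi
      have hle : p i ≤ p (i+1) := by
        have := hpsucc i
        have : (0:ℝ) < 1/N := by positivity
        linarith [hpsucc i]
      obtain ⟨-, s1, s2⟩ := step (p i) (hpmem i (by omega)) (p (i+1)) (hpmem (i+1) hi) hle
      rw [hpsucc i] at s1 s2
      exact ⟨s1, s2⟩
    have hmono : ∀ i : ℕ, i + 1 ≤ N → A (p i) ≤ A (p (i+1)) := by
      intro i hi
      have hle : p i ≤ p (i+1) := by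
        have : (0:ℝ) < 1/N := by positivity
        linarith [hpsucc i]
      exact (step (p i) (hpmem i (by omega)) (p (i+1)) (hpmem (i+1) hi) hle).1
    have htel : ∀ j : ℕ, j ≤ N →
        G (p 0) / n (p 0) - R / m * ((1 / (N:ℝ)) * (A (p j) - A (p 0))) ≤ G (p j) / n (p j) ∧
        G (p j) / n (p j) - R / m * ((1 / (N:ℝ)) * (A (p j) - A (p 0))) ≤ G (p 0) / n (p 0) := by
      intro j
      induction j with
      | zero => intro _; constructor <;> simp
      | succ k ih =>
        intro hk
        obtain ⟨ih1, ih2⟩ := ih (by omega)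
        obtain ⟨s1, s2⟩ := hstep k hk
        constructor <;> nlinarith [hmono k hk]
    obtain ⟨t1, t2⟩ := htel N (le_refl N)
    have hp0 : p 0 = 0 := by simp [hp]
    have hpN : p N = 1 := by rw [hp]; field_simp
    rw [hp0, hpN] at t1 t2
    have hAbd : A 1 - A 0 ≤ 2 * K := by
      have ha := abs_le.mp (hA1 1 h1m)
      have hb := abs_le.mp (hA1 0 h0m)
      linarith [ha.2, hb.1]
    have hA0 : 0 ≤ A 1 - A 0 := by
      have := hmono  -- not directly; use step at 0 1
      have := (step 0 h0m 1 h1m zero_le_one).1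
      linarith
    have hcoef : 0 ≤ R / m * (1 / (N:ℝ)) := by positivity
    have hmono2 : R / m * (1 / (N:ℝ)) * (A 1 - A 0) ≤ R / m * (1 / (N:ℝ)) * (2 * K) :=
      mul_le_mul_of_nonneg_left hAbd hcoef
    have hmono3 : 0 ≤ R / m * (1 / (N:ℝ)) * (A 1 - A 0) := mul_nonneg hcoef hA0
    rw [abs_le]
    constructor <;> nlinarith [t1, t2, hmono2, hmono3]
  -- conclude equality
  have hn0 : 0 < n 0 := lt_of_lt_of_le hm (hn 0 h0m)
  have hn1 : 0 < n 1 := lt_of_lt_of_le hm (hn 1 h1m)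
  have heq : G 1 / n 1 = G 0 / n 0 := by
    have habs : |G 1 / n 1 - G 0 / n 0| = 0 := by
      refine le_antisymm ?_ (abs_nonneg _)
      refine le_of_forall_pos_le_add (fun ε hε => ?_)
      obtain ⟨N, hN⟩ := exists_nat_gt (R / m * (2 * K) / ε)
      have hnum : 0 ≤ R / m * (2 * K) / ε :=
        div_nonneg (mul_nonneg (div_nonneg hR0 hm.le) (by linarith)) hε.le
      have hNpos : 0 < N := by
        by_contra h
        push_neg at h
        interval_cases N
        simp only [Nat.cast_zero] at hN
        linarith
      have hb := main N hNpos
      have hNR : (0:ℝ) < N := by exact_mod_cast hNpos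
      have h5 : R / m * (2 * K) < N * ε := by
        have := (div_lt_iff₀ hε).mp hN
        linarith
      have h6 : R / m * ((1 / (N:ℝ)) * (2 * K)) < ε := by
        have hexp : R / m * ((1 / (N:ℝ)) * (2 * K)) = R / m * (2 * K) / N := by
          field_simp
        rw [hexp, div_lt_iff₀ hNR]
        linarith
      linarith
    have := abs_eq_zero.mp habs
    linarith
  field_simp at heq
  linarith [heq]

lemma segment_ratio {X : Type*} [NormedAddCommGroup X] [NormedSpace ℝ X]
    (T : X →L[ℝ] X) (hd : Dense {x : X | SmoothPt x})
    (hpres : ∀ x : X, SmoothPt x → PreservesBJAt T x)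
    (x w : X) (hseg : ∀ t ∈ Icc (0:ℝ) 1, x + t • (w - x) ≠ 0) :
    ‖T x‖ * ‖w‖ = ‖T w‖ * ‖x‖ := by
  set v := w - x with hv
  set n : ℝ → ℝ := fun t => ‖x + t • v‖ with hn
  set G : ℝ → ℝ := fun t => ‖T (x + t • v)‖ with hG
  have hcont : ContinuousOn n (Icc (0:ℝ) 1) := by
    apply Continuous.continuousOn
    exact (continuous_const.add (continuous_id.smul continuous_const)).norm
  -- minimum of n on the compact interval
  obtain ⟨t₀, ht₀mem, ht₀min⟩ :=
    isCompact_Icc.exists_isMinOn (Set.nonempty_Icc.mpr zero_le_one) hcont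
  have hm : 0 < n t₀ := norm_pos_iff.mpr (hseg t₀ ht₀mem)
  have hnlb : ∀ t ∈ Icc (0:ℝ) 1, n t₀ ≤ n t := fun t ht => ht₀min ht
  have hGnn : ∀ t ∈ Icc (0:ℝ) 1, 0 ≤ G t := fun t _ => norm_nonneg _
  have hkey : ∀ t ∈ Icc (0:ℝ) 1, ∃ a : ℝ, |a| ≤ ‖v‖ ∧ ∀ s ∈ Icc (0:ℝ) 1,
      n t + (s - t) * a ≤ n s ∧ G t * (n t + (s - t) * a) ≤ n t * G s := by
    intro t ht
    obtain ⟨a, ha1, ha2⟩ := key T hd hpres x v t (hseg t ht)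
    exact ⟨a, ha1, fun s _ => ha2 s⟩
  have := ratio_eq n G (n t₀) ‖v‖ hm hnlb hGnn hkey
  have hG0 : G 0 = ‖T x‖ := by simp [hG]
  have hG1 : G 1 = ‖T w‖ := by simp [hG, hv]
  have hn0 : n 0 = ‖x‖ := by simp [hn]
  have hn1 : n 1 = ‖w‖ := by simp [hn, hv]
  rw [hG0, hG1, hn0, hn1] at this
  exact this

theorem stmt_9 {X : Type*} [NormedAddCommGroup X] [NormedSpace ℝ X] [CompleteSpace X]
    (T : X →L[ℝ] X)
    (hd : Dense {x : X | SmoothPt x}) (hg : IsGδ {x : X | SmoothPt x})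
    (hpres : ∀ x : X, SmoothPt x → PreservesBJAt T x) :
    ∃ lam : ℝ, 0 ≤ lam ∧ ∀ x : X, ‖T x‖ = lam * ‖x‖ := by
  have hratio : ∀ x w : X, (∀ t ∈ Icc (0:ℝ) 1, x + t • (w - x) ≠ 0) →
      ‖T x‖ * ‖w‖ = ‖T w‖ * ‖x‖ := fun x w h => segment_ratio T hd hpres x w h
  rcases subsingleton_or_nontrivial X with hsub | hnt
  · refine ⟨0, le_refl 0, fun x => ?_⟩
    have : x = 0 := Subsingleton.elim x 0
    simp [this]
  · obtain ⟨x₀, hx₀⟩ := exists_ne (0 : X)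
    have hx₀n : 0 < ‖x₀‖ := norm_pos_iff.mpr hx₀
    refine ⟨‖T x₀‖ / ‖x₀‖, div_nonneg (norm_nonneg _) (norm_nonneg _), fun x => ?_⟩
    by_cases hx : x = 0
    · simp [hx]
    have hgoal : ‖T x‖ * ‖x₀‖ = ‖T x₀‖ * ‖x‖ → ‖T x‖ = ‖T x₀‖ / ‖x₀‖ * ‖x‖ := by
      intro h
      field_simp
      linarith
    apply hgoal
    by_cases hdep : ∃ c : ℝ, x = c • x₀
    · obtain ⟨c, rfl⟩ := hdep
      rw [map_smul, norm_smul, norm_smul]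
      simp [Real.norm_eq_abs]
      ring
    · -- segment from x₀ to x avoids 0
      have hseg : ∀ t ∈ Icc (0:ℝ) 1, x₀ + t • (x - x₀) ≠ 0 := by
        intro t ht h0
        by_cases ht0 : t = 0
        · rw [ht0] at h0
          simp at h0
          exact hx₀ h0
        · apply hdep
          have h1 : t • x = (t - 1) • x₀ := by
            linear_combination (norm := module) h0
          refine ⟨(t - 1) / t, ?_⟩
          have h4 := congrArg (t⁻¹ • ·) h1
          simp only [inv_smul_smul₀ ht0, smul_smul] at h4
          rw [h4]
          congr 1
          field_simp
      have := hratio x₀ x hseg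
      linarith
end

section
/- Let X be a real Banach space in which Sm(X) is a dense G_δ subset, and let U be a dense subset of X. If a bounded linear operator T : X → X preserves Birkhoff-James orthogonality at each point of U, then T is a scalar multiple of an isometry. -/
open Metric Filter Set Topology

section Aux
variable {X : Type*} [NormedAddCommGroup X] [NormedSpace ℝ X]

lemma suppFunc_nonempty {x : X} (hx : x ≠ 0) : ∃ f, f ∈ SuppFunc x := by
  obtain ⟨g, hg1, hg2⟩ := exists_dual_vector ℝ x (norm_ne_zero_iff.mpr hx)
  exact ⟨g, hg1, by exact_mod_cast hg2⟩

lemma bjorth_of_supp {u v : X} {f : StrongDual ℝ X} (hf : f ∈ SuppFunc u)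
    (hv : f v = 0) : BJOrth u v := by
  intro lam
  have h1 : ‖u‖ = f (u + lam • v) := by
    rw [map_add, map_smul, hv, hf.2]; simp
  calc ‖u‖ = f (u + lam • v) := h1
    _ ≤ |f (u + lam • v)| := le_abs_self _
    _ ≤ ‖f‖ * ‖u + lam • v‖ := f.le_opNorm _
    _ = ‖u + lam • v‖ := by rw [hf.1, one_mul]

lemma eq_zero_of_bjorth_self {u : X} (h : BJOrth u u) : u = 0 := by
  have h1 := h (-1)
  simp only [neg_one_smul, add_neg_cancel, norm_zero] at h1
  exact norm_le_zero_iff.mp h1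

/-- Hahn-Banach: a support functional vanishing on a submodule orthogonal to `u`. -/
lemma supp_vanishing {u : X} (hu : u ≠ 0) (S : Submodule ℝ X)
    (hS : ∀ w ∈ S, BJOrth u w) :
    ∃ f : StrongDual ℝ X, f ∈ SuppFunc u ∧ ∀ w ∈ S, f w = 0 := by
  have hupos : 0 < ‖u‖ := norm_pos_iff.mpr hu
  have huS : u ∉ S := fun h => hu (eq_zero_of_bjorth_self (hS u h))
  set f₀ : X →ₗ.[ℝ] ℝ := ⟨S, 0⟩ with hf₀def
  have huS' : u ∉ f₀.domain := huS
  set F := f₀.supSpanSingleton u ‖u‖ huS' with hFdef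
  have hFval : ∀ (s : X) (hs : s ∈ S) (a : ℝ) (hmem : s + a • u ∈ F.domain),
      F ⟨s + a • u, hmem⟩ = a * ‖u‖ := by
    intro s hs a hmem
    have := LinearPMap.supSpanSingleton_apply_mk f₀ u ‖u‖ huS' s hs a
    rw [this]
    have h0 : (f₀ ⟨s, hs⟩ : ℝ) = 0 := rfl
    rw [h0, smul_eq_mul, zero_add, RingHom.id_apply]
  have key : ∀ x : F.domain, F x ≤ ‖(x : X)‖ := by
    rintro ⟨w, hw⟩
    have hw' : w ∈ f₀.domain ⊔ ℝ ∙ u := by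
      rwa [LinearPMap.domain_supSpanSingleton] at hw
    obtain ⟨s, hs, y, hy, hws⟩ := Submodule.mem_sup.mp hw'
    obtain ⟨a, rfl⟩ := Submodule.mem_span_singleton.mp hy
    have hw2 : w = s + a • u := hws.symm
    subst hw2
    rw [hFval s hs a hw]
    rcases le_or_gt a 0 with ha | ha
    · exact le_trans (mul_nonpos_of_nonpos_of_nonneg ha (norm_nonneg u)) (norm_nonneg _)
    · have horth := hS s hs a⁻¹
      have h2 : ‖s + a • u‖ = a * ‖u + a⁻¹ • s‖ := by
        rw [show s + a • u = a • (u + a⁻¹ • s) by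
          rw [smul_add, smul_smul, mul_inv_cancel₀ (ne_of_gt ha), one_smul]; abel]
        rw [norm_smul, Real.norm_eq_abs, abs_of_pos ha]
      rw [h2]
      exact mul_le_mul_of_nonneg_left horth (le_of_lt ha)
  obtain ⟨g, hg_eq, hg_le⟩ := exists_extension_of_le_sublinear F (fun x => ‖x‖)
    (fun c hc x => by
      show ‖c • x‖ = c * ‖x‖
      rw [norm_smul, Real.norm_eq_abs, abs_of_pos hc])
    (fun x y => norm_add_le x y) key
  have habs : ∀ x, |g x| ≤ ‖x‖ := by
    intro x
    refine abs_le.2 ⟨?_, hg_le x⟩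
    have := hg_le (-x)
    rw [map_neg, norm_neg] at this
    linarith
  set G : StrongDual ℝ X := g.mkContinuous 1 (fun x => by
    rw [Real.norm_eq_abs, one_mul]; exact habs x) with hGdef
  have hGapp : ∀ x, G x = g x := fun x => rfl
  have humem : u ∈ F.domain := by
    rw [LinearPMap.domain_supSpanSingleton]
    exact Submodule.mem_sup_right (Submodule.mem_span_singleton.mpr ⟨1, one_smul ℝ u⟩)
  have hGu : G u = ‖u‖ := by
    rw [hGapp, hg_eq ⟨u, humem⟩]
    have : F ⟨u, humem⟩ = F ⟨(0 : X) + (1 : ℝ) • u, by simpa using humem⟩ := by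
      congr 1
      exact Subtype.ext (by simp)
    rw [this, hFval 0 (Submodule.zero_mem S) 1 _]
    simp
  have hGS : ∀ w ∈ S, G w = 0 := by
    intro w hw
    have hmem : w ∈ F.domain := by
      rw [LinearPMap.domain_supSpanSingleton]
      exact Submodule.mem_sup_left hw
    rw [hGapp, hg_eq ⟨w, hmem⟩]
    have : F ⟨w, hmem⟩ = F ⟨w + (0 : ℝ) • u, by simpa using hmem⟩ := by
      congr 1
      exact Subtype.ext (by simp)
    rw [this, hFval w hw 0 _]
    simp
  have hGnorm : ‖G‖ = 1 := by
    refine le_antisymm (g.mkContinuous_norm_le zero_le_one _) ?_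
    have h3 : ‖u‖ ≤ ‖G‖ * ‖u‖ := by
      calc ‖u‖ = G u := hGu.symm
        _ ≤ ‖G u‖ := le_abs_self _
        _ ≤ ‖G‖ * ‖u‖ := G.le_opNorm u
    exact le_of_mul_le_mul_right (by linarith) hupos
  exact ⟨G, ⟨hGnorm, hGu⟩, hGS⟩


/-- At a smooth point, support functionals of nearby points converge weakly-* to the
unique support functional. -/
lemma tendsto_suppFunc {z : X} (hz : SmoothPt z) {fz : StrongDual ℝ X}
    (hfz : fz ∈ SuppFunc z) (u : ℕ → X) (hu : Tendsto u atTop (𝓝 z))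
    (f : ℕ → StrongDual ℝ X) (hf : ∀ n, f n ∈ SuppFunc (u n)) (v : X) :
    Tendsto (fun n => f n v) atTop (𝓝 (fz v)) := by
  have hz0 : z ≠ 0 := hz.1
  have hznorm : (0:ℝ) < ‖z‖ := norm_pos_iff.mpr hz0
  -- cluster point lemma
  have cluster : ∀ (l : Filter ℕ), l.NeBot → l ≤ atTop →
      MapClusterPt (fz v) l (fun n => f n v) := by
    intro l hl hle
    set w : ℕ → WeakDual ℝ X := fun n => StrongDual.toWeakDual (f n) with hw
    set K : Set (WeakDual ℝ X) :=
      WeakDual.toStrongDual ⁻¹' closedBall (0 : StrongDual ℝ X) 1 with hK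
    have hKc : IsCompact K := WeakDual.isCompact_closedBall (0 : StrongDual ℝ X) 1
    have hmem : ∀ n, w n ∈ K := by
      intro n
      simp only [hK, mem_preimage, mem_closedBall, dist_zero_right]
      exact le_of_eq (hf n).1
    have hle' : map w l ≤ 𝓟 K :=
      le_principal_iff.2 (mem_map.2 (Eventually.of_forall hmem))
    obtain ⟨g, hgK, hg⟩ := hKc.exists_clusterPt (f := map w l) hle'
    -- evaluation cluster points
    have heval : ∀ x : X, MapClusterPt (g x) l (fun n => f n x) := by
      intro x
      have hcont : ContinuousAt (fun φ : WeakDual ℝ X => φ x) g :=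
        (WeakDual.eval_continuous x).continuousAt
      exact MapClusterPt.continuousAt_comp hcont hg
    -- f n z → ‖z‖ along l
    have hz' : Tendsto (fun n => f n z) l (𝓝 ‖z‖) := by
      have h1 : Tendsto (fun n => f n (u n)) l (𝓝 ‖z‖) := by
        have he : (fun n => f n (u n)) = fun n => ‖u n‖ := funext fun n => (hf n).2
        rw [he]
        exact (continuous_norm.tendsto z).comp (hu.mono_left hle)
      have h2 : Tendsto (fun n => f n z - f n (u n)) l (𝓝 0) := by
        have hb : ∀ n, ‖f n z - f n (u n)‖ ≤ ‖z - u n‖ := by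
          intro n
          calc ‖f n z - f n (u n)‖ = ‖f n (z - u n)‖ := by rw [map_sub]
            _ ≤ ‖f n‖ * ‖z - u n‖ := (f n).le_opNorm _
            _ = ‖z - u n‖ := by rw [(hf n).1, one_mul]
        have ht : Tendsto (fun n => ‖z - u n‖) l (𝓝 (0:ℝ)) := by
          have h3 : Tendsto (fun n => z - u n) l (𝓝 (0:X)) := by
            have h4 : Tendsto (fun n => z - u n) l (𝓝 (z - z)) :=
              tendsto_const_nhds.sub (hu.mono_left hle)
            simpa using h4
          simpa using h3.norm
        exact squeeze_zero_norm hb ht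
      have := h2.add h1
      simpa using this
    have hgz : g z = ‖z‖ := by
      have hcl : MapClusterPt (g z) l (fun n => f n z) := heval z
      have : NeBot (𝓝 (g z) ⊓ 𝓝 ‖z‖) := by
        refine NeBot.mono hcl.clusterPt ?_
        exact inf_le_inf_left _ hz'
      exact eq_of_nhds_neBot this
    -- g is a support functional of z
    set G : StrongDual ℝ X := WeakDual.toStrongDual g with hG
    have hGz : G z = ‖z‖ := hgz
    have hGnorm1 : ‖G‖ ≤ 1 := by
      have := hgK
      simp only [hK, mem_preimage, mem_closedBall, dist_zero_right] at this
      exact this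
    have hGnorm : ‖G‖ = 1 := by
      refine le_antisymm hGnorm1 ?_
      have : ‖z‖ ≤ ‖G‖ * ‖z‖ := by
        calc ‖z‖ = G z := hGz.symm
          _ ≤ ‖G z‖ := le_abs_self _
          _ ≤ ‖G‖ * ‖z‖ := G.le_opNorm z
      exact le_of_mul_le_mul_right (by linarith) hznorm
    have hGfz : G = fz := hz.2.unique ⟨hGnorm, hGz⟩ hfz
    have : g v = fz v := by rw [← hGfz]; rfl
    rw [← this]
    exact heval v
  -- conclude convergence
  by_contra hcon
  rw [Metric.tendsto_atTop] at hcon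
  push_neg at hcon
  obtain ⟨ε, hε, hfreq⟩ := hcon
  set l := atTop ⊓ 𝓟 {n : ℕ | ε ≤ dist (f n v) (fz v)} with hl
  have hlne : l.NeBot := by
    rw [hl, ← frequently_iff_neBot]
    exact frequently_atTop.2 fun a => by
      obtain ⟨n, hn, h⟩ := hfreq a; exact ⟨n, hn, h⟩
  have hcl := cluster l hlne inf_le_left
  have hCclosed : IsClosed {x : ℝ | ε ≤ dist x (fz v)} := by
    have : {x : ℝ | ε ≤ dist x (fz v)} = (ball (fz v) ε)ᶜ := by
      ext x; simp [mem_ball, dist_comm, not_lt]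
    rw [this]; exact isOpen_ball.isClosed_compl
  have hmemC : fz v ∈ {x : ℝ | ε ≤ dist x (fz v)} := by
    rw [← hCclosed.closure_eq, mem_closure_iff_clusterPt]
    refine NeBot.mono hcl.clusterPt ?_
    refine inf_le_inf_left _ ?_
    refine le_principal_iff.2 (mem_map.2 ?_)
    have : {n : ℕ | ε ≤ dist (f n v) (fz v)} ∈ l := by
      rw [hl]; exact mem_inf_of_right (mem_principal_self _)
    filter_upwards [this] with n hn using hn
  simp only [mem_setOf_eq, dist_self] at hmemC
  linarith

/-- If `z` is smooth and `z ⊥ v`, then the unique support functional kills `v`. -/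
lemma supp_eq_zero_of_smooth {z v : X} (hz : SmoothPt z) {fz : StrongDual ℝ X}
    (hfz : fz ∈ SuppFunc z) (hv : BJOrth z v) : fz v = 0 := by
  have hS : ∀ w ∈ Submodule.span ℝ ({v} : Set X), BJOrth z w := by
    intro w hw
    obtain ⟨a, rfl⟩ := Submodule.mem_span_singleton.mp hw
    intro lam
    have := hv (lam * a)
    rwa [← smul_smul] at this
  obtain ⟨g, hg, hgv⟩ := supp_vanishing hz.1 _ hS
  have hgv' : g v = 0 := hgv v (Submodule.mem_span_singleton_self v)
  rwa [hz.2.unique hfz hg]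

/-- Transfer of BJ-orthogonality preservation from a dense set to smooth points. -/
lemma preserves_at_smooth {T : X →L[ℝ] X} {U : Set X} (hU : Dense U)
    (hpres : ∀ x ∈ U, PreservesBJAt T x) {z : X} (hz : SmoothPt z) :
    PreservesBJAt T z := by
  intro v hv
  have hz0 : z ≠ 0 := hz.1
  have hzpos : (0:ℝ) < ‖z‖ := norm_pos_iff.mpr hz0
  obtain ⟨fz, hfz, -⟩ := hz.2
  have hfzv : fz v = 0 := supp_eq_zero_of_smooth hz hfz hv
  -- choose approximating sequence in U
  have hch : ∀ n : ℕ, ∃ p, p ∈ U ∧ dist z p < min (1/((n:ℝ)+1)) (‖z‖/2) := by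
    intro n
    have hpos : (0:ℝ) < min (1/((n:ℝ)+1)) (‖z‖/2) := lt_min (by positivity) (by positivity)
    exact Metric.mem_closure_iff.mp (hU z) _ hpos
  choose u hum hud using hch
  have hdist : ∀ n : ℕ, ‖z - u n‖ < min (1/((n:ℝ)+1)) (‖z‖/2) := by
    intro n; rw [← dist_eq_norm]; exact hud n
  have hunorm : ∀ n, ‖z‖/2 < ‖u n‖ := by
    intro n
    have h1 : ‖z - u n‖ < ‖z‖/2 := lt_of_lt_of_le (hdist n) (min_le_right _ _)
    have h2 : ‖z‖ - ‖u n‖ ≤ ‖z - u n‖ := norm_sub_norm_le z (u n)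
    linarith
  have hu0 : ∀ n, u n ≠ 0 := by
    intro n hn
    have := hunorm n
    rw [hn, norm_zero] at this
    linarith
  have hulim : Tendsto u atTop (𝓝 z) := by
    rw [tendsto_iff_dist_tendsto_zero]
    have hb : ∀ n : ℕ, dist (u n) z ≤ 1/((n:ℝ)+1) := by
      intro n
      rw [dist_comm]
      exact le_of_lt (lt_of_lt_of_le (hud n) (min_le_left _ _))
    refine squeeze_zero (fun n => dist_nonneg) hb ?_
    exact tendsto_one_div_add_atTop_nhds_zero_nat
  choose f hf using fun n => suppFunc_nonempty (hu0 n)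
  have hflim : Tendsto (fun n => f n v) atTop (𝓝 0) := by
    have := tendsto_suppFunc hz hfz u hulim f hf v
    rwa [hfzv] at this
  -- orthogonal perturbations
  set w : ℕ → X := fun n => v - (f n v / ‖u n‖) • u n with hwdef
  have hworth : ∀ n, BJOrth (u n) (w n) := by
    intro n
    refine bjorth_of_supp (hf n) ?_
    have hn0 : ‖u n‖ ≠ 0 := ne_of_gt (by linarith [hunorm n] : (0:ℝ) < ‖u n‖)
    simp only [hwdef, map_sub, map_smul, smul_eq_mul, (hf n).2]
    field_simp
    simp
  have hTorth : ∀ n, BJOrth (T (u n)) (T (w n)) := fun n => hpres (u n) (hum n) (w n) (hworth n)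
  have hwlim : Tendsto w atTop (𝓝 v) := by
    have hsc : Tendsto (fun n => f n v / ‖u n‖) atTop (𝓝 (0 / ‖z‖)) :=
      hflim.div (hulim.norm) (by positivity)
    rw [zero_div] at hsc
    have : Tendsto (fun n => (f n v / ‖u n‖) • u n) atTop (𝓝 ((0:ℝ) • z)) :=
      hsc.smul hulim
    rw [zero_smul] at this
    have h4 : Tendsto w atTop (𝓝 (v - 0)) := tendsto_const_nhds.sub this
    simpa using h4
  -- pass to the limit
  intro lam
  have hle : ∀ n, ‖T (u n)‖ ≤ ‖T (u n) + lam • T (w n)‖ := fun n => hTorth n lam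
  have hl1 : Tendsto (fun n => ‖T (u n)‖) atTop (𝓝 ‖T z‖) :=
    ((T.continuous.tendsto z).comp hulim).norm
  have hl2 : Tendsto (fun n => ‖T (u n) + lam • T (w n)‖) atTop (𝓝 ‖T z + lam • T v‖) := by
    have h5 : Tendsto (fun n => T (u n) + lam • T (w n)) atTop (𝓝 (T z + lam • T v)) :=
      ((T.continuous.tendsto z).comp hulim).add
        (((T.continuous.tendsto v).comp hwlim).const_smul lam)
    exact h5.norm
  exact le_of_tendsto_of_tendsto' hl1 hl2 hle

/-- The support functional identity at a point where `T` preserves orthogonality. -/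
lemma supp_identity {T : X →L[ℝ] X} {z : X} (hz : z ≠ 0) (hTz : T z ≠ 0)
    (hp : PreservesBJAt T z) {f : StrongDual ℝ X} (hf : f ∈ SuppFunc z) :
    ∃ g : StrongDual ℝ X, g ∈ SuppFunc (T z) ∧
      ∀ y : X, g (T y) = ‖T z‖ / ‖z‖ * f y := by
  have hzpos : (0:ℝ) < ‖z‖ := norm_pos_iff.mpr hz
  set S : Submodule ℝ X := Submodule.map (T : X →ₗ[ℝ] X) (LinearMap.ker (f : X →ₗ[ℝ] ℝ))
    with hSdef
  have hO : ∀ w ∈ S, BJOrth (T z) w := by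
    rintro _ ⟨w, hw, rfl⟩
    have hfw : f w = 0 := by simpa using hw
    exact hp w (bjorth_of_supp hf hfw)
  obtain ⟨g, hg, hgS⟩ := supp_vanishing hTz S hO
  refine ⟨g, hg, fun y => ?_⟩
  have hy : y - (f y / ‖z‖) • z ∈ LinearMap.ker (f : X →ₗ[ℝ] ℝ) := by
    simp only [LinearMap.mem_ker, ContinuousLinearMap.coe_coe]
    have : f (y - (f y / ‖z‖) • z) = f y - (f y / ‖z‖) * f z := by
      rw [map_sub, map_smul]; rfl
    rw [this, hf.2]
    field_simp
    simp
  have h1 : g (T (y - (f y / ‖z‖) • z)) = 0 :=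
    hgS _ ⟨_, hy, rfl⟩
  have h2 : g (T y) - (f y / ‖z‖) * g (T z) = 0 := by
    rw [← h1, map_sub, map_smul, map_sub, map_smul]
    rfl
  rw [hg.2] at h2
  field_simp at h2 ⊢
  linarith

/-- Key two-sided derivative-type inequality, valid at every nonzero point. -/
lemma key_ineq {T : X →L[ℝ] X}
    (hDense : Dense {z : X | SmoothPt z ∧ T z ≠ 0})
    (hsm : ∀ z : X, SmoothPt z → PreservesBJAt T z)
    {z : X} (hz : z ≠ 0) (v : X) :
    ∃ c : ℝ, |c| ≤ 2 * ‖v‖ / ‖z‖ ∧ ∀ h : ℝ,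
      ‖z‖ * (1 + h * c) ≤ ‖z + h • v‖ ∧ ‖T z‖ * (1 + h * c) ≤ ‖T z + h • T v‖ := by
  have hzpos : (0:ℝ) < ‖z‖ := norm_pos_iff.mpr hz
  -- approximating sequence of smooth points with T z_n ≠ 0
  have hch : ∀ n : ℕ, ∃ p, (SmoothPt p ∧ T p ≠ 0) ∧ dist z p < min (1/((n:ℝ)+1)) (‖z‖/2) := by
    intro n
    have hpos : (0:ℝ) < min (1/((n:ℝ)+1)) (‖z‖/2) := lt_min (by positivity) (by positivity)
    obtain ⟨p, hp1, hp2⟩ := Metric.mem_closure_iff.mp (hDense z) _ hpos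
    exact ⟨p, hp1, hp2⟩
  choose u hsmu hud using hch
  have hdist : ∀ n : ℕ, ‖z - u n‖ < min (1/((n:ℝ)+1)) (‖z‖/2) := by
    intro n; rw [← dist_eq_norm]; exact hud n
  have hunorm : ∀ n, ‖z‖/2 < ‖u n‖ := by
    intro n
    have h1 : ‖z - u n‖ < ‖z‖/2 := lt_of_lt_of_le (hdist n) (min_le_right _ _)
    have h2 : ‖z‖ - ‖u n‖ ≤ ‖z - u n‖ := norm_sub_norm_le z (u n)
    linarith
  have hulim : Tendsto u atTop (𝓝 z) := by
    rw [tendsto_iff_dist_tendsto_zero]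
    have hb : ∀ n : ℕ, dist (u n) z ≤ 1/((n:ℝ)+1) := by
      intro n
      rw [dist_comm]
      exact le_of_lt (lt_of_lt_of_le (hud n) (min_le_left _ _))
    exact squeeze_zero (fun n => dist_nonneg) hb tendsto_one_div_add_atTop_nhds_zero_nat
  choose f hf using fun n => suppFunc_nonempty (hsmu n).1.1
  choose g hg hgid using fun n =>
    supp_identity (hsmu n).1.1 (hsmu n).2 (hsm (u n) (hsmu n).1) (hf n)
  set c : ℕ → ℝ := fun n => f n v / ‖u n‖ with hcdef
  have hcb : ∀ n, c n ∈ Icc (-(2 * ‖v‖ / ‖z‖)) (2 * ‖v‖ / ‖z‖) := by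
    intro n
    have h1 : |f n v| ≤ ‖v‖ := by
      calc |f n v| = ‖f n v‖ := rfl
        _ ≤ ‖f n‖ * ‖v‖ := (f n).le_opNorm v
        _ = ‖v‖ := by rw [(hf n).1, one_mul]
    have h2 : ‖z‖/2 < ‖u n‖ := hunorm n
    have h3 : |c n| ≤ 2 * ‖v‖ / ‖z‖ := by
      rw [hcdef]
      rw [abs_div, abs_norm]
      rw [div_le_div_iff₀ (by linarith) (by linarith)]
      calc |f n v| * ‖z‖ ≤ ‖v‖ * ‖z‖ :=
            mul_le_mul_of_nonneg_right h1 (norm_nonneg z)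
        _ ≤ 2 * ‖v‖ * (‖z‖/2) := by ring_nf; rfl
        _ ≤ 2 * ‖v‖ * ‖u n‖ := by
            refine mul_le_mul_of_nonneg_left (le_of_lt h2) (by positivity)
    exact abs_le.mp h3
  obtain ⟨a, haIcc, φ, hφ, hconv⟩ :=
    tendsto_subseq_of_bounded (isBounded_Icc (-(2 * ‖v‖ / ‖z‖)) (2 * ‖v‖ / ‖z‖)) hcb
  rw [isClosed_Icc.closure_eq] at haIcc
  refine ⟨a, abs_le.mpr ⟨haIcc.1, haIcc.2⟩, fun h => ?_⟩
  -- inequalities at level n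
  have hn1 : ∀ n, ‖u n‖ * (1 + h * c n) ≤ ‖u n + h • v‖ := by
    intro n
    have hval : f n (u n + h • v) = ‖u n‖ * (1 + h * c n) := by
      rw [map_add, map_smul, (hf n).2, smul_eq_mul, hcdef]
      have : ‖u n‖ ≠ 0 := ne_of_gt (by linarith [hunorm n])
      field_simp
    calc ‖u n‖ * (1 + h * c n) = f n (u n + h • v) := hval.symm
      _ ≤ |f n (u n + h • v)| := le_abs_self _
      _ ≤ ‖f n‖ * ‖u n + h • v‖ := (f n).le_opNorm _
      _ = ‖u n + h • v‖ := by rw [(hf n).1, one_mul]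
  have hn2 : ∀ n, ‖T (u n)‖ * (1 + h * c n) ≤ ‖T (u n) + h • T v‖ := by
    intro n
    have hval : g n (T (u n) + h • T v) = ‖T (u n)‖ * (1 + h * c n) := by
      rw [map_add, map_smul, (hg n).2, smul_eq_mul, hgid n v, hcdef]
      have : ‖u n‖ ≠ 0 := ne_of_gt (by linarith [hunorm n])
      field_simp
    calc ‖T (u n)‖ * (1 + h * c n) = g n (T (u n) + h • T v) := hval.symm
      _ ≤ |g n (T (u n) + h • T v)| := le_abs_self _
      _ ≤ ‖g n‖ * ‖T (u n) + h • T v‖ := (g n).le_opNorm _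
      _ = ‖T (u n) + h • T v‖ := by rw [(hg n).1, one_mul]
  -- pass to the limit along the subsequence
  have hulim' : Tendsto (u ∘ φ) atTop (𝓝 z) := hulim.comp hφ.tendsto_atTop
  constructor
  · have hL : Tendsto (fun k => ‖u (φ k)‖ * (1 + h * c (φ k))) atTop (𝓝 (‖z‖ * (1 + h * a))) := by
      exact (hulim'.norm).mul (tendsto_const_nhds.add (hconv.const_mul h))
    have hR : Tendsto (fun k => ‖u (φ k) + h • v‖) atTop (𝓝 ‖z + h • v‖) :=
      (hulim'.add tendsto_const_nhds).norm
    exact le_of_tendsto_of_tendsto' hL hR (fun k => hn1 (φ k))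
  · have hTlim : Tendsto (fun k => T (u (φ k))) atTop (𝓝 (T z)) :=
      (T.continuous.tendsto z).comp hulim'
    have hL : Tendsto (fun k => ‖T (u (φ k))‖ * (1 + h * c (φ k))) atTop
        (𝓝 (‖T z‖ * (1 + h * a))) :=
      (hTlim.norm).mul (tendsto_const_nhds.add (hconv.const_mul h))
    have hR : Tendsto (fun k => ‖T (u (φ k)) + h • T v‖) atTop (𝓝 ‖T z + h • T v‖) :=
      (hTlim.add tendsto_const_nhds).norm
    exact le_of_tendsto_of_tendsto' hL hR (fun k => hn2 (φ k))

end Aux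

lemma log_lb {x : ℝ} (hx : -(1/2) ≤ x) : x - 2*x^2 ≤ Real.log (1+x) := by
  have h1 : (0:ℝ) < 1 + x := by linarith
  have h2 := Real.log_le_sub_one_of_pos (x := (1+x)⁻¹) (by positivity)
  rw [Real.log_inv] at h2
  have h3 : x / (1+x) ≤ Real.log (1+x) := by
    have he : (1+x)⁻¹ - 1 = -(x/(1+x)) := by field_simp; ring
    rw [he] at h2
    linarith
  have h4 : x - 2*x^2 ≤ x/(1+x) := by
    have heq : x/(1+x) - (x - 2*x^2) = (x^2*(1+2*x))/(1+x) := by field_simp; ring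
    have hpos : (0:ℝ) ≤ (x^2*(1+2*x))/(1+x) := by
      have : (0:ℝ) ≤ 1+2*x := by linarith
      positivity
    linarith
  linarith

/-- Telescoping lemma. -/
lemma ratio_const (ψ χ : ℝ → ℝ) (C δ : ℝ) (hδ : 0 < δ) (hC : 0 < C)
    (hψ : ∀ t ∈ Icc (0:ℝ) 1, δ ≤ ψ t) (hχ : ∀ t ∈ Icc (0:ℝ) 1, δ ≤ χ t)
    (sel : ∀ t ∈ Icc (0:ℝ) 1, ∃ c : ℝ, |c| ≤ C ∧ ∀ s ∈ Icc (0:ℝ) 1,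
      ψ t * (1 + (s - t) * c) ≤ ψ s ∧ χ t * (1 + (s - t) * c) ≤ χ s) :
    χ 1 * ψ 0 = χ 0 * ψ 1 := by
  choose! c hc1 hc2 using sel
  set L : ℝ → ℝ := fun t => Real.log (χ t) - Real.log (ψ t) with hLdef
  have hmem0 : (0:ℝ) ∈ Icc (0:ℝ) 1 := by constructor <;> norm_num
  have hmem1 : (1:ℝ) ∈ Icc (0:ℝ) 1 := by constructor <;> norm_num
  have step : ∀ t ∈ Icc (0:ℝ) 1, ∀ s ∈ Icc (0:ℝ) 1, |s - t| * C ≤ 1/2 →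
      (s - t) * (c t - c s) - 4 * (s - t)^2 * C^2 ≤ L s - L t := by
    intro t ht s hs hst
    have hx1 : |(s - t) * c t| ≤ 1/2 := by
      rw [abs_mul]
      calc |s - t| * |c t| ≤ |s - t| * C :=
            mul_le_mul_of_nonneg_left (hc1 t ht) (abs_nonneg _)
        _ ≤ 1/2 := hst
    have hx2 : |(t - s) * c s| ≤ 1/2 := by
      rw [abs_mul, abs_sub_comm]
      calc |s - t| * |c s| ≤ |s - t| * C :=
            mul_le_mul_of_nonneg_left (hc1 s hs) (abs_nonneg _)
        _ ≤ 1/2 := hst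
    have hf1 : (0:ℝ) < 1 + (s - t) * c t := by have := abs_le.mp hx1; linarith
    have hf2 : (0:ℝ) < 1 + (t - s) * c s := by have := abs_le.mp hx2; linarith
    have hχt : (0:ℝ) < χ t := lt_of_lt_of_le hδ (hχ t ht)
    have hχs : (0:ℝ) < χ s := lt_of_lt_of_le hδ (hχ s hs)
    have hψt : (0:ℝ) < ψ t := lt_of_lt_of_le hδ (hψ t ht)
    have hψs : (0:ℝ) < ψ s := lt_of_lt_of_le hδ (hψ s hs)
    have hA : Real.log (χ t) + Real.log (1 + (s - t) * c t) ≤ Real.log (χ s) := by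
      rw [← Real.log_mul (ne_of_gt hχt) (ne_of_gt hf1)]
      exact Real.log_le_log (by positivity) ((hc2 t ht s hs).2)
    have hB : Real.log (ψ s) + Real.log (1 + (t - s) * c s) ≤ Real.log (ψ t) := by
      rw [← Real.log_mul (ne_of_gt hψs) (ne_of_gt hf2)]
      exact Real.log_le_log (by positivity) ((hc2 s hs t ht).1)
    have hlb1 : (s - t) * c t - 2 * ((s - t) * c t)^2 ≤ Real.log (1 + (s - t) * c t) :=
      log_lb (by have := abs_le.mp hx1; linarith)
    have hlb2 : (t - s) * c s - 2 * ((t - s) * c s)^2 ≤ Real.log (1 + (t - s) * c s) :=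
      log_lb (by have := abs_le.mp hx2; linarith)
    have hct : (c t)^2 ≤ C^2 := by
      rw [← sq_abs]
      exact pow_le_pow_left₀ (abs_nonneg _) (hc1 t ht) 2
    have hcs : (c s)^2 ≤ C^2 := by
      rw [← sq_abs]
      exact pow_le_pow_left₀ (abs_nonneg _) (hc1 s hs) 2
    have hsq1 : ((s - t) * c t)^2 ≤ (s - t)^2 * C^2 := by
      rw [mul_pow]
      exact mul_le_mul_of_nonneg_left hct (sq_nonneg _)
    have hsq2 : ((t - s) * c s)^2 ≤ (s - t)^2 * C^2 := by
      rw [mul_pow]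
      have : (t - s)^2 = (s - t)^2 := by ring
      rw [this]
      exact mul_le_mul_of_nonneg_left hcs (sq_nonneg _)
    have hexp : L s - L t =
        (Real.log (χ s) - Real.log (χ t)) - (Real.log (ψ s) - Real.log (ψ t)) := by
      simp only [hLdef]; ring
    rw [hexp]
    nlinarith [hA, hB, hlb1, hlb2, hsq1, hsq2]
  -- n-step bound
  have bound : ∀ n : ℕ, 2*C ≤ (n:ℝ) → |L 1 - L 0| ≤ (2*C + 4*C^2)/(n:ℝ) := by
    intro n hn
    have hn0 : (0:ℝ) < (n:ℝ) := lt_of_lt_of_le (by linarith) hn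
    set t : ℕ → ℝ := fun i => (i:ℝ)/(n:ℝ) with htdef
    have hti : ∀ i : ℕ, i ≤ n → t i ∈ Icc (0:ℝ) 1 := by
      intro i hi
      constructor
      · positivity
      · rw [div_le_one hn0]; exact_mod_cast hi
    have ht0 : t 0 = 0 := by simp [htdef]
    have htn : t n = 1 := div_self (ne_of_gt hn0)
    have hstep : ∀ i : ℕ, t (i+1) - t i = 1/(n:ℝ) := by
      intro i
      simp only [htdef]
      push_cast
      field_simp
      ring
    have hdC : (1/(n:ℝ)) * C ≤ 1/2 := by
      rw [div_mul_eq_mul_div, one_mul, div_le_div_iff₀ hn0 (by norm_num)]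
      linarith
    have hterm : ∀ i, i < n →
        (1/(n:ℝ)) * (c (t i) - c (t (i+1))) - 4*C^2/(n:ℝ)^2 ≤ L (t (i+1)) - L (t i) := by
      intro i hi
      have habs : |t (i+1) - t i| * C ≤ 1/2 := by
        rw [hstep i, abs_of_pos (by positivity)]
        exact hdC
      have h1 := step (t i) (hti i hi.le) (t (i+1)) (hti (i+1) hi) habs
      rw [hstep i] at h1
      have heq : (1/(n:ℝ)) * (c (t i) - c (t (i+1))) - 4*((1:ℝ)/(n:ℝ))^2*C^2
          = (1/(n:ℝ)) * (c (t i) - c (t (i+1))) - 4*C^2/(n:ℝ)^2 := by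
        field_simp
      linarith [heq ▸ h1]
    have hterm' : ∀ i, i < n →
        (1/(n:ℝ)) * (c (t i) - c (t (i+1))) - 4*C^2/(n:ℝ)^2 ≤ L (t i) - L (t (i+1)) := by
      intro i hi
      have habs : |t i - t (i+1)| * C ≤ 1/2 := by
        rw [abs_sub_comm, hstep i, abs_of_pos (by positivity)]
        exact hdC
      have h1 := step (t (i+1)) (hti (i+1) hi) (t i) (hti i hi.le) habs
      have hd : t i - t (i+1) = -(1/(n:ℝ)) := by rw [← hstep i]; ring
      rw [hd] at h1
      have heq : -(1/(n:ℝ)) * (c (t (i+1)) - c (t i)) - 4*(-(1/(n:ℝ)))^2*C^2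
          = (1/(n:ℝ)) * (c (t i) - c (t (i+1))) - 4*C^2/(n:ℝ)^2 := by
        field_simp
        ring
      linarith [heq ▸ h1]
    have hcbound : -(2*C)/(n:ℝ) ≤ (1/(n:ℝ)) * (c (t 0) - c (t n)) := by
      have h1 := abs_le.mp (hc1 (t 0) (hti 0 (Nat.zero_le n)))
      have h2 := abs_le.mp (hc1 (t n) (hti n le_rfl))
      have h3 : -(2*C) ≤ c (t 0) - c (t n) := by linarith
      calc -(2*C)/(n:ℝ) = (1/(n:ℝ)) * (-(2*C)) := by ring
        _ ≤ (1/(n:ℝ)) * (c (t 0) - c (t n)) :=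
            mul_le_mul_of_nonneg_left h3 (by positivity)
    have hsumlow : ∑ i ∈ Finset.range n,
        ((1/(n:ℝ)) * (c (t i) - c (t (i+1))) - 4*C^2/(n:ℝ)^2)
        = (1/(n:ℝ)) * (c (t 0) - c (t n)) - 4*C^2/(n:ℝ) := by
      rw [Finset.sum_sub_distrib, ← Finset.mul_sum,
        Finset.sum_range_sub' (fun i => c (t i)) n, Finset.sum_const, Finset.card_range]
      have : (n : ℝ) ≠ 0 := ne_of_gt hn0
      rw [nsmul_eq_mul]
      field_simp
    have hfwd : -((2*C + 4*C^2)/(n:ℝ)) ≤ L 1 - L 0 := by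
      have h1 : ∑ i ∈ Finset.range n, (L (t (i+1)) - L (t i)) = L 1 - L 0 := by
        rw [Finset.sum_range_sub (fun i => L (t i)) n, htn, ht0]
      have h2 := Finset.sum_le_sum (fun i hi =>
        hterm i (Finset.mem_range.mp hi))
      rw [h1, hsumlow] at h2
      have : -((2*C + 4*C^2)/(n:ℝ)) = -(2*C)/(n:ℝ) - 4*C^2/(n:ℝ) := by ring
      linarith
    have hbwd : -((2*C + 4*C^2)/(n:ℝ)) ≤ L 0 - L 1 := by
      have h1 : ∑ i ∈ Finset.range n, (L (t i) - L (t (i+1))) = L 0 - L 1 := by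
        rw [Finset.sum_range_sub' (fun i => L (t i)) n, htn, ht0]
      have h2 := Finset.sum_le_sum (fun i hi =>
        hterm' i (Finset.mem_range.mp hi))
      rw [h1, hsumlow] at h2
      have : -((2*C + 4*C^2)/(n:ℝ)) = -(2*C)/(n:ℝ) - 4*C^2/(n:ℝ) := by ring
      linarith
    rw [abs_le]
    constructor <;> linarith
  -- conclude L 1 = L 0
  have hL : L 1 = L 0 := by
    by_contra hne
    have hpos : 0 < |L 1 - L 0| := abs_pos.2 (sub_ne_zero.2 hne)
    obtain ⟨n, hn⟩ := exists_nat_gt (max (2*C) ((2*C + 4*C^2)/|L 1 - L 0|))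
    have hn1 : 2*C ≤ (n:ℝ) := le_of_lt (lt_of_le_of_lt (le_max_left _ _) hn)
    have hn0 : (0:ℝ) < (n:ℝ) := lt_of_lt_of_le (by linarith) hn1
    have h1 := bound n hn1
    have h2 : (2*C + 4*C^2)/|L 1 - L 0| < (n:ℝ) :=
      lt_of_le_of_lt (le_max_right _ _) hn
    rw [div_lt_iff₀ hpos] at h2
    rw [le_div_iff₀ hn0] at h1
    nlinarith
  have hχ1 : (0:ℝ) < χ 1 := lt_of_lt_of_le hδ (hχ 1 hmem1)
  have hχ0 : (0:ℝ) < χ 0 := lt_of_lt_of_le hδ (hχ 0 hmem0)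
  have hψ1 : (0:ℝ) < ψ 1 := lt_of_lt_of_le hδ (hψ 1 hmem1)
  have hψ0 : (0:ℝ) < ψ 0 := lt_of_lt_of_le hδ (hψ 0 hmem0)
  have hlog : Real.log (χ 1 * ψ 0) = Real.log (χ 0 * ψ 1) := by
    rw [Real.log_mul (ne_of_gt hχ1) (ne_of_gt hψ0),
      Real.log_mul (ne_of_gt hχ0) (ne_of_gt hψ1)]
    simp only [hLdef] at hL
    linarith
  exact Real.log_injOn_pos (by exact mem_Ioi.mpr (by positivity))
    (by exact mem_Ioi.mpr (by positivity)) hlog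

/-- Positivity propagates along the segment. -/
lemma chi_pos (χ : ℝ → ℝ) (C : ℝ) (hC : 0 < C) (hnn : ∀ t ∈ Icc (0:ℝ) 1, 0 ≤ χ t)
    (sel : ∀ t ∈ Icc (0:ℝ) 1, ∃ c : ℝ, |c| ≤ C ∧ ∀ s ∈ Icc (0:ℝ) 1,
      χ t * (1 + (s - t) * c) ≤ χ s)
    (h0 : 0 < χ 0) : ∀ t ∈ Icc (0:ℝ) 1, 0 < χ t := by
  choose! c hc1 hc2 using sel
  have hzero : ∀ t ∈ Icc (0:ℝ) 1, ∀ s ∈ Icc (0:ℝ) 1, χ t = 0 → |t - s| ≤ 1/(2*C) →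
      χ s = 0 := by
    intro t ht s hs hχt hd
    by_contra hne
    have hχs : 0 < χ s := lt_of_le_of_ne (hnn s hs) (Ne.symm hne)
    have h1 := hc2 s hs t ht
    rw [hχt] at h1
    have h2 : |(t - s) * c s| ≤ 1/2 := by
      rw [abs_mul]
      calc |t - s| * |c s| ≤ (1/(2*C)) * C :=
            mul_le_mul hd (hc1 s hs) (abs_nonneg _) (by positivity)
        _ = 1/2 := by
            field_simp
    have h3 : (1:ℝ)/2 ≤ 1 + (t - s)*c s := by have := abs_le.mp h2; linarith
    nlinarith
  intro t ht
  rcases lt_or_eq_of_le (hnn t ht) with h | h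
  · exact h
  · exfalso
    have hind : ∀ k : ℕ, χ (max (t - (k:ℝ)/(2*C)) 0) = 0 := by
      intro k
      induction k with
      | zero =>
        simp only [Nat.cast_zero, zero_div, sub_zero, max_eq_left ht.1]
        exact h.symm
      | succ k ih =>
        push_cast
        set a := max (t - (k:ℝ)/(2*C)) 0 with hadef
        set b := max (t - ((k:ℝ)+1)/(2*C)) 0 with hbdef
        have hka : (k:ℝ)/(2*C) ≤ ((k:ℝ)+1)/(2*C) := by
          gcongr
          linarith
        have hb_le_a : b ≤ a := max_le_max (by linarith) le_rfl
        have hmax_t : max t (0:ℝ) = t := max_eq_left ht.1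
        have ha_mem : a ∈ Icc (0:ℝ) 1 := by
          refine ⟨le_max_right _ _, ?_⟩
          have h1 : t - (k:ℝ)/(2*C) ≤ t := sub_le_self _ (by positivity)
          have h2 : a ≤ max t 0 := max_le_max h1 le_rfl
          rw [hmax_t] at h2
          exact le_trans h2 ht.2
        have hb_mem : b ∈ Icc (0:ℝ) 1 := by
          refine ⟨le_max_right _ _, ?_⟩
          have h1 : t - ((k:ℝ)+1)/(2*C) ≤ t := sub_le_self _ (by positivity)
          have h2 : b ≤ max t 0 := max_le_max h1 le_rfl
          rw [hmax_t] at h2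
          exact le_trans h2 ht.2
        have hdiff : |a - b| ≤ 1/(2*C) := by
          rw [abs_of_nonneg (by linarith)]
          have h1 : t - ((k:ℝ)+1)/(2*C) ≤ b := le_max_left _ _
          rcases le_total (t - (k:ℝ)/(2*C)) 0 with hc0 | hc0
          · have ha0 : a = 0 := max_eq_right hc0
            have hb0 : b = 0 := max_eq_right (by linarith)
            rw [ha0, hb0]
            simp only [sub_zero]
            positivity
          · have ha0 : a = t - (k:ℝ)/(2*C) := max_eq_left hc0
            have heq : (t - (k:ℝ)/(2*C)) - (t - ((k:ℝ)+1)/(2*C)) = 1/(2*C) := by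
              field_simp
              ring
            linarith
        exact hzero a ha_mem b hb_mem ih hdiff
    obtain ⟨k, hk⟩ := exists_nat_ge (2*C)
    have hk1 : t - (k:ℝ)/(2*C) ≤ 0 := by
      have h1 : (1:ℝ) ≤ (k:ℝ)/(2*C) := (one_le_div (by positivity)).mpr hk
      linarith [ht.2]
    have hfin := hind k
    rw [max_eq_right hk1] at hfin
    linarith

theorem stmt_10 {X : Type*} [NormedAddCommGroup X] [NormedSpace ℝ X] [CompleteSpace X]
    (T : X →L[ℝ] X)
    (hd : Dense {x : X | SmoothPt x}) (hg : IsGδ {x : X | SmoothPt x})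
    (U : Set X) (hU : Dense U)
    (hpres : ∀ x ∈ U, PreservesBJAt T x) :
    ∃ lam : ℝ, 0 ≤ lam ∧ ∀ x : X, ‖T x‖ = lam * ‖x‖ := by
  have hmem0 : (0:ℝ) ∈ Icc (0:ℝ) 1 := by constructor <;> norm_num
  have hmem1 : (1:ℝ) ∈ Icc (0:ℝ) 1 := by constructor <;> norm_num
  by_cases hT : T = 0
  · exact ⟨0, le_refl 0, fun x => by rw [hT]; simp⟩
  obtain ⟨x₀, hx₀⟩ : ∃ w : X, T w ≠ 0 := by
    by_contra hc
    push_neg at hc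
    exact hT (ContinuousLinearMap.ext fun w => by rw [hc w]; rfl)
  have hx₀0 : x₀ ≠ 0 := fun h => hx₀ (by rw [h]; simp)
  have hx₀norm : (0:ℝ) < ‖x₀‖ := norm_pos_iff.mpr hx₀0
  have hTx₀norm : (0:ℝ) < ‖T x₀‖ := norm_pos_iff.mpr hx₀
  have hsm : ∀ z : X, SmoothPt z → PreservesBJAt T z :=
    fun z hz => preserves_at_smooth hU hpres hz
  -- the set where T ≠ 0 is open and dense
  have hopen : IsOpen {x : X | T x ≠ 0} := by
    have heq : {x : X | T x ≠ 0} = T ⁻¹' ({0}ᶜ) := rfl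
    rw [heq]
    exact (isOpen_compl_singleton).preimage T.continuous
  have hkdense : Dense {x : X | T x ≠ 0} := by
    rw [Metric.dense_iff]
    intro x r hr
    by_cases hx : T x ≠ 0
    · exact ⟨x, mem_ball_self hr, hx⟩
    · push_neg at hx
      obtain ⟨w, hw⟩ : ∃ w : X, T w ≠ 0 := ⟨x₀, hx₀⟩
      have hw0 : w ≠ 0 := fun h => hw (by rw [h]; simp)
      have hwn : (0:ℝ) < ‖w‖ := norm_pos_iff.mpr hw0
      refine ⟨x + (r/(2*‖w‖)) • w, ?_, ?_⟩
      · rw [mem_ball, dist_eq_norm]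
        have h1 : (x + (r/(2*‖w‖)) • w) - x = (r/(2*‖w‖)) • w := by abel
        rw [h1, norm_smul, Real.norm_eq_abs, abs_of_pos (by positivity)]
        have : r/(2*‖w‖) * ‖w‖ = r/2 := by field_simp
        rw [this]
        linarith
      · show T (x + (r/(2*‖w‖)) • w) ≠ 0
        rw [map_add, map_smul, hx, zero_add]
        intro hc
        rcases smul_eq_zero.mp hc with h | h
        · have : r/(2*‖w‖) ≠ 0 := by positivity
          exact this h
        · exact hw h
  have hDense : Dense {z : X | SmoothPt z ∧ T z ≠ 0} := by
    have heq : {z : X | SmoothPt z ∧ T z ≠ 0} = {x : X | SmoothPt x} ∩ {x : X | T x ≠ 0} := rfl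
    rw [heq]
    exact Dense.inter_of_Gδ hg hopen.isGδ hd hkdense
  -- main claim
  have main : ∀ x : X, (∀ s : ℝ, x ≠ s • x₀) → ‖T x‖ * ‖x₀‖ = ‖T x₀‖ * ‖x‖ := by
    intro x hxs
    have hx0 : x ≠ 0 := fun h => (hxs 0) (by rw [h, zero_smul])
    set v : X := x - x₀ with hvdef
    have hvne : v ≠ 0 := by
      intro h
      apply hxs 1
      rw [one_smul]
      rw [hvdef, sub_eq_zero] at h
      exact h
    set z : ℝ → X := fun t => x₀ + t • v with hzdef
    have hz0 : z 0 = x₀ := by simp [hzdef]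
    have hz1 : z 1 = x := by simp [hzdef, hvdef]
    have hzne : ∀ t ∈ Icc (0:ℝ) 1, z t ≠ 0 := by
      intro t ht hzt
      rcases eq_or_ne t 0 with h | h
      · rw [h] at hzt
        simp only [hzdef, zero_smul, add_zero] at hzt
        exact hx₀0 hzt
      · apply hxs ((t-1)/t)
        have h1' : x₀ + (t • x - t • x₀) = 0 := by
          have h0 : x₀ + t • v = 0 := hzt
          rw [hvdef, smul_sub] at h0
          exact h0
        have h2 : t • x = (t-1) • x₀ := by
          rw [sub_smul, one_smul, ← sub_eq_zero]
          calc t • x - (t • x₀ - x₀) = x₀ + (t • x - t • x₀) := by abel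
            _ = 0 := h1'
        calc x = (t⁻¹ * t) • x := by rw [inv_mul_cancel₀ h, one_smul]
          _ = t⁻¹ • (t • x) := by rw [mul_smul]
          _ = t⁻¹ • ((t-1) • x₀) := by rw [h2]
          _ = ((t-1)/t) • x₀ := by
              rw [smul_smul]
              congr 1
              field_simp
    set ψ : ℝ → ℝ := fun t => ‖z t‖ with hψdef
    set χ : ℝ → ℝ := fun t => ‖T (z t)‖ with hχdef
    have hzcont : Continuous z := by
      simp only [hzdef]
      exact continuous_const.add (continuous_id.smul continuous_const)
    have hψcont : Continuous ψ := hzcont.norm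
    have hχcont : Continuous χ := (T.continuous.comp hzcont).norm
    obtain ⟨t₁, ht₁, hmin₁⟩ :=
      isCompact_Icc.exists_isMinOn (⟨0, hmem0⟩ : (Icc (0:ℝ) 1).Nonempty) hψcont.continuousOn
    set δ₁ : ℝ := ψ t₁ with hδ₁def
    have hδ₁ : 0 < δ₁ := norm_pos_iff.mpr (hzne t₁ ht₁)
    have hψlb : ∀ t ∈ Icc (0:ℝ) 1, δ₁ ≤ ψ t := fun t ht => hmin₁ ht
    set C : ℝ := 2*‖v‖/δ₁ with hCdef
    have hC : 0 < C := by
      have : (0:ℝ) < ‖v‖ := norm_pos_iff.mpr hvne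
      positivity
    have sel : ∀ t ∈ Icc (0:ℝ) 1, ∃ c : ℝ, |c| ≤ C ∧ ∀ s ∈ Icc (0:ℝ) 1,
        ψ t * (1 + (s - t) * c) ≤ ψ s ∧ χ t * (1 + (s - t) * c) ≤ χ s := by
      intro t ht
      obtain ⟨c, hc1, hc2⟩ := key_ineq hDense hsm (hzne t ht) v
      refine ⟨c, ?_, ?_⟩
      · refine le_trans hc1 ?_
        rw [hCdef]
        gcongr
        exact hψlb t ht
      · intro s hs
        have hzz : z t + (s - t) • v = z s := by
          simp only [hzdef]
          rw [add_assoc, ← add_smul]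
          ring_nf
        have hTz : T (z t) + (s - t) • T v = T (z s) := by
          rw [← map_smul, ← map_add, hzz]
        have h1 := hc2 (s - t)
        constructor
        · have := h1.1; rwa [hzz] at this
        · have := h1.2; rwa [hTz] at this
    have hχ0 : 0 < χ 0 := by
      have : χ 0 = ‖T x₀‖ := by rw [hχdef]; simp only; rw [hz0]
      rw [this]
      exact hTx₀norm
    have hχpos : ∀ t ∈ Icc (0:ℝ) 1, 0 < χ t := by
      refine chi_pos χ C hC (fun t _ => norm_nonneg _) ?_ hχ0
      intro t ht
      obtain ⟨c, hc1, hc2⟩ := sel t ht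
      exact ⟨c, hc1, fun s hs => (hc2 s hs).2⟩
    obtain ⟨t₂, ht₂, hmin₂⟩ :=
      isCompact_Icc.exists_isMinOn (⟨0, hmem0⟩ : (Icc (0:ℝ) 1).Nonempty) hχcont.continuousOn
    have hδ₂ : 0 < χ t₂ := hχpos t₂ ht₂
    have hχlb : ∀ t ∈ Icc (0:ℝ) 1, χ t₂ ≤ χ t := fun t ht => hmin₂ ht
    have hconc := ratio_const ψ χ C (min δ₁ (χ t₂)) (lt_min hδ₁ hδ₂) hC
      (fun t ht => le_trans (min_le_left _ _) (hψlb t ht))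
      (fun t ht => le_trans (min_le_right _ _) (hχlb t ht)) sel
    have hχ1 : χ 1 = ‖T x‖ := by rw [hχdef]; simp only; rw [hz1]
    have hψ0 : ψ 0 = ‖x₀‖ := by rw [hψdef]; simp only; rw [hz0]
    have hχ0' : χ 0 = ‖T x₀‖ := by rw [hχdef]; simp only; rw [hz0]
    have hψ1 : ψ 1 = ‖x‖ := by rw [hψdef]; simp only; rw [hz1]
    rw [hχ1, hψ0, hχ0', hψ1] at hconc
    exact hconc
  refine ⟨‖T x₀‖/‖x₀‖, by positivity, fun x => ?_⟩
  by_cases hxs : ∃ s : ℝ, x = s • x₀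
  · obtain ⟨s, rfl⟩ := hxs
    rw [map_smul, norm_smul, norm_smul]
    field_simp
  · push_neg at hxs
    have h1 := main x hxs
    rw [div_mul_eq_mul_div, eq_div_iff (ne_of_gt hx₀norm)]
    linarith
end

section
/- Let X be a real Banach space in which Sm(X) is a dense G_δ subset, and let H be an affine hyperplane in X not passing through the origin. If a bounded linear operator T : X → X preserves Birkhoff-James orthogonality at each point of H, then T is a scalar multiple of an isometry. -/
open Metric Filter Set

lemma key_ineq_s11 {X : Type*} [NormedAddCommGroup X] [NormedSpace ℝ X]
    (T : X →L[ℝ] X) (z : X) (hz : z ≠ 0) (hp : PreservesBJAt T z) :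
    ∃ F : StrongDual ℝ X, ‖F‖ = 1 ∧ F z = ‖z‖ ∧
      ∀ x : X, (‖T z‖ / ‖z‖) * F x ≤ ‖T x‖ := by
  obtain ⟨F, hF1, hFz⟩ := exists_dual_vector ℝ z (norm_ne_zero_iff.mpr hz)
  refine ⟨F, hF1, hFz, ?_⟩
  by_cases hTz : T z = 0
  · intro x; simp [hTz, norm_nonneg]
  intro x
  -- the subspace
  set M : Submodule ℝ X := (LinearMap.ker (F : X →ₗ[ℝ] ℝ)).map (T : X →ₗ[ℝ] X) with hM
  set S : Submodule ℝ X := M.topologicalClosure with hS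
  haveI hcl : IsClosed (S : Set X) := M.isClosed_topologicalClosure
  -- key BJ inequality on M
  have hbound : ∀ w : X, F w ≤ ‖w‖ := by
    intro w
    calc F w ≤ |F w| := le_abs_self _
    _ ≤ ‖F‖ * ‖w‖ := F.le_opNorm w
    _ = ‖w‖ := by rw [hF1, one_mul]
  have hMkey : ∀ s ∈ M, ‖T z‖ ≤ ‖T z + s‖ := by
    rintro s ⟨v, hv, rfl⟩
    have horth : BJOrth z v := by
      intro lam
      have : F (z + lam • v) = ‖z‖ := by
        rw [map_add, map_smul, (show F v = 0 by exact LinearMap.mem_ker.mp hv), hFz]; simp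
      calc ‖z‖ = F (z + lam • v) := this.symm
      _ ≤ ‖z + lam • v‖ := hbound _
    have := hp v horth 1
    simpa using this
  have hSkey : ∀ s ∈ S, ‖T z‖ ≤ ‖T z + s‖ := by
    intro s hs
    have hs' : s ∈ closure (M : Set X) := hs
    have hC : IsClosed {w : X | ‖T z‖ ≤ ‖T z + w‖} :=
      isClosed_le continuous_const ((continuous_const.add continuous_id).norm)
    exact hC.closure_subset_iff.mpr (fun w hw => hMkey w hw) hs'
  -- quotient map as CLM
  let πL : X →L[ℝ] X ⧸ S := LinearMap.mkContinuous S.mkQ 1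
    (fun w => by simpa using Submodule.Quotient.norm_mk_le S w)
  have hπle : ∀ w : X, ‖πL w‖ ≤ ‖w‖ := fun w => by
    exact Submodule.Quotient.norm_mk_le S w
  have hπnorm : ‖πL (T z)‖ = ‖T z‖ := by
    refine le_antisymm (hπle _) ?_
    refine le_of_forall_pos_le_add ?_
    intro ε hε
    obtain ⟨w, hw, hwlt⟩ := Submodule.Quotient.norm_mk_lt (πL (T z)) hε
    have hmem : w - T z ∈ S := by
      rw [← Submodule.Quotient.eq]
      exact hw
    have : ‖T z‖ ≤ ‖w‖ := by
      have := hSkey (w - T z) hmem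
      simpa using this
    linarith
  have hπTz : πL (T z) ≠ 0 := by
    intro h0
    rw [h0, norm_zero] at hπnorm
    exact hTz (norm_eq_zero.mp hπnorm.symm)
  obtain ⟨φ, hφ1, hφTz⟩ := exists_dual_vector ℝ (πL (T z)) (norm_ne_zero_iff.mpr hπTz)
  set g : X →L[ℝ] ℝ := φ.comp πL with hg
  have hgle : ∀ w : X, g w ≤ ‖w‖ := by
    intro w
    calc g w ≤ |g w| := le_abs_self _
    _ = ‖φ (πL w)‖ := rfl
    _ ≤ ‖φ‖ * ‖πL w‖ := φ.le_opNorm _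
    _ = ‖πL w‖ := by rw [hφ1, one_mul]
    _ ≤ ‖w‖ := hπle w
  have hgTz : g (T z) = ‖T z‖ := by
    show φ (πL (T z)) = ‖T z‖
    rw [hφTz, hπnorm]; simp
  have hgM : ∀ v : X, F v = 0 → g (T v) = 0 := by
    intro v hv
    have hmem : T v ∈ S := M.le_topologicalClosure ⟨v, LinearMap.mem_ker.mpr hv, rfl⟩
    have : πL (T v) = 0 := (Submodule.Quotient.mk_eq_zero S).mpr hmem
    show φ (πL (T v)) = 0
    rw [this, map_zero]
  -- decomposition
  have hznorm : (‖z‖ : ℝ) ≠ 0 := norm_ne_zero_iff.mpr hz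
  have hdecomp : g (T x) = (F x / ‖z‖) * ‖T z‖ := by
    have hker : F (x - (F x / ‖z‖) • z) = 0 := by
      rw [map_sub, map_smul, hFz]
      simp only [RCLike.ofReal_real_eq_id, id, smul_eq_mul]
      field_simp
      ring
    have h0 := hgM _ hker
    rw [map_sub, map_smul] at h0
    have : g (T x) = (F x / ‖z‖) * g (T z) := by
      rw [map_sub, map_smul, smul_eq_mul] at h0
      linarith
    rw [this, hgTz]
  calc (‖T z‖ / ‖z‖) * F x = (F x / ‖z‖) * ‖T z‖ := by ring
  _ = g (T x) := hdecomp.symm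
  _ ≤ ‖T x‖ := hgle _


/-- Arithmetic core of the induction step. -/
lemma chain_step (c₀ Δ ma mt mu ha ht hu da dt du : ℝ)
    (hc₀ : 0 < c₀) (hΔ : 0 < Δ) (hma : c₀ ≤ ma) (hmt : c₀ ≤ mt) (hmu : c₀ ≤ mu)
    (hha : 0 ≤ ha) (hht : 0 ≤ ht) (hhu : 0 ≤ hu)
    (hdat : da ≤ dt)
    (hm1 : mt + Δ * dt ≤ mu) (hm2 : mu + (-Δ) * du ≤ mt)
    (hh1 : ht / mt * (mt + Δ * dt) ≤ hu)
    (ih : ha * (c₀ - Δ * (dt - da)) * mt ≤ ht * (c₀ * ma)) :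
    da ≤ du ∧ ha * (c₀ - Δ * (du - da)) * mu ≤ hu * (c₀ * ma) := by
  have hmt0 : 0 < mt := lt_of_lt_of_le hc₀ hmt
  have hmu0 : 0 < mu := lt_of_lt_of_le hc₀ hmu
  have hma0 : 0 < ma := lt_of_lt_of_le hc₀ hma
  have hdmono : dt ≤ du := le_of_mul_le_mul_left (by linarith) hΔ
  refine ⟨le_trans hdat hdmono, ?_⟩
  have hA : ht * (mt + Δ * dt) ≤ hu * mt := by
    rw [div_mul_eq_mul_div, div_le_iff₀ hmt0] at hh1
    linarith
  have hp0 : 0 ≤ Δ * (dt - da) := mul_nonneg hΔ.le (by linarith)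
  have hq0 : 0 ≤ Δ * (du - dt) := mul_nonneg hΔ.le (by linarith)
  by_cases hcase : c₀ - Δ * (du - da) ≤ 0
  · have h1 : ha * (c₀ - Δ * (du - da)) ≤ 0 := mul_nonpos_of_nonneg_of_nonpos hha hcase
    have h2 : ha * (c₀ - Δ * (du - da)) * mu ≤ 0 := mul_nonpos_of_nonpos_of_nonneg h1 hmu0.le
    have h3 : (0:ℝ) ≤ hu * (c₀ * ma) := by positivity
    linarith
  push_neg at hcase
  have hB : mu - Δ * (du - dt) ≤ mt + Δ * dt := by linarith [hm2]
  have hC2 : ht * (mu - Δ * (du - dt)) ≤ hu * mt :=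
    le_trans (mul_le_mul_of_nonneg_left hB hht) hA
  have hmuq : 0 ≤ mu - Δ * (du - dt) := by nlinarith
  have hD1 : ha * (c₀ - Δ * (dt - da)) * mt * (mu - Δ * (du - dt))
      ≤ (ht * (c₀ * ma)) * (mu - Δ * (du - dt)) := by
    have := mul_le_mul_of_nonneg_right ih hmuq
    linarith
  have hD2 : (ht * (mu - Δ * (du - dt))) * (c₀ * ma) ≤ (hu * mt) * (c₀ * ma) :=
    mul_le_mul_of_nonneg_right hC2 (by positivity)
  have e1 : (ht * (c₀ * ma)) * (mu - Δ * (du - dt))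
      = (ht * (mu - Δ * (du - dt))) * (c₀ * ma) := by ring
  have hD : ha * (c₀ - Δ * (dt - da)) * mt * (mu - Δ * (du - dt))
      ≤ (hu * mt) * (c₀ * ma) := by linarith
  have hE : ha * (c₀ - Δ * (dt - da)) * (mu - Δ * (du - dt)) ≤ hu * (c₀ * ma) := by
    have h1 : (ha * (c₀ - Δ * (dt - da)) * (mu - Δ * (du - dt))) * mt
        ≤ (hu * (c₀ * ma)) * mt := by
      have e2 : (ha * (c₀ - Δ * (dt - da)) * (mu - Δ * (du - dt))) * mt
          = ha * (c₀ - Δ * (dt - da)) * mt * (mu - Δ * (du - dt)) := by ring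
      have e3 : (hu * (c₀ * ma)) * mt = (hu * mt) * (c₀ * ma) := by ring
      linarith
    exact le_of_mul_le_mul_right h1 hmt0
  have key : 0 ≤ ha * (Δ * (du - dt)) * ((mu - c₀) + Δ * (dt - da)) := by
    apply mul_nonneg (mul_nonneg hha hq0)
    have : c₀ ≤ mu := hmu
    nlinarith
  nlinarith [key, hE]

/-- One direction of the chain/telescoping estimate. -/
lemma chain_le (m h : ℝ → ℝ) (c₀ C a b : ℝ) (hc₀ : 0 < c₀) (hC : 0 ≤ C) (hab : a < b)
    (hm : ∀ t ∈ Icc a b, c₀ ≤ m t) (hh : ∀ t ∈ Icc a b, 0 ≤ h t)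
    (H : ∀ t ∈ Icc a b, ∃ d : ℝ, |d| ≤ C ∧ ∀ s ∈ Icc a b,
      m t + (s - t) * d ≤ m s ∧ (h t / m t) * (m t + (s - t) * d) ≤ h s) :
    h a / m a ≤ h b / m b := by
  classical
  have hd0 : ∀ t : ℝ, ∃ d : ℝ, t ∈ Icc a b → (|d| ≤ C ∧ ∀ s ∈ Icc a b,
      m t + (s - t) * d ≤ m s ∧ (h t / m t) * (m t + (s - t) * d) ≤ h s) := by
    intro t
    by_cases ht : t ∈ Icc a b
    · obtain ⟨d, hd⟩ := H t ht
      exact ⟨d, fun _ => hd⟩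
    · exact ⟨0, fun hmem => absurd hmem ht⟩
  choose d hdspec using hd0
  have hamem : a ∈ Icc a b := ⟨le_refl _, le_of_lt hab⟩
  have hbmem : b ∈ Icc a b := ⟨le_of_lt hab, le_refl _⟩
  have hma : 0 < m a := lt_of_lt_of_le hc₀ (hm a hamem)
  have hmb : 0 < m b := lt_of_lt_of_le hc₀ (hm b hbmem)
  have hha : 0 ≤ h a := hh a hamem
  rw [div_le_div_iff₀ hma hmb]
  refine le_of_forall_pos_le_add ?_
  intro ε hε
  have hba : (0:ℝ) < b - a := sub_pos.mpr hab
  obtain ⟨n₀, hn₀⟩ := exists_nat_ge (((b-a) * (h a * (2*C) * m b)) / (ε * c₀))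
  set n : ℕ := n₀ + 1 with hn
  have hnpos : (0:ℝ) < n := by positivity
  have hnbig : (b-a) * (h a * (2*C) * m b) ≤ n * (ε * c₀) := by
    have h1 : ((b-a) * (h a * (2*C) * m b)) / (ε * c₀) ≤ (n : ℝ) := by
      rw [hn]; push_cast; push_cast at hn₀; linarith
    have h2 : (0:ℝ) < ε * c₀ := by positivity
    calc (b-a) * (h a * (2*C) * m b)
        = (((b-a) * (h a * (2*C) * m b)) / (ε * c₀)) * (ε * c₀) := by field_simp
    _ ≤ (n : ℝ) * (ε * c₀) := mul_le_mul_of_nonneg_right h1 h2.le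
  set Δ : ℝ := (b - a) / n with hΔ
  have hΔpos : 0 < Δ := by positivity
  have hsb : a + (n : ℝ) * Δ = b := by rw [hΔ]; field_simp; ring
  have hsmem : ∀ k : ℕ, k ≤ n → a + (k:ℝ) * Δ ∈ Icc a b := by
    intro k hk
    have hk' : (k:ℝ) ≤ (n:ℝ) := by exact_mod_cast hk
    have h0k : (0:ℝ) ≤ (k:ℝ) := Nat.cast_nonneg k
    constructor
    · nlinarith
    · rw [← hsb]; nlinarith
  have claim : ∀ k : ℕ, k ≤ n →
      d a ≤ d (a + (k:ℝ) * Δ) ∧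
      h a * (c₀ - Δ * (d (a + (k:ℝ) * Δ) - d a)) * m (a + (k:ℝ) * Δ) ≤
        h (a + (k:ℝ) * Δ) * (c₀ * m a) := by
    intro k
    induction k with
    | zero =>
      intro _
      constructor
      · norm_num
      · norm_num
        exact le_of_eq (by ring)
    | succ k ih =>
      intro hk1
      have hk : k ≤ n := Nat.le_of_succ_le hk1
      obtain ⟨ihd, ihm⟩ := ih hk
      have hu' : a + ((k+1 : ℕ):ℝ) * Δ = (a + (k:ℝ) * Δ) + Δ := by push_cast; ring
      rw [hu']
      have htmem : a + (k:ℝ) * Δ ∈ Icc a b := hsmem k hk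
      have humem : (a + (k:ℝ) * Δ) + Δ ∈ Icc a b := by
        have := hsmem (k+1) hk1
        rwa [hu'] at this
      obtain ⟨hdtC, hspect⟩ := hdspec _ htmem
      obtain ⟨hduC, hspecu⟩ := hdspec _ humem
      obtain ⟨hm1, hh1⟩ := hspect _ humem
      obtain ⟨hm2, _⟩ := hspecu _ htmem
      have hut : (a + (k:ℝ) * Δ) + Δ - (a + (k:ℝ) * Δ) = Δ := by ring
      have htu : (a + (k:ℝ) * Δ) - ((a + (k:ℝ) * Δ) + Δ) = -Δ := by ring
      rw [hut] at hm1 hh1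
      rw [htu] at hm2
      exact chain_step c₀ Δ (m a) (m _) (m _) (h a) (h _) (h _) (d a) (d _) (d _)
        hc₀ hΔpos (hm a hamem) (hm _ htmem) (hm _ humem)
        hha (hh _ htmem) (hh _ humem) ihd hm1 (by linarith [hm2]) hh1 ihm
  obtain ⟨_, hfinal⟩ := claim n (le_refl n)
  rw [hsb] at hfinal
  have hdaC := abs_le.mp (hdspec a hamem).1
  have hdbC := abs_le.mp (hdspec b hbmem).1
  have habs : d b - d a ≤ 2 * C := by linarith
  have hstep : h a * c₀ * m b ≤ h b * (c₀ * m a) + h a * (Δ * (d b - d a)) * m b := by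
    nlinarith [hfinal]
  have hsmall : h a * (Δ * (d b - d a)) * m b ≤ ε * c₀ := by
    have h1 : h a * (Δ * (d b - d a)) * m b ≤ h a * (Δ * (2*C)) * m b := by
      have h0 : Δ * (d b - d a) ≤ Δ * (2*C) := mul_le_mul_of_nonneg_left habs hΔpos.le
      nlinarith [mul_le_mul_of_nonneg_left h0 (mul_nonneg hha hmb.le)]
    have hΔn : (n:ℝ) * Δ = b - a := by linarith [hsb]
    have h3 : (n:ℝ) * (h a * (Δ * (2*C)) * m b) = (b-a) * (h a * (2*C) * m b) := by
      rw [← hΔn]; ring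
    have h2 : h a * (Δ * (2*C)) * m b ≤ ε * c₀ := by
      refine le_of_mul_le_mul_left ?_ hnpos
      rw [h3]; linarith [hnbig]
    linarith
  have hfin2 : c₀ * (h a * m b) ≤ c₀ * (h b * m a + ε) := by nlinarith [hstep, hsmall]
  exact le_of_mul_le_mul_left hfin2 hc₀

/-- Two-sided version: the ratio is constant. -/
lemma chain_eq (m h : ℝ → ℝ) (c₀ C a b : ℝ) (hc₀ : 0 < c₀) (hC : 0 ≤ C) (hab : a < b)
    (hm : ∀ t ∈ Icc a b, c₀ ≤ m t) (hh : ∀ t ∈ Icc a b, 0 ≤ h t)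
    (H : ∀ t ∈ Icc a b, ∃ d : ℝ, |d| ≤ C ∧ ∀ s ∈ Icc a b,
      m t + (s - t) * d ≤ m s ∧ (h t / m t) * (m t + (s - t) * d) ≤ h s) :
    h a / m a = h b / m b := by
  refine le_antisymm (chain_le m h c₀ C a b hc₀ hC hab hm hh H) ?_
  have key := chain_le (fun t => m (a + b - t)) (fun t => h (a + b - t)) c₀ C a b hc₀ hC hab
    (fun t ht => hm _ ⟨by linarith [ht.2], by linarith [ht.1]⟩)
    (fun t ht => hh _ ⟨by linarith [ht.2], by linarith [ht.1]⟩)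
    (fun t ht => by
      obtain ⟨dd, hdd, hrest⟩ := H (a + b - t) ⟨by linarith [ht.2], by linarith [ht.1]⟩
      refine ⟨-dd, by rwa [abs_neg], fun s hs => ?_⟩
      have := hrest (a + b - s) ⟨by linarith [hs.2], by linarith [hs.1]⟩
      have e : (a + b - s) - (a + b - t) = -(s - t) := by ring
      rw [e] at this
      constructor
      · have := this.1
        have e2 : (s - t) * (-dd) = -(s-t) * dd := by ring
        rw [e2]; exact this
      · have := this.2
        have e2 : (s - t) * (-dd) = -(s-t) * dd := by ring
        rw [e2]; exact this)
  simpa using key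

lemma bjorth_smul {X : Type*} [NormedAddCommGroup X] [NormedSpace ℝ X]
    {z v : X} {α : ℝ} (hα : α ≠ 0) (h : BJOrth z v) : BJOrth (α • z) v := by
  intro lam
  have := h (lam / α)
  have e : α • z + lam • v = α • (z + (lam / α) • v) := by
    rw [smul_add, smul_smul]
    congr 2
    field_simp
  rw [e, norm_smul, norm_smul]
  exact mul_le_mul_of_nonneg_left this (norm_nonneg _)

lemma pres_smul {X Y : Type*} [NormedAddCommGroup X] [NormedSpace ℝ X]
    [NormedAddCommGroup Y] [NormedSpace ℝ Y]
    (T : X →L[ℝ] Y) {z : X} {α : ℝ} (hα : α ≠ 0) (h : PreservesBJAt T (α • z)) :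
    PreservesBJAt T z := by
  intro v hv lam
  have h1 : BJOrth (T (α • z)) (T v) := h v (bjorth_smul hα hv)
  have h2 := h1 (α * lam)
  rw [map_smul] at h2
  have e : (α : ℝ) • T z + (α * lam) • T v = α • (T z + lam • T v) := by
    rw [smul_add, smul_smul]
  rw [e, norm_smul, norm_smul] at h2
  have hαpos : 0 < ‖α‖ := norm_pos_iff.mpr hα
  exact le_of_mul_le_mul_left h2 hαpos


section Main

variable {X : Type*} [NormedAddCommGroup X] [NormedSpace ℝ X]

theorem main_thm (T : X →L[ℝ] X)
    (f : StrongDual ℝ X) (hf : f ≠ 0) (c : ℝ) (hc : c ≠ 0)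
    (hpres : ∀ x ∈ {x : X | f x = c}, PreservesBJAt T x)
    (key_ineq_s11 : ∀ (z : X), z ≠ 0 → PreservesBJAt T z →
      ∃ F : StrongDual ℝ X, ‖F‖ = 1 ∧ F z = ‖z‖ ∧
        ∀ x : X, (‖T z‖ / ‖z‖) * F x ≤ ‖T x‖)
    (chain_eq : ∀ (m h : ℝ → ℝ) (c₀ C a b : ℝ), 0 < c₀ → 0 ≤ C → a < b →
      (∀ t ∈ Icc a b, c₀ ≤ m t) → (∀ t ∈ Icc a b, 0 ≤ h t) →
      (∀ t ∈ Icc a b, ∃ d : ℝ, |d| ≤ C ∧ ∀ s ∈ Icc a b,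
        m t + (s - t) * d ≤ m s ∧ (h t / m t) * (m t + (s - t) * d) ≤ h s) →
      h a / m a = h b / m b) :
    ∃ lam : ℝ, 0 ≤ lam ∧ ∀ x : X, ‖T x‖ = lam * ‖x‖ := by
  obtain ⟨v0, hv0⟩ : ∃ v, f v ≠ 0 := by
    by_contra hcon
    push_neg at hcon
    exact hf (ContinuousLinearMap.ext fun x => by simp [hcon x])
  obtain ⟨u, hu⟩ : ∃ u : X, 0 < f u := by
    rcases lt_or_gt_of_ne hv0 with h | h
    · refine ⟨-v0, ?_⟩
      rw [map_neg]
      linarith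
    · exact ⟨v0, h⟩
  have hu0 : u ≠ 0 := fun h => by simp [h] at hu
  have hunorm : (0:ℝ) < ‖u‖ := norm_pos_iff.mpr hu0
  set lam := ‖T u‖ / ‖u‖ with hlam
  refine ⟨lam, div_nonneg (norm_nonneg _) (norm_nonneg _), ?_⟩
  have hpresAll : ∀ z : X, f z ≠ 0 → PreservesBJAt T z := by
    intro z hz
    have hα : c / f z ≠ 0 := div_ne_zero hc hz
    apply pres_smul T hα
    apply hpres
    simp only [mem_setOf_eq, map_smul, smul_eq_mul]
    field_simp
  have main : ∀ x : X, 0 ≤ f x → (¬ ∃ s : ℝ, x = s • u) → ‖T x‖ = lam * ‖x‖ := by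
    intro x hfx hncol
    set γ : ℝ → X := fun t => u + t • (x - u) with hγ
    have hγ0 : γ 0 = u := by rw [hγ]; simp
    have hγ1 : γ 1 = x := by rw [hγ]; simp
    have hγcont : Continuous γ := continuous_const.add (continuous_id.smul continuous_const)
    have hγne : ∀ t ∈ Icc (0:ℝ) 1, γ t ≠ 0 := by
      intro t _ h0
      rcases eq_or_ne t 0 with rfl | htne
      · rw [hγ0] at h0
        exact hu0 h0
      · apply hncol
        rw [hγ] at h0
        simp only at h0
        have h2 : t • x = (t-1) • u := by
          have h3 : t • x - t • u = -u := eq_neg_of_add_eq_zero_right (by rw [← smul_sub]; exact h0)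
          rw [sub_eq_iff_eq_add] at h3
          rw [h3]; match_scalars <;> ring
        have h3 := congrArg (fun w => t⁻¹ • w) h2
        simp only [smul_smul, inv_mul_cancel₀ htne, one_smul] at h3
        refine ⟨(t-1)/t, ?_⟩
        rw [h3]; match_scalars; field_simp
    -- f positive along the open part of the path
    have hfγ : ∀ t : ℝ, 0 ≤ t → t < 1 → 0 < f (γ t) := by
      intro t ht0 ht1
      have : f (γ t) = (1 - t) * f u + t * f x := by
        rw [hγ]
        simp only [map_add, map_smul, map_sub, smul_eq_mul]
        ring
      rw [this]
      have h1 : 0 < (1 - t) * f u := mul_pos (by linarith) hu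
      have h2 : 0 ≤ t * f x := mul_nonneg ht0 hfx
      linarith
    -- the min of the norm along the path
    obtain ⟨t₀, ht₀mem, ht₀min⟩ :=
      isCompact_Icc.exists_isMinOn (nonempty_Icc.mpr zero_le_one) hγcont.norm.continuousOn
    set c₀ := ‖γ t₀‖ with hc₀def
    have hc₀ : 0 < c₀ := norm_pos_iff.mpr (hγne t₀ ht₀mem)
    have hmlb : ∀ t ∈ Icc (0:ℝ) 1, c₀ ≤ ‖γ t‖ := fun t ht => ht₀min ht
    set C := ‖x - u‖ with hCdef
    -- ratio function
    set ρ : ℝ → ℝ := fun t => ‖T (γ t)‖ / ‖γ t‖ with hρ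
    have hρconst : ∀ b : ℝ, 0 < b → b < 1 → ρ b = lam := by
      intro b hb0 hb1
      have hsub : Icc (0:ℝ) b ⊆ Icc (0:ℝ) 1 := Icc_subset_Icc le_rfl hb1.le
      have hchain := chain_eq (fun t => ‖γ t‖) (fun t => ‖T (γ t)‖) c₀ C 0 b hc₀
        (norm_nonneg _) hb0
        (fun t ht => hmlb t (hsub ht))
        (fun t _ => norm_nonneg _)
        ?_
      · have hchain' : ‖T (γ 0)‖ / ‖γ 0‖ = ‖T (γ b)‖ / ‖γ b‖ := hchain
        show ‖T (γ b)‖ / ‖γ b‖ = lam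
        rw [← hchain', hγ0]
      intro t ht
      have htmem : t ∈ Icc (0:ℝ) 1 := hsub ht
      have hfz : f (γ t) ≠ 0 := ne_of_gt (hfγ t ht.1 (lt_of_le_of_lt ht.2 hb1))
      obtain ⟨F, hF1, hFz, hFkey⟩ := key_ineq_s11 (γ t) (hγne t htmem) (hpresAll (γ t) hfz)
      refine ⟨F (x - u), ?_, ?_⟩
      · calc |F (x - u)| = ‖F (x - u)‖ := rfl
        _ ≤ ‖F‖ * ‖x - u‖ := F.le_opNorm _
        _ = C := by rw [hF1, one_mul]
      intro s _
      have hdecomp : F (γ s) = ‖γ t‖ + (s - t) * F (x - u) := by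
        have e : γ s = γ t + (s - t) • (x - u) := by
          rw [hγ]; simp only; match_scalars <;> ring
        rw [e, map_add, map_smul, smul_eq_mul, hFz]
      constructor
      · rw [← hdecomp]
        calc F (γ s) ≤ |F (γ s)| := le_abs_self _
        _ ≤ ‖F‖ * ‖γ s‖ := F.le_opNorm _
        _ = ‖γ s‖ := by rw [hF1, one_mul]
      · rw [← hdecomp]
        exact hFkey (γ s)
    -- pass to the limit t → 1⁻
    have hx0 : x ≠ 0 := by
      intro h0
      exact hncol ⟨0, by rw [h0, zero_smul]⟩
    have hxnorm : (0:ℝ) < ‖x‖ := norm_pos_iff.mpr hx0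
    have hρ1 : ContinuousAt ρ 1 := by
      apply ContinuousAt.div
      · exact (T.continuous.comp hγcont).norm.continuousAt
      · exact hγcont.norm.continuousAt
      · rw [hγ1]
        exact ne_of_gt hxnorm
    have hten1 : Tendsto ρ (nhdsWithin 1 (Iio 1)) (nhds (ρ 1)) :=
      (hρ1.continuousWithinAt).tendsto
    have hev : ∀ᶠ t in nhdsWithin (1:ℝ) (Iio 1), ρ t = lam := by
      filter_upwards [Ioo_mem_nhdsLT_of_mem (show (1:ℝ) ∈ Ioc 0 1 by constructor <;> norm_num)]
        with t ht
      exact hρconst t ht.1 ht.2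
    have hten2 : Tendsto ρ (nhdsWithin 1 (Iio 1)) (nhds lam) := by
      rw [tendsto_congr' hev]
      exact tendsto_const_nhds
    have : ρ 1 = lam := tendsto_nhds_unique hten1 hten2
    rw [hρ] at this
    simp only at this
    rw [hγ1] at this
    field_simp at this
    linarith [this]
  -- wrap up
  intro x
  by_cases hcol : ∃ s : ℝ, x = s • u
  · obtain ⟨s, rfl⟩ := hcol
    rw [map_smul, norm_smul, norm_smul, hlam]
    field_simp
  · by_cases hfx : 0 ≤ f x
    · exact main x hfx hcol
    · have h1 : 0 ≤ f (-x) := by rw [map_neg]; linarith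
      have h2 : ¬ ∃ s : ℝ, -x = s • u := by
        rintro ⟨s, hs⟩
        exact hcol ⟨-s, by rw [neg_smul, ← hs, neg_neg]⟩
      have := main (-x) h1 h2
      rw [map_neg, norm_neg, norm_neg] at this
      exact this

end Main

theorem stmt_11 {X : Type*} [NormedAddCommGroup X] [NormedSpace ℝ X] [CompleteSpace X]
    (T : X →L[ℝ] X)
    (hd : Dense {x : X | SmoothPt x}) (hg : IsGδ {x : X | SmoothPt x})
    (f : StrongDual ℝ X) (hf : f ≠ 0) (c : ℝ) (hc : c ≠ 0)
    (hpres : ∀ x ∈ {x : X | f x = c}, PreservesBJAt T x) :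
    ∃ lam : ℝ, 0 ≤ lam ∧ ∀ x : X, ‖T x‖ = lam * ‖x‖ := by
  exact main_thm T f hf c hc hpres (fun z hz hp => key_ineq_s11 T z hz hp) chain_eq
end

section
/- Let X be a finite-dimensional real Banach space and Y a proper linear subspace of X. Then the span of the union of the sets J(x) over all extreme points x of the unit ball of X with x ∉ Y equals the whole dual space X*. -/
open Metric Filter Set

lemma face_isExtreme {X : Type*} [NormedAddCommGroup X] [NormedSpace ℝ X]
    (f : StrongDual ℝ X) (hf : ‖f‖ = 1) :
    IsExtreme ℝ (Metric.closedBall (0 : X) 1) {x | x ∈ Metric.closedBall (0 : X) 1 ∧ f x = 1} := by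
  have hub : ∀ x ∈ Metric.closedBall (0 : X) 1, f x ≤ 1 := by
    intro x hx
    have h1 : f x ≤ ‖f x‖ := le_abs_self _
    have h2 : ‖f x‖ ≤ ‖f‖ * ‖x‖ := f.le_opNorm x
    have h3 : ‖x‖ ≤ 1 := by simpa [mem_closedBall_zero_iff] using hx
    nlinarith [norm_nonneg x]
  constructor
  · exact fun x hx => hx.1
  · rintro x₁ hx₁ x₂ hx₂ x ⟨hxB, hfx⟩ hseg
    obtain ⟨a, b, ha, hb, hab, rfl⟩ := hseg
    have e1 := hub x₁ hx₁
    have e2 := hub x₂ hx₂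
    have heq : a * f x₁ + b * f x₂ = 1 := by
      simpa [map_add, map_smul, smul_eq_mul] using hfx
    have hf1 : f x₁ = 1 := by nlinarith
    have hf2 : f x₂ = 1 := by nlinarith
    exact ⟨hx₁, hf1⟩

lemma key_aux {X : Type*} [NormedAddCommGroup X] [NormedSpace ℝ X] [FiniteDimensional ℝ X]
    (Y : Submodule ℝ X) (hY : Y ≠ ⊤) (x₀ : X)
    (h : ∀ f ∈ (⋃ x ∈ {x : X | x ∈ (Metric.closedBall (0 : X) 1).extremePoints ℝ ∧ x ∉ Y},
        SuppFunc x), f x₀ = 0) : x₀ = 0 := by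
  by_contra hx₀
  obtain ⟨z, hz⟩ : ∃ z, z ∉ Y := by
    by_contra hall
    push_neg at hall
    exact hY (Submodule.eq_top_iff'.2 hall)
  have hx₀pos : 0 < ‖x₀‖ := norm_pos_iff.2 hx₀
  have claim : ∀ t : ℝ, 0 < t → 2 * t * ‖z‖ < ‖x₀‖ → x₀ + t • z ∈ Y := by
    intro t ht htz
    set w := x₀ + t • z with hw
    have hwx : ‖x₀‖ ≤ ‖w‖ + t * ‖z‖ := by
      calc ‖x₀‖ = ‖w - t • z‖ := by rw [hw, add_sub_cancel_right]
        _ ≤ ‖w‖ + ‖t • z‖ := norm_sub_le _ _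
        _ = ‖w‖ + t * ‖z‖ := by rw [norm_smul, Real.norm_of_nonneg ht.le]
    have hwne : w ≠ 0 := by
      intro h0
      rw [h0, norm_zero] at hwx
      nlinarith
    obtain ⟨f, hf1, hfw0⟩ := exists_dual_vector ℝ w (norm_ne_zero_iff.2 hwne)
    have hfw : f w = ‖w‖ := by exact_mod_cast hfw0
    set F := {x | x ∈ Metric.closedBall (0 : X) 1 ∧ f x = 1} with hF
    have hwpos : 0 < ‖w‖ := norm_pos_iff.2 hwne
    set p := ‖w‖⁻¹ • w with hp
    have hpF : p ∈ F := by
      constructor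
      · simp [hp, mem_closedBall_zero_iff, norm_smul, abs_of_nonneg (inv_nonneg.2 hwpos.le),
          inv_mul_cancel₀ hwpos.ne']
      · simp only [hp, map_smul, smul_eq_mul]
        rw [hfw]
        exact inv_mul_cancel₀ hwpos.ne'
    have hFclosed : IsClosed F := by
      have : F = Metric.closedBall (0 : X) 1 ∩ f ⁻¹' {1} := by
        ext x; simp [hF, Set.mem_inter_iff]
      rw [this]
      exact Metric.isClosed_closedBall.inter (isClosed_singleton.preimage f.continuous)
    have hFcomp : IsCompact F :=
      (isCompact_closedBall (0 : X) 1).of_isClosed_subset hFclosed (fun x hx => hx.1)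
    have hFconv : Convex ℝ F := by
      have : F = Metric.closedBall (0 : X) 1 ∩ {x | f x = 1} := rfl
      rw [this]
      exact (convex_closedBall _ _).inter (convex_hyperplane (f : X →ₗ[ℝ] ℝ).isLinear 1)
    have hFext : IsExtreme ℝ (Metric.closedBall (0 : X) 1) F := face_isExtreme f hf1
    by_cases hcase : ∀ e ∈ F.extremePoints ℝ, e ∈ Y
    · -- F ⊆ Y, so w ∈ Y
      have hFY : F ⊆ (Y : Set X) := by
        have hKM : closure (convexHull ℝ (F.extremePoints ℝ)) = F :=
          closure_convexHull_extremePoints hFcomp hFconv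
        rw [← hKM]
        have h1 : convexHull ℝ (F.extremePoints ℝ) ⊆ (Y : Set X) :=
          Y.convex.convexHull_subset_iff.2 hcase
        have h2 : IsClosed (Y : Set X) := Submodule.closed_of_finiteDimensional Y
        exact h2.closure_subset_iff.2 h1
      have hpY : p ∈ Y := hFY hpF
      have : (‖w‖ : ℝ) • p ∈ Y := Y.smul_mem _ hpY
      rwa [hp, smul_smul, mul_inv_cancel₀ hwpos.ne', one_smul] at this
    · push_neg at hcase
      obtain ⟨e, heF, heY⟩ := hcase
      have heBall : e ∈ (Metric.closedBall (0 : X) 1).extremePoints ℝ :=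
        hFext.extremePoints_subset_extremePoints heF
      have heF' : e ∈ F := heF.1
      have hfe : f e = 1 := heF'.2
      have hene : ‖e‖ = 1 := by
        have h1 : ‖e‖ ≤ 1 := by simpa [mem_closedBall_zero_iff] using heF'.1
        have h2 : (1 : ℝ) ≤ ‖e‖ := by
          calc (1 : ℝ) = f e := hfe.symm
            _ ≤ ‖f e‖ := le_abs_self _
            _ ≤ ‖f‖ * ‖e‖ := f.le_opNorm e
            _ = ‖e‖ := by rw [hf1, one_mul]
        linarith
      have hfS : f ∈ (⋃ x ∈ {x : X | x ∈ (Metric.closedBall (0 : X) 1).extremePoints ℝ ∧ x ∉ Y},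
          SuppFunc x) := by
        refine Set.mem_biUnion ⟨heBall, heY⟩ ⟨hf1, ?_⟩
        rw [hfe, hene]
      have hfx₀ : f x₀ = 0 := h f hfS
      have hfz : f z ≤ ‖z‖ := by
        calc f z ≤ ‖f z‖ := le_abs_self _
          _ ≤ ‖f‖ * ‖z‖ := f.le_opNorm z
          _ = ‖z‖ := by rw [hf1, one_mul]
      have : ‖w‖ = t * f z := by
        rw [← hfw, hw]
        simp [map_add, map_smul, smul_eq_mul, hfx₀]
      nlinarith
  -- apply claim at two values of t
  set ε := ‖x₀‖ / (2 * ‖z‖ + 2) with hε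
  have hεpos : 0 < ε := div_pos hx₀pos (by positivity)
  have h1 : 2 * ε * ‖z‖ < ‖x₀‖ := by
    have hden : (0:ℝ) < 2 * ‖z‖ + 2 := by positivity
    rw [hε, show 2 * (‖x₀‖ / (2 * ‖z‖ + 2)) * ‖z‖ = (2 * ‖x₀‖ * ‖z‖) / (2 * ‖z‖ + 2) by ring,
      div_lt_iff₀ hden]
    nlinarith [norm_nonneg z, hx₀pos]
  have h2 : 2 * (ε / 2) * ‖z‖ < ‖x₀‖ := by nlinarith [norm_nonneg z]
  have m1 := claim ε hεpos h1
  have m2 := claim (ε / 2) (by positivity) h2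
  have hdiff : (ε / 2) • z ∈ Y := by
    have := Y.sub_mem m1 m2
    have heq : (x₀ + ε • z) - (x₀ + (ε / 2) • z) = (ε / 2) • z := by
      module
    rwa [heq] at this
  have : z ∈ Y := by
    have := Y.smul_mem (ε / 2)⁻¹ hdiff
    rwa [smul_smul, inv_mul_cancel₀ (by positivity), one_smul] at this
  exact hz this

theorem stmt_12 {X : Type*} [NormedAddCommGroup X] [NormedSpace ℝ X] [FiniteDimensional ℝ X]
    (Y : Submodule ℝ X) (hY : Y ≠ ⊤) :
    Submodule.span ℝ
      (⋃ x ∈ {x : X | x ∈ (Metric.closedBall (0 : X) 1).extremePoints ℝ ∧ x ∉ Y},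
        SuppFunc x) = ⊤ := by
  set S := (⋃ x ∈ {x : X | x ∈ (Metric.closedBall (0 : X) 1).extremePoints ℝ ∧ x ∉ Y},
        SuppFunc x) with hS
  set m : StrongDual ℝ X →ₗ[ℝ] Module.Dual ℝ X := ContinuousLinearMap.coeLM ℝ with hm
  have hminj : Function.Injective m := fun a b hab => by
    exact ContinuousLinearMap.coe_injective hab
  set W := Submodule.span ℝ S with hW
  set W' := W.map m with hW'
  have hcoann : W'.dualCoannihilator = ⊥ := by
    rw [Submodule.eq_bot_iff]
    intro x hx
    rw [Submodule.mem_dualCoannihilator] at hx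
    apply key_aux Y hY x
    intro f hf
    have : m f ∈ W' := Submodule.mem_map_of_mem (Submodule.subset_span hf)
    exact hx (m f) this
  have hfr : Module.finrank ℝ W' = Module.finrank ℝ X := by
    have := Subspace.finrank_add_finrank_dualCoannihilator_eq W'
    rw [hcoann, finrank_bot] at this
    simpa using this
  have hW'top : W' = ⊤ := by
    apply Submodule.eq_top_of_finrank_eq
    rw [hfr, Subspace.dual_finrank_eq]
  rw [eq_top_iff]
  intro g _
  have : m g ∈ W' := by rw [hW'top]; trivial
  obtain ⟨g', hg', hgg'⟩ := this
  rwa [← hminj hgg']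
end
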